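/- arXiv:1007.3049 — 8 statements merged into one kernel-verified Lean document; each statement's English description precedes it below -/
import Mathlib

section
/- For every n ≥ 2, the tournament T_{2n+1} is indecomposable. -/
/-- A tournament on vertex type `V`, given by its arc relation. -/
def IsTournament {V : Type*} (r : V → V → Prop) : Prop :=
  (∀ x, ¬ r x x) ∧ ∀ x y : V, x ≠ y → (r x y ↔ ¬ r y x)

/-- `I` is an interval of the subtournament of `r` induced on `X`. -/
def IsIntervalOn {V : Type*} (r : V → V → Prop) (X I : Set V) : Prop :=
  I ⊆ X ∧ ∀ x ∈ X \ I, (∀ i ∈ I, r x i) ∨ (∀ i ∈ I, r i x)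

/-- The subtournament induced on `X` is indecomposable: all its intervals are trivial. -/
def IndecomposableOn {V : Type*} (r : V → V → Prop) (X : Set V) : Prop :=
  ∀ I : Set V, IsIntervalOn r X I → I = ∅ ∨ (∃ a, I = {a}) ∨ I = X

/-- The dual tournament, obtained by reversing all arcs. -/
def dual {V : Type*} (r : V → V → Prop) : V → V → Prop := fun x y => r y x

/-- `s` embeds into `r`: `s` is isomorphic to an induced subtournament of `r`. -/
def Embeds {W V : Type*} (s : W → W → Prop) (r : V → V → Prop) : Prop :=
  ∃ f : W → V, Function.Injective f ∧ ∀ a b, s a b ↔ r (f a) (f b)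

/-- The 3-cycle C₃. -/
def C3 : ZMod 3 → ZMod 3 → Prop := fun i j => j = i + 1

/-- The critical tournament `T_{2n+1}` on `ZMod (2n+1)`: arc `i → j` iff `j - i ∈ {1,…,n}`. -/
def Tt (n : ℕ) : ZMod (2*n+1) → ZMod (2*n+1) → Prop :=
  fun i j => (j - i).val ∈ Finset.Icc 1 n

/-- The critical tournament `W_{2n+1}` on `Fin (2n+1)`:
`0 < 1 < ⋯ < 2n-1` and odds → `2n` → evens. -/
def Wt (n : ℕ) : Fin (2*n+1) → Fin (2*n+1) → Prop :=
  fun i j =>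
    if i.val = 2*n then j.val % 2 = 0 ∧ j.val ≠ 2*n
    else if j.val = 2*n then i.val % 2 = 1
    else i.val < j.val

/-- The diamond `D₄`: `{0,1,2}` is a 3-cycle and `3 → {0,1,2}`. -/
def D4 : Fin 4 → Fin 4 → Prop :=
  fun i j => (i = 3 ∧ j ≠ 3) ∨ (i ≠ 3 ∧ j ≠ 3 ∧ j.val = (i.val + 1) % 3)

/-- `U₅`: obtained from `T₅` by reversing the arc inside `{3,4}`. -/
def U5 : ZMod 5 → ZMod 5 → Prop :=
  fun i j =>
    if (i = 3 ∧ j = 4) ∨ (i = 4 ∧ j = 3) then Tt 2 j i else Tt 2 i j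

/-- The tournament `F_{n+1}` on `{0,…,n}`: arc `i → j` iff `i+1 < j` or `i = j+1`. -/
def Ft (n : ℕ) : Fin (n+1) → Fin (n+1) → Prop :=
  fun i j => i.val + 1 < j.val ∨ i.val = j.val + 1

/-- `Ext(X)`: vertices outside `X` extending `X` indecomposably. -/
def ExtSet {V : Type*} (r : V → V → Prop) (X : Set V) : Set V :=
  {x | x ∉ X ∧ IndecomposableOn r (X ∪ {x})}

/-- `[X]`: vertices outside `X` relating uniformly to `X`. -/
def BrSet {V : Type*} (r : V → V → Prop) (X : Set V) : Set V :=
  {x | x ∉ X ∧ ((∀ y ∈ X, r x y) ∨ (∀ y ∈ X, r y x))}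

/-- `X(u)`: vertices `x` outside `X` such that `{u,x}` is an interval of `T(X ∪ {x})`. -/
def XuSet {V : Type*} (r : V → V → Prop) (X : Set V) (u : V) : Set V :=
  {x | x ∉ X ∧ IsIntervalOn r (X ∪ {x}) {u, x}}

section TtAux

variable {n : ℕ}

lemma val_cast_lt' {k : ℕ} (hk : k < 2*n+1) : ((k : ZMod (2*n+1))).val = k := by
  rw [ZMod.val_natCast, Nat.mod_eq_of_lt hk]

lemma Tt_F1 {k : ℕ} (h1 : n < k) (h2 : k ≤ 2*n) (a : ZMod (2*n+1)) :
    ¬ Tt n a (a + (k : ZMod (2*n+1))) := by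
  simp only [Tt, Finset.mem_Icc, add_sub_cancel_left]
  rw [val_cast_lt' (by omega)]
  omega

lemma Tt_F2 {k j : ℕ} (hjk : j < k) (hk2 : k ≤ 2*n) (hkj : k - j ≤ n)
    (a : ZMod (2*n+1)) :
    ¬ Tt n (a + (k : ZMod (2*n+1))) (a + (j : ZMod (2*n+1))) := by
  have hd : ((2*n+1 - (k - j) : ℕ) : ZMod (2*n+1)) = (j : ZMod (2*n+1)) - k := by
    have h2 : (2*n+1 - (k - j)) + k = (2*n+1) + j := by omega
    have h3 : ((2*n+1 - (k-j) : ℕ) : ZMod (2*n+1)) + (k : ZMod (2*n+1))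
        = ((2*n+1 : ℕ) : ZMod (2*n+1)) + (j : ZMod (2*n+1)) := by
      exact_mod_cast congrArg (Nat.cast : ℕ → ZMod (2*n+1)) h2
    rw [ZMod.natCast_self, zero_add] at h3
    exact eq_sub_of_add_eq h3
  simp only [Tt, Finset.mem_Icc]
  have hsub : (a + (j : ZMod (2*n+1))) - (a + (k : ZMod (2*n+1)))
      = ((2*n+1 - (k - j) : ℕ) : ZMod (2*n+1)) := by
    rw [hd]; ring
  rw [hsub, val_cast_lt' (by omega)]
  omega

lemma mem_of_nonuniform {I : Set (ZMod (2*n+1))}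
    (hI : IsIntervalOn (Tt n) Set.univ I) {a b x : ZMod (2*n+1)}
    (ha : a ∈ I) (hb : b ∈ I) (h1 : ¬ Tt n a x) (h2 : ¬ Tt n x b) : x ∈ I := by
  by_contra hx
  rcases hI.2 x ⟨trivial, hx⟩ with h | h
  · exact h2 (h b hb)
  · exact h1 (h a ha)

lemma Tt_fill {I : Set (ZMod (2*n+1))} (hI : IsIntervalOn (Tt n) Set.univ I) :
    ∀ k : ℕ, 1 ≤ k → k ≤ n → ∀ a : ZMod (2*n+1), a ∈ I →
      a + (k : ZMod (2*n+1)) ∈ I → ∀ j : ℕ, j ≤ k → a + (j : ZMod (2*n+1)) ∈ I := by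
  intro k
  induction k with
  | zero => omega
  | succ k ih =>
    intro _ hkn a haI hkI j hj
    rcases Nat.eq_zero_or_pos k with rfl | hk
    · interval_cases j
      · simpa using haI
      · exact hkI
    · have hxk : a + (k : ZMod (2*n+1)) ∈ I := by
        refine mem_of_nonuniform hI hkI haI ?_ ?_
        · exact Tt_F2 (by omega) (by omega) (by omega) a
        · have := Tt_F2 (j := 0) (k := k) (by omega) (by omega) (by omega) a
          simpa using this
      rcases Nat.lt_or_ge j (k+1) with h | h
      · exact ih hk (by omega) a haI hxk j (by omega)
      · have hj' : j = k + 1 := by omega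
        subst hj'
        exact hkI

lemma Tt_jump (hn : 1 ≤ n) {I : Set (ZMod (2*n+1))}
    (hI : IsIntervalOn (Tt n) Set.univ I) {a : ZMod (2*n+1)} {k : ℕ}
    (h1 : 1 ≤ k) (h2 : k ≤ n) (ha : a ∈ I) (hk : a + (k : ZMod (2*n+1)) ∈ I) :
    a + ((k + n : ℕ) : ZMod (2*n+1)) ∈ I := by
  refine mem_of_nonuniform hI ha hk ?_ ?_
  · exact Tt_F1 (by omega) (by omega) a
  · exact Tt_F2 (j := k) (k := k + n) (by omega) (by omega) (by omega) a

lemma Tt_succ (hn : 1 ≤ n) {I : Set (ZMod (2*n+1))}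
    (hI : IsIntervalOn (Tt n) Set.univ I) {x : ZMod (2*n+1)}
    (hx : x ∈ I) (hx1 : x + 1 ∈ I) : x + 1 + 1 ∈ I := by
  have h1 : x + ((1 : ℕ) : ZMod (2*n+1)) ∈ I := by simpa using hx1
  have hj := Tt_jump hn hI (le_refl 1) hn hx h1
  have he : x + ((1 + n : ℕ) : ZMod (2*n+1)) = (x + 1) + ((n : ℕ) : ZMod (2*n+1)) := by
    push_cast; ring
  rw [he] at hj
  have := Tt_fill hI n hn (le_refl n) (x + 1) hx1 hj 1 hn
  simpa using this

end TtAux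

/-- For `n ≥ 2`, the tournament `T_{2n+1}` is indecomposable. -/
theorem Tt_indecomposable (n : ℕ) (hn : 2 ≤ n) :
    IndecomposableOn (Tt n) Set.univ := by
  intro I hI
  by_cases h0 : I = ∅
  · exact Or.inl h0
  right
  by_cases h1 : ∃ a, I = {a}
  · exact Or.inl h1
  right
  push_neg at h1
  obtain ⟨a, ha⟩ := Set.nonempty_iff_ne_empty.2 h0
  obtain ⟨b, hb, hab⟩ : ∃ b ∈ I, b ≠ a := by
    by_contra h
    push_neg at h
    exact h1 a (Set.eq_singleton_iff_unique_mem.2 ⟨ha, h⟩)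
  have hn1 : 1 ≤ n := by omega
  -- get a base point c with c ∈ I and c + k ∈ I, 1 ≤ k ≤ n
  obtain ⟨c, k, hcI, hckI, hk1, hkn⟩ :
      ∃ (c : ZMod (2*n+1)) (k : ℕ), c ∈ I ∧ c + (k : ZMod (2*n+1)) ∈ I ∧ 1 ≤ k ∧ k ≤ n := by
    set d := (b - a).val with hd
    have hd0 : d ≠ 0 := by
      intro h
      apply hab
      have : b - a = 0 := by
        have := (ZMod.val_eq_zero (b - a)).1 h
        exact this
      exact sub_eq_zero.mp this
    have hdlt : d < 2*n+1 := ZMod.val_lt _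
    have hba : b = a + (d : ZMod (2*n+1)) := by
      rw [hd, ZMod.natCast_val, ZMod.cast_id]
      ring
    rcases le_or_gt d n with h | h
    · exact ⟨a, d, ha, hba ▸ hb, Nat.one_le_iff_ne_zero.2 hd0, h⟩
    · refine ⟨b, 2*n+1-d, hb, ?_, by omega, by omega⟩
      have he : b + ((2*n+1-d : ℕ) : ZMod (2*n+1)) = a := by
        have h2 : d + (2*n+1-d) = 2*n+1 := by omega
        have h3 : ((d : ℕ) : ZMod (2*n+1)) + ((2*n+1-d : ℕ) : ZMod (2*n+1))
            = ((2*n+1 : ℕ) : ZMod (2*n+1)) := by exact_mod_cast congrArg (Nat.cast : ℕ → ZMod (2*n+1)) h2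
        rw [ZMod.natCast_self] at h3
        rw [hba, add_assoc, h3, add_zero]
      rw [he]
      exact ha
  -- c + 1 ∈ I
  have hc1 : c + 1 ∈ I := by
    have := Tt_fill hI k hk1 hkn c hcI hckI 1 hk1
    simpa using this
  -- all c + m ∈ I
  have hall : ∀ m : ℕ, c + (m : ZMod (2*n+1)) ∈ I := by
    have H : ∀ m : ℕ, c + (m : ZMod (2*n+1)) ∈ I ∧ c + ((m+1 : ℕ) : ZMod (2*n+1)) ∈ I := by
      intro m
      induction m with
      | zero => exact ⟨by simpa using hcI, by simpa using hc1⟩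
      | succ m ih =>
        refine ⟨ih.2, ?_⟩
        have h2 : c + (m : ZMod (2*n+1)) + 1 ∈ I := by
          have := ih.2; push_cast at this; rwa [← add_assoc] at this
        have := Tt_succ hn1 hI (x := c + (m : ZMod (2*n+1))) ih.1 h2
        have he : c + ((m + 1 + 1 : ℕ) : ZMod (2*n+1)) = c + (m : ZMod (2*n+1)) + 1 + 1 := by
          push_cast; ring
        rw [he]
        exact this
    exact fun m => (H m).1
  ext x
  simp only [Set.mem_univ, iff_true]
  have hx : x = c + (((x - c).val : ℕ) : ZMod (2*n+1)) := by
    rw [ZMod.natCast_val, ZMod.cast_id]; ring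
  rw [hx]
  exact hall _
end

section
/- For every n ≥ 2 and every i ∈ Z/(2n+1)Z, the unique nontrivial interval of the tournament T_{2n+1} − i (obtained by deleting vertex i) is {i+n, i+n+1}. -/
lemma zkey {m : ℕ} [NeZero m] (u v : ZMod m) :
    (u - v).val + v.val = u.val ∨ (u - v).val + v.val = u.val + m := by
  have h : ((u - v) + v).val = ((u-v).val + v.val) % m := ZMod.val_add _ _
  rw [sub_add_cancel] at h
  have h1 := ZMod.val_lt (u - v); have h2 := ZMod.val_lt v
  have h3 := ZMod.val_lt u
  rcases Nat.lt_or_ge ((u-v).val + v.val) m with hl | hl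
  · left; rw [Nat.mod_eq_of_lt hl] at h; omega
  · right
    rw [Nat.mod_eq_sub_mod hl, Nat.mod_eq_of_lt (by omega)] at h
    omega

lemma zsub_ne {m : ℕ} [NeZero m] {a b : ZMod m} (h : (a - b).val ≠ 0) : a ≠ b := by
  intro h'; subst h'; simp at h

lemma zsub_ne' {m : ℕ} [NeZero m] {a b : ZMod m} (h : a ≠ b) : (a - b).val ≠ 0 := by
  intro h'; exact h (by have := (ZMod.val_eq_zero _).mp h'; rwa [sub_eq_zero] at this)

lemma tt_iff (n : ℕ) (x y : ZMod (2*n+1)) :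
    Tt n x y ↔ 1 ≤ (y - x).val ∧ (y - x).val ≤ n := by
  simp [Tt, Finset.mem_Icc]

lemma tt_asymm {n : ℕ} {x y : ZMod (2*n+1)} (h : x ≠ y) : Tt n x y ↔ ¬ Tt n y x := by
  haveI : NeZero (2*n+1) := ⟨by omega⟩
  rw [tt_iff, tt_iff]
  have k1 := zkey y x
  have k2 := zkey x y
  have b1 := ZMod.val_lt (y - x); have b2 := ZMod.val_lt (x - y)
  have b3 := ZMod.val_lt x; have b4 := ZMod.val_lt y
  have h1 := zsub_ne' h.symm
  have h2 := zsub_ne' h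
  omega

lemma star {n : ℕ} {I : Set (ZMod (2*n+1))} {i : ZMod (2*n+1)}
    (H : ∀ x, x ≠ i → x ∉ I → ∀ a ∈ I, ∀ b ∈ I, (Tt n x a ↔ Tt n x b))
    {a b : ZMod (2*n+1)} (ha : a ∈ I) (hb : b ∈ I)
    (hd1 : 1 ≤ (b-a).val) (hdn : (b-a).val ≤ n)
    {e : ℕ} (he : (1 ≤ e ∧ e + 1 ≤ (b-a).val) ∨ (n+1 ≤ e ∧ e ≤ n + (b-a).val)) :
    a + (e : ZMod (2*n+1)) ∈ I ∨ a + (e : ZMod (2*n+1)) = i := by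
  haveI : NeZero (2*n+1) := ⟨by omega⟩
  by_contra hcon
  push_neg at hcon
  set x := a + (e : ZMod (2*n+1)) with hxdef
  have hx := H x hcon.2 hcon.1 a ha b hb
  rw [tt_iff, tt_iff] at hx
  have hem : e < 2*n+1 := by omega
  have hxval : x.val = (a.val + e) % (2*n+1) := by
    rw [hxdef, ZMod.val_add, ZMod.val_cast_of_lt hem]
  have b1 := ZMod.val_lt a; have b2 := ZMod.val_lt b; have b3 := ZMod.val_lt x
  have b4 := ZMod.val_lt (a - x); have b5 := ZMod.val_lt (b - x)
  have hxv : x.val = a.val + e ∨ x.val + (2*n+1) = a.val + e := by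
    rcases Nat.lt_or_ge (a.val + e) (2*n+1) with hl | hl
    · left; rw [hxval, Nat.mod_eq_of_lt hl]
    · right; rw [hxval, Nat.mod_eq_sub_mod hl, Nat.mod_eq_of_lt (by omega)]; omega
  have k1 := zkey a x
  have k2 := zkey b x
  have k3 := zkey b a
  omega

lemma cover {n : ℕ} {I : Set (ZMod (2*n+1))} {i : ZMod (2*n+1)} (hn : 1 ≤ n)
    (H : ∀ x, x ≠ i → x ∉ I → ∀ a ∈ I, ∀ b ∈ I, (Tt n x a ↔ Tt n x b))
    {p q : ZMod (2*n+1)} (hp : p ∈ I) (hq : q ∈ I) (hpq : (q - p).val = n)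
    (hI : I ⊆ {i}ᶜ) : I = {i}ᶜ := by
  haveI : NeZero (2*n+1) := ⟨by omega⟩
  refine Set.Subset.antisymm hI (fun z hz => ?_)
  have hzi : z ≠ i := hz
  set e := (z - p).val with hedef
  have hzp : z = p + (e : ZMod (2*n+1)) := by
    rw [hedef, ZMod.natCast_rightInverse (z - p)]; ring
  rcases Nat.eq_zero_or_pos e with h0 | h1
  · have : z = p := by
      have := (ZMod.val_eq_zero _).mp h0
      rwa [sub_eq_zero] at this
    rwa [this]
  by_cases hen : e = n
  · have hzq : z - p = q - p := ZMod.val_injective _ (by rw [← hedef, hpq, hen])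
    have : z = q := by
      have h' := congrArg (· + p) hzq
      simpa using h'
    rwa [this]
  · have hel := ZMod.val_lt (z - p)
    have hs := star H hp hq (by omega) (le_of_eq hpq)
      (e := e) (by rw [hpq]; omega)
    rw [← hzp] at hs
    rcases hs with h | h
    · exact h
    · exact absurd h hzi

lemma halfdet {n : ℕ} (hn : 2 ≤ n) {I : Set (ZMod (2*n+1))} {i : ZMod (2*n+1)}
    (H : ∀ x, x ≠ i → x ∉ I → ∀ a ∈ I, ∀ b ∈ I, (Tt n x a ↔ Tt n x b))
    (hI : I ⊆ {i}ᶜ) (hne : I ≠ {i}ᶜ)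
    {a b : ZMod (2*n+1)} (ha : a ∈ I) (hb : b ∈ I)
    (hd1 : 1 ≤ (b-a).val) (hdn : (b-a).val ≤ n) :
    a = i + (n : ZMod (2*n+1)) ∧ b = i + (n : ZMod (2*n+1)) + 1 := by
  haveI : NeZero (2*n+1) := ⟨by omega⟩
  have h0 : (2 : ZMod (2*n+1)) * (n : ZMod (2*n+1)) + 1 = 0 := by
    have := ZMod.natCast_self (2*n+1)
    push_cast at this
    linear_combination this
  have hnval : ((n : ℕ) : ZMod (2*n+1)).val = n := ZMod.val_cast_of_lt (by omega)
  constructor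
  · -- step A : e = n+1
    have hs := star H ha hb hd1 hdn (e := n+1) (Or.inr ⟨le_refl _, by omega⟩)
    rcases hs with hc | hc
    · exfalso
      apply hne
      refine cover (by omega) H hc ha ?_ hI
      have : a - (a + ((n+1 : ℕ) : ZMod (2*n+1))) = ((n:ℕ) : ZMod (2*n+1)) := by
        push_cast
        linear_combination -h0
      rw [this, hnval]
    · push_cast at hc ⊢
      linear_combination hc - h0
  · -- step B : e = n + d
    have hs := star H ha hb hd1 hdn (e := n + (b-a).val) (Or.inr ⟨by omega, le_refl _⟩)
    have hba : (((b-a).val : ℕ) : ZMod (2*n+1)) = b - a := ZMod.natCast_rightInverse _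
    have heq : a + ((n + (b-a).val : ℕ) : ZMod (2*n+1)) = b + ((n:ℕ) : ZMod (2*n+1)) := by
      push_cast
      push_cast at hba
      linear_combination hba
    rw [heq] at hs
    rcases hs with hc | hc
    · exfalso
      apply hne
      refine cover (by omega) H hb hc ?_ hI
      rw [add_sub_cancel_left, hnval]
    · linear_combination hc - h0

/-- For `n ≥ 2` and each vertex `i`, the unique nontrivial interval of
`T_{2n+1} − i` is `{i+n, i+n+1}`. -/
theorem Tt_delete_unique_interval (n : ℕ) (hn : 2 ≤ n) (i : ZMod (2*n+1)) :
    ∀ I : Set (ZMod (2*n+1)),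
      (IsIntervalOn (Tt n) {i}ᶜ I ∧ I ≠ ∅ ∧ (¬ ∃ a, I = {a}) ∧ I ≠ {i}ᶜ) ↔
        I = {i + (n : ZMod (2*n+1)), i + (n : ZMod (2*n+1)) + 1} := by
  haveI : NeZero (2*n+1) := ⟨by omega⟩
  intro I
  set u : ZMod (2*n+1) := i + (n : ZMod (2*n+1)) with hu_def
  set v : ZMod (2*n+1) := u + 1 with hv_def
  have hnval : ((n : ℕ) : ZMod (2*n+1)).val = n := ZMod.val_cast_of_lt (by omega)
  have h1val : (1 : ZMod (2*n+1)).val = 1 := by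
    rw [show (1 : ZMod (2*n+1)) = ((1:ℕ) : ZMod (2*n+1)) by norm_cast,
      ZMod.val_cast_of_lt (by omega)]
  have hui_val : (u - i).val = n := by rw [hu_def, add_sub_cancel_left, hnval]
  have hvi_val : (v - i).val = n + 1 := by
    have : v - i = ((n+1 : ℕ) : ZMod (2*n+1)) := by rw [hv_def, hu_def]; push_cast; ring
    rw [this, ZMod.val_cast_of_lt (by omega)]
  have hvu_val : (v - u).val = 1 := by rw [hv_def, add_sub_cancel_left, h1val]
  have hui : u ≠ i := zsub_ne (by omega)
  have hvi : v ≠ i := zsub_ne (by omega)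
  have hvu : v ≠ u := zsub_ne (by omega)
  constructor
  · rintro ⟨Hint, hneE, hnsing, hnecompl⟩
    -- pairwise form of the interval property
    have H : ∀ x, x ≠ i → x ∉ I → ∀ a ∈ I, ∀ b ∈ I, (Tt n x a ↔ Tt n x b) := by
      intro x hxi hxI a ha b hb
      rcases Hint.2 x ⟨hxi, hxI⟩ with h | h
      · simp [h a ha, h b hb]
      · have hxa : x ≠ a := fun h' => hxI (h' ▸ ha)
        have hxb : x ≠ b := fun h' => hxI (h' ▸ hb)
        rw [tt_asymm hxa, tt_asymm hxb]
        simp only [h a ha, h b hb, iff_self, not_true_eq_false]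
    have hIsub : I ⊆ {i}ᶜ := Hint.1
    have pairdet : ∀ p q, p ∈ I → q ∈ I → p ≠ q → (p = u ∧ q = v) ∨ (q = u ∧ p = v) := by
      intro p q hp hq hpq
      have k1 := zkey q p
      have k2 := zkey p q
      have b1 := ZMod.val_lt (q - p); have b2 := ZMod.val_lt (p - q)
      have b3 := ZMod.val_lt p; have b4 := ZMod.val_lt q
      have hz1 := zsub_ne' hpq
      have hz2 := zsub_ne' hpq.symm
      by_cases hle : (q - p).val ≤ n
      · exact Or.inl (halfdet hn H hIsub hnecompl hp hq (by omega) hle)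
      · exact Or.inr (halfdet hn H hIsub hnecompl hq hp (by omega) (by omega))
    obtain ⟨a, ha⟩ := Set.nonempty_iff_ne_empty.mpr hneE
    have hb : ∃ b ∈ I, b ≠ a := by
      by_contra hcon
      push_neg at hcon
      exact hnsing ⟨a, Set.Subset.antisymm (fun z hz => hcon z hz)
        (fun z hz => by rwa [Set.mem_singleton_iff.mp hz])⟩
    obtain ⟨b, hbI, hba⟩ := hb
    have huvI : u ∈ I ∧ v ∈ I := by
      rcases pairdet a b ha hbI (Ne.symm hba) with ⟨h1, h2⟩ | ⟨h1, h2⟩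
      · exact ⟨h1 ▸ ha, h2 ▸ hbI⟩
      · exact ⟨h1 ▸ hbI, h2 ▸ ha⟩
    refine Set.Subset.antisymm (fun z hz => ?_) ?_
    · by_cases hzu : z = u
      · exact Or.inl hzu
      by_cases hzv : z = v
      · exact Or.inr hzv
      · exfalso
        rcases pairdet u z huvI.1 hz (Ne.symm hzu) with ⟨_, h2⟩ | ⟨h1, _⟩
        · exact hzv h2
        · exact hzu h1
    · rw [Set.insert_subset_iff, Set.singleton_subset_iff]
      exact ⟨huvI.1, huvI.2⟩
  · rintro rfl
    have key : ∀ x : ZMod (2*n+1), x ≠ i → x ≠ u → x ≠ v → (Tt n x u ↔ Tt n x v) := by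
      intro x hxi hxu hxv
      rw [tt_iff, tt_iff]
      have k1 := zkey u x
      have k2 := zkey v x
      have k3 := zkey v u
      have b1 := ZMod.val_lt (u - x); have b2 := ZMod.val_lt (v - x)
      have b3 := ZMod.val_lt x; have b4 := ZMod.val_lt u; have b5 := ZMod.val_lt v
      have hz1 := zsub_ne' (Ne.symm hxu)
      have hz2 := zsub_ne' (Ne.symm hxv)
      have htn : (u - x).val ≠ n := by
        intro h
        apply hxi
        have : u - x = u - i := ZMod.val_injective _ (by rw [h, hui_val])
        exact sub_right_injective this
      omega
    refine ⟨⟨?_, ?_⟩, ?_, ?_, ?_⟩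
    · rintro z (rfl | hz)
      · simpa using hui
      · rw [Set.mem_singleton_iff] at hz
        subst hz
        simpa using hvi
    · rintro x ⟨hx1, hx2⟩
      have hxi : x ≠ i := by simpa using hx1
      have hxu : x ≠ u := fun h => hx2 (Or.inl h)
      have hxv : x ≠ v := fun h => hx2 (Or.inr (Set.mem_singleton_iff.mpr h))
      by_cases h : Tt n x u
      · left
        rintro j (rfl | hj)
        · exact h
        · rw [Set.mem_singleton_iff] at hj; subst hj
          exact (key x hxi hxu hxv).mp h
      · right
        rintro j (rfl | hj)
        · exact (tt_asymm hxu.symm).mpr h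
        · rw [Set.mem_singleton_iff] at hj; subst hj
          exact (tt_asymm hxv.symm).mpr (fun hh => h ((key x hxi hxu hxv).mpr hh))
    · exact (Set.insert_nonempty _ _).ne_empty
    · rintro ⟨a, hA⟩
      have h1 : u = a := by
        have := hA ▸ (Set.mem_insert u {v})
        exact Set.mem_singleton_iff.mp this
      have h2 : v = a := by
        have := hA ▸ (Set.mem_insert_of_mem u (Set.mem_singleton v))
        exact Set.mem_singleton_iff.mp this
      exact hvu (h2.trans h1.symm)
    · intro h
      have hA : u ≠ i + 1 := by
        apply zsub_ne
        have : u - (i + 1) = ((n - 1 : ℕ) : ZMod (2*n+1)) := by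
          rw [hu_def]; push_cast [Nat.cast_sub (by omega : 1 ≤ n)]; ring
        rw [this, ZMod.val_cast_of_lt (by omega)]
        omega
      have hB : v ≠ i + 1 := by
        apply zsub_ne
        have : v - (i + 1) = ((n : ℕ) : ZMod (2*n+1)) := by
          rw [hv_def, hu_def]; ring
        rw [this, hnval]
        omega
      have hmem : i + 1 ∈ ({u, v} : Set (ZMod (2*n+1))) := by
        rw [h]
        simp only [Set.mem_compl_iff, Set.mem_singleton_iff]
        intro h'
        have : (i + 1 - i).val ≠ 0 := by rw [add_sub_cancel_left, h1val]; omega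
        exact zsub_ne this h'
      rcases hmem with h' | h'
      · exact hA h'.symm
      · exact hB (Set.mem_singleton_iff.mp h').symm
end

section
/- For every n ≥ 2, the tournament T_{2n+1} is critical: it is indecomposable, and for every vertex x, the tournament T_{2n+1} − x is decomposable. -/
section Helpers

lemma zmod_val_natCast_eq (m : ℕ) [NeZero m] (x : ZMod m) :
    ((x.val : ℕ) : ZMod m) = x := by
  rw [ZMod.natCast_val, ZMod.cast_id]

lemma zmod_val_neg' (m : ℕ) [NeZero m] (x : ZMod m) (hx : x ≠ 0) :
    (-x).val = m - x.val := by
  have hvlt := ZMod.val_lt x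
  have hv0 : x.val ≠ 0 := fun h => hx ((ZMod.val_eq_zero x).mp h)
  have h1 : (-x) = ((m - x.val : ℕ) : ZMod m) := by
    have h2 : x + ((m - x.val : ℕ) : ZMod m) = 0 := by
      have h4 : ((x.val + (m - x.val) : ℕ) : ZMod m) = 0 := by
        rw [(by omega : x.val + (m - x.val) = m), ZMod.natCast_self]
      calc x + ((m - x.val : ℕ) : ZMod m)
          = ((x.val : ℕ) : ZMod m) + ((m - x.val : ℕ) : ZMod m) := by
            rw [zmod_val_natCast_eq]
        _ = ((x.val + (m - x.val) : ℕ) : ZMod m) := by push_cast; ring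
        _ = 0 := h4
    exact neg_eq_of_add_eq_zero_right h2
  rw [h1, ZMod.val_cast_of_lt (by omega)]

variable (n : ℕ)

lemma Tt_iff (i j : ZMod (2*n+1)) :
    Tt n i j ↔ 1 ≤ (j - i).val ∧ (j - i).val ≤ n := by
  simp [Tt, Finset.mem_Icc]

lemma cast_ne_zero' (c : ℕ) (hc : 0 < c) (hlt : c < 2*n+1) :
    ((c : ℕ) : ZMod (2*n+1)) ≠ 0 := by
  intro h
  have hv := ZMod.val_cast_of_lt hlt
  rw [h, ZMod.val_zero] at hv
  omega

lemma val_n (hn : 2 ≤ n) : ((n : ℕ) : ZMod (2*n+1)).val = n :=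
  ZMod.val_cast_of_lt (by omega)

/-- Core step: if `I` is an interval of the whole tournament containing `a` and `b`
with `(b-a).val ∈ [1,n]`, then `a - n ∈ I`. -/
lemma key_sub (hn : 2 ≤ n) (I : Set (ZMod (2*n+1)))
    (hI : IsIntervalOn (Tt n) Set.univ I)
    (a b : ZMod (2*n+1)) (ha : a ∈ I) (hb : b ∈ I)
    (h1 : 1 ≤ (b - a).val) (h2 : (b - a).val ≤ n) : a - (n : ℕ) ∈ I := by
  by_contra hc
  have hvn := val_n n hn
  rcases hI.2 (a - (n : ℕ)) ⟨Set.mem_univ _, hc⟩ with h | h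
  · have hb' := (Tt_iff n _ _).mp (h b hb)
    have he : b - (a - (n : ℕ)) = (b - a) + (n : ℕ) := by ring
    rw [he, ZMod.val_add, hvn, Nat.mod_eq_of_lt (by omega)] at hb'
    omega
  · have ha' := (Tt_iff n _ _).mp (h a ha)
    have he : a - (n : ℕ) - a = -((n : ℕ) : ZMod (2*n+1)) := by ring
    rw [he, zmod_val_neg' _ _ (cast_ne_zero' n n (by omega) (by omega)), hvn] at ha'
    omega

/-- If an interval contains two distinct points, it is everything. -/
lemma interval_two (hn : 2 ≤ n) (I : Set (ZMod (2*n+1)))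
    (hI : IsIntervalOn (Tt n) Set.univ I)
    (a b : ZMod (2*n+1)) (ha : a ∈ I) (hb : b ∈ I) (hab : a ≠ b) :
    I = Set.univ := by
  -- reduce to the case (b - a).val ∈ [1, n]
  have hmain : ∀ a b : ZMod (2*n+1), a ∈ I → b ∈ I →
      1 ≤ (b - a).val → (b - a).val ≤ n → I = Set.univ := by
    intro a b ha hb h1 h2
    have hvn := val_n n hn
    -- Q k : a + k ∈ I ∧ a + k - n ∈ I
    have hQ : ∀ k : ℕ, a + (k : ℕ) ∈ I ∧ a + (k : ℕ) - (n : ℕ) ∈ I := by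
      intro k
      induction k with
      | zero =>
        constructor
        · simpa using ha
        · simpa using key_sub n hn I hI a b ha hb h1 h2
      | succ k ih =>
        obtain ⟨ihk, ihkn⟩ := ih
        have hdiff : ((a + (k : ℕ)) - (a + (k : ℕ) - (n : ℕ))).val = n := by
          have : (a + (k : ℕ)) - (a + (k : ℕ) - (n : ℕ)) = ((n : ℕ) : ZMod (2*n+1)) := by ring
          rw [this, hvn]
        -- from pair (a+k-n, a+k) get (a+k-n) - n = a+k+1
        have hnew : a + (k : ℕ) - (n : ℕ) - (n : ℕ) ∈ I :=
          key_sub n hn I hI _ _ ihkn ihk (by omega) (by omega)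
        have hz : ((2*n+1 : ℕ) : ZMod (2*n+1)) = 0 := ZMod.natCast_self _
        have he1 : a + (k : ℕ) - (n : ℕ) - (n : ℕ) = a + ((k+1 : ℕ) : ZMod (2*n+1)) := by
          push_cast
          push_cast at hz
          linear_combination -hz
        rw [he1] at hnew
        push_cast at hnew
        refine ⟨by push_cast; exact hnew, ?_⟩
        -- need a + (k+1) - n ∈ I ; pair (a+(k+1), a+k-n) has diff val n
        have hdiff2 : ((a + (k : ℕ) - (n : ℕ)) - (a + ((k:ℕ)+1))).val = n := by
          have he2 : (a + (k : ℕ) - (n : ℕ)) - (a + ((k:ℕ)+1)) = ((n : ℕ) : ZMod (2*n+1)) := by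
            push_cast
            push_cast at hz
            linear_combination -hz
          rw [he2, hvn]
        have := key_sub n hn I hI (a + ((k:ℕ)+1)) (a + (k : ℕ) - (n : ℕ)) hnew ihkn
          (by omega) (by omega)
        push_cast
        convert this using 2
    ext z
    simp only [Set.mem_univ, iff_true]
    have : z = a + (((z - a).val : ℕ) : ZMod (2*n+1)) := by
      rw [zmod_val_natCast_eq]; ring
    rw [this]
    exact (hQ (z - a).val).1
  -- now the WLOG
  have hne : b - a ≠ 0 := fun h => hab (by linear_combination -h)
  have hv1 : 1 ≤ (b - a).val := by
    have := (ZMod.val_eq_zero (b - a)).not.mpr hne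
    omega
  by_cases hle : (b - a).val ≤ n
  · exact hmain a b ha hb hv1 hle
  · have hvlt := ZMod.val_lt (b - a)
    have hab' : a - b = -(b - a) := by ring
    have : (a - b).val = 2*n+1 - (b-a).val := by rw [hab', zmod_val_neg' _ _ hne]
    exact hmain b a hb ha (by omega) (by omega)

end Helpers

section Part2

variable (n : ℕ)

lemma sub_cast_ne (c : ℕ) (hc : 0 < c) (hlt : c < 2*n+1) (p q : ZMod (2*n+1))
    (h : q - p = ((c : ℕ) : ZMod (2*n+1))) : p ≠ q := by
  intro he
  rw [he, sub_self] at h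
  exact cast_ne_zero' n c hc hlt h.symm

lemma decomp (hn : 2 ≤ n) (x : ZMod (2*n+1)) : ¬ IndecomposableOn (Tt n) {x}ᶜ := by
  haveI : Fact (1 < 2*n+1) := ⟨by omega⟩
  intro h
  have hvn := val_n n hn
  have hz : ((2*n+1 : ℕ) : ZMod (2*n+1)) = 0 := ZMod.natCast_self _
  set u : ZMod (2*n+1) := x + (n : ℕ) with hu
  set v : ZMod (2*n+1) := x + (n : ℕ) + 1 with hv
  have hxu : x ≠ u := sub_cast_ne n n (by omega) (by omega) x u (by rw [hu]; ring)
  have hxv : x ≠ v := sub_cast_ne n (n+1) (by omega) (by omega) x v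
    (by rw [hv]; push_cast; ring)
  have huv : u ≠ v := sub_cast_ne n 1 (by omega) (by omega) u v
    (by rw [hu, hv]; push_cast; ring)
  have hint : IsIntervalOn (Tt n) {x}ᶜ {u, v} := by
    constructor
    · intro w hw
      rcases hw with hw | hw
      · simpa [hw] using hxu.symm
      · simp only [Set.mem_singleton_iff] at hw
        simpa [hw] using hxv.symm
    · intro z hz'
      obtain ⟨hzx, hzI⟩ := hz'
      have hzu : z ≠ u := fun h => hzI (by simp [h])
      have hzv : z ≠ v := fun h => hzI (by simp [h])
      have hzx' : z ≠ x := by simpa using hzx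
      set d : ℕ := (u - z).val with hd
      have hdlt : d < 2*n+1 := ZMod.val_lt _
      have hcast : ((d : ℕ) : ZMod (2*n+1)) = u - z := zmod_val_natCast_eq _ _
      have hd0 : d ≠ 0 := by
        intro h0
        apply hzu
        have : u - z = 0 := by rw [← hcast, h0]; simp
        linear_combination -this
      have hdn : d ≠ n := by
        intro h0
        apply hzx'
        have h1 : u - z = ((n : ℕ) : ZMod (2*n+1)) := by rw [← hcast, h0]
        rw [hu] at h1
        linear_combination -h1
      have hd2n : d ≠ 2*n := by
        intro h0
        apply hzv
        have h1 : u - z = ((2*n : ℕ) : ZMod (2*n+1)) := by rw [← hcast, h0]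
        have h2 : ((2*n : ℕ) : ZMod (2*n+1)) = -1 := by
          push_cast
          push_cast at hz
          linear_combination hz
        rw [hu] at h1
        rw [h2] at h1
        rw [hv]
        linear_combination -h1
      have hvadd : (v - z).val = (d + 1) % (2*n+1) := by
        have he : v - z = (u - z) + 1 := by rw [hu, hv]; ring
        rw [he, ZMod.val_add, ZMod.val_one, ← hd]
      by_cases hcase : d ≤ n
      · -- d ∈ [1, n-1] : z beats u and v
        left
        intro i hi
        rcases hi with hi | hi
        · rw [hi, Tt_iff, ← hd]; omega
        · simp only [Set.mem_singleton_iff] at hi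
          rw [hi, Tt_iff, hvadd, Nat.mod_eq_of_lt (by omega)]
          omega
      · -- d ∈ [n+1, 2n-1] : u and v beat z
        right
        have huz0 : u - z ≠ 0 := by
          intro h0
          rw [← hcast] at h0
          exact cast_ne_zero' n d (by omega) hdlt h0
        intro i hi
        rcases hi with hi | hi
        · rw [hi, Tt_iff]
          have he : z - u = -(u - z) := by ring
          rw [he, zmod_val_neg' _ _ huz0, ← hd]
          omega
        · simp only [Set.mem_singleton_iff] at hi
          rw [hi, Tt_iff]
          have he : z - v = -((u - z) + 1) := by rw [hu, hv]; ring
          have hv1 : ((u - z) + 1).val = d + 1 := by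
            rw [ZMod.val_add, ZMod.val_one, ← hd, Nat.mod_eq_of_lt (by omega)]
          have hne : (u - z) + 1 ≠ 0 := by
            intro h0
            rw [h0] at hv1
            simp [ZMod.val_zero] at hv1
          rw [he, zmod_val_neg' _ _ hne, hv1]
          omega
  rcases h {u, v} hint with h1 | ⟨a, h1⟩ | h1
  · have : u ∈ ({u, v} : Set (ZMod (2*n+1))) := by simp
    rw [h1] at this
    exact this
  · have hu' : u = a := by
      have : u ∈ ({u, v} : Set (ZMod (2*n+1))) := by simp
      rw [h1] at this; simpa using this
    have hv' : v = a := by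
      have : v ∈ ({u, v} : Set (ZMod (2*n+1))) := by simp
      rw [h1] at this; simpa using this
    exact huv (hu'.trans hv'.symm)
  · have hx1 : x + 1 ∈ ({x}ᶜ : Set (ZMod (2*n+1))) := by
      simp only [Set.mem_compl_iff, Set.mem_singleton_iff]
      intro h0
      exact cast_ne_zero' n 1 (by omega) (by omega) (by push_cast; linear_combination h0)
    rw [← h1] at hx1
    rcases hx1 with h2 | h2
    · exact cast_ne_zero' n (n-1) (by omega) (by omega) (by
        rw [hu] at h2
        rw [Nat.cast_sub (by omega : 1 ≤ n)]
        push_cast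
        linear_combination -h2)
    · simp only [Set.mem_singleton_iff] at h2
      exact cast_ne_zero' n n (by omega) (by omega) (by
        rw [hv] at h2
        linear_combination -h2)

end Part2


/-- For `n ≥ 2`, `T_{2n+1}` is critical: indecomposable, and deleting any
vertex yields a decomposable tournament. -/
theorem Tt_critical (n : ℕ) (hn : 2 ≤ n) :
    IndecomposableOn (Tt n) Set.univ ∧
      ∀ x : ZMod (2*n+1), ¬ IndecomposableOn (Tt n) {x}ᶜ := by
  constructor
  · intro I hI
    by_cases h0 : I = ∅
    · exact Or.inl h0
    obtain ⟨a, ha⟩ := Set.nonempty_iff_ne_empty.mpr h0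
    by_cases h1 : ∀ b ∈ I, b = a
    · exact Or.inr (Or.inl ⟨a, Set.eq_singleton_iff_unique_mem.mpr ⟨ha, h1⟩⟩)
    · push_neg at h1
      obtain ⟨b, hb, hba⟩ := h1
      exact Or.inr (Or.inr (interval_two n hn I hI a b ha hb (Ne.symm hba)))
  · exact decomp n hn
end

section
/- Let T = (V,A) be a tournament and X ⊆ V with |X| ≥ 3 such that T(X) is indecomposable. Then the family {X(u) : u ∈ X} ∪ {Ext(X), [X]} is a partition of V − X, where Ext(X) = {x ∈ V−X : T(X ∪ {x}) is indecomposable}, [X] = {x ∈ V−X : x → X or X → x}, and X(u) = {x ∈ V−X : {u,x} is an interval of T(X ∪ {x})}. -/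
set_option linter.unusedSectionVars false

lemma X_ne_pair {V : Type*} {X : Set V} (hX : 3 ≤ X.ncard) (u v : V) : X ≠ {u, v} := by
  intro hXe
  have h1 : ({u, v} : Set V).ncard ≤ 2 := by
    calc ({u,v} : Set V).ncard ≤ ({v} : Set V).ncard + 1 := Set.ncard_insert_le _ _
      _ ≤ 2 := by simp
  rw [hXe] at hX; omega

lemma X_ne_single {V : Type*} {X : Set V} (hX : 3 ≤ X.ncard) (u : V) : X ≠ {u} := by
  intro hXe; rw [hXe, Set.ncard_singleton] at hX; omega

lemma X_ne_empty {V : Type*} {X : Set V} (hX : 3 ≤ X.ncard) : X ≠ ∅ := by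
  intro hXe; rw [hXe, Set.ncard_empty] at hX; omega

lemma diff_big {V : Type*} [Finite V] {X : Set V} (hX : 3 ≤ X.ncard) {u : V} (hu : u ∈ X) :
    (X \ {u}) ≠ ∅ ∧ ¬ (∃ a, X \ {u} = {a}) ∧ X \ {u} ≠ X := by
  have hc : (X \ {u}).ncard = X.ncard - 1 := Set.ncard_diff_singleton_of_mem hu
  refine ⟨?_, ?_, ?_⟩
  · intro he; rw [he] at hc; simp at hc; omega
  · rintro ⟨a, ha⟩; rw [ha, Set.ncard_singleton] at hc; omega
  · intro he
    have : u ∈ X \ {u} := he.symm ▸ hu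
    simp at this


/-- The family `{X(u) : u ∈ X} ∪ {Ext(X), [X]}` is a partition of `V − X`. -/
theorem partition_lemma {V : Type*} [Fintype V] (r : V → V → Prop) (X : Set V)
    (h : IsTournament r) (hX : 3 ≤ X.ncard) (hind : IndecomposableOn r X) :
    ((⋃ u ∈ X, XuSet r X u) ∪ ExtSet r X ∪ BrSet r X = Xᶜ) ∧
      (∀ u ∈ X, ∀ v ∈ X, u ≠ v → Disjoint (XuSet r X u) (XuSet r X v)) ∧
      (∀ u ∈ X, Disjoint (XuSet r X u) (ExtSet r X)) ∧
      (∀ u ∈ X, Disjoint (XuSet r X u) (BrSet r X)) ∧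
      Disjoint (ExtSet r X) (BrSet r X) := by
  obtain ⟨hirr, hasym⟩ := h
  refine ⟨?_, ?_, ?_, ?_, ?_⟩
  · -- cover
    apply Set.Subset.antisymm
    · intro x hx
      rcases hx with (hx | hx) | hx
      · simp only [Set.mem_iUnion] at hx
        obtain ⟨u, _, hxu, _⟩ := hx
        exact hxu
      · exact hx.1
      · exact hx.1
    · intro x hxX
      simp only [Set.mem_compl_iff] at hxX
      by_cases hExt : IndecomposableOn r (X ∪ {x})
      · exact Or.inl (Or.inr ⟨hxX, hExt⟩)
      simp only [IndecomposableOn, not_forall] at hExt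
      obtain ⟨I, hIint, hIbad⟩ := hExt
      push_neg at hIbad
      obtain ⟨hIne, hIns, hInw⟩ := hIbad
      by_cases hxI : x ∈ I
      · -- J := I \ {x} is an interval of X
        have hJsub : I \ {x} ⊆ X := by
          intro y hy
          rcases hIint.1 hy.1 with h | h
          · exact h
          · exact absurd h hy.2
        have hJint : IsIntervalOn r X (I \ {x}) := by
          refine ⟨hJsub, ?_⟩
          intro y hy
          have hyx : y ≠ x := fun he => hxX (he ▸ hy.1)
          have hyI : y ∉ I := by
            intro hyI
            exact hy.2 ⟨hyI, hyx⟩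
          have := hIint.2 y ⟨Or.inl hy.1, hyI⟩
          rcases this with h | h
          · exact Or.inl fun i hi => h i hi.1
          · exact Or.inr fun i hi => h i hi.1
        rcases hind _ hJint with hJ | ⟨u, hJ⟩ | hJ
        · -- I = {x}, contradiction with not singleton
          exfalso
          apply hIns x
          apply Set.Subset.antisymm
          · intro y hy
            by_contra hyx
            have hmem : y ∈ I \ {x} := ⟨hy, hyx⟩
            rw [hJ] at hmem
            exact hmem
          · intro y hy
            simp only [Set.mem_singleton_iff] at hy
            exact hy ▸ hxI
        · -- I = {u, x}
          have huJ : u ∈ I \ {x} := by rw [hJ]; rfl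
          have huX : u ∈ X := hJsub huJ
          have hIeq : I = {u, x} := by
            apply Set.Subset.antisymm
            · intro y hy
              by_cases hyx : y = x
              · exact Or.inr hyx
              · have : y ∈ I \ {x} := ⟨hy, hyx⟩
                rw [hJ] at this
                exact Or.inl this
            · rintro y (rfl | rfl)
              · exact huJ.1
              · exact hxI
          refine Or.inl (Or.inl ?_)
          simp only [Set.mem_iUnion]
          exact ⟨u, huX, hxX, hIeq ▸ hIint⟩
        · -- I = X ∪ {x}, contradiction
          exfalso
          apply hInw
          apply Set.Subset.antisymm hIint.1
          intro y hy
          rcases hy with hy | hy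
          · have : y ∈ X := hy
            by_cases hyx : y = x
            · exact hyx ▸ hxI
            · have hmem : y ∈ I \ {x} := by rw [hJ]; exact ‹y ∈ X›
              exact hmem.1
          · simp only [Set.mem_singleton_iff] at hy
            exact hy ▸ hxI
      · -- x ∉ I : I is interval of X, so I = X, so x ∈ BrSet
        have hIsub : I ⊆ X := by
          intro y hy
          rcases hIint.1 hy with h | h
          · exact h
          · exact absurd h (by rintro rfl; exact hxI hy)
        have hIintX : IsIntervalOn r X I := by
          refine ⟨hIsub, fun y hy => hIint.2 y ⟨Set.mem_union_left _ hy.1, hy.2⟩⟩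
        rcases hind _ hIintX with hI | hI | hI
        · exact absurd hI hIne.ne_empty
        · obtain ⟨a, ha⟩ := hI; exact (hIns a ha).elim
        · -- I = X, x relates uniformly to X
          refine Or.inr ⟨hxX, ?_⟩
          have hxmem : x ∈ (X ∪ {x}) \ I := ⟨Or.inr rfl, hI ▸ hxX⟩
          rcases hIint.2 x hxmem with h | h
          · exact Or.inl fun y hy => h y (hI ▸ hy)
          · exact Or.inr fun y hy => h y (hI ▸ hy)
  · -- XuSet u vs XuSet v
    intro u hu v hv huv
    rw [Set.disjoint_left]
    rintro x ⟨hxX, hxu⟩ ⟨_, hxv⟩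
    have hxu' : x ≠ u := fun he => hxX (he ▸ hu)
    have hxv' : x ≠ v := fun he => hxX (he ▸ hv)
    have hpint : IsIntervalOn r X {u, v} := by
      refine ⟨by rintro y (rfl | rfl); exacts [hu, hv], ?_⟩
      intro y hy
      have hyu : y ≠ u := fun he => hy.2 (Or.inl he)
      have hyv : y ≠ v := fun he => hy.2 (Or.inr he)
      have hyx : y ≠ x := fun he => hxX (he ▸ hy.1)
      have h1 := hxu.2 y ⟨Or.inl hy.1, by rintro (rfl | rfl) <;> [exact hyu rfl; exact hyx rfl]⟩
      have h2 := hxv.2 y ⟨Or.inl hy.1, by rintro (rfl | rfl) <;> [exact hyv rfl; exact hyx rfl]⟩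
      rcases h1 with h1 | h1 <;> rcases h2 with h2 | h2
      · exact Or.inl (by rintro i (rfl | rfl); exacts [h1 i (Or.inl rfl), h2 i (Or.inl rfl)])
      · exfalso
        have hyx' : r y x := h1 x (Or.inr rfl)
        have hxy' : r x y := h2 x (Or.inr rfl)
        exact ((hasym y x hyx).mp hyx') hxy'
      · exfalso
        have hxy' : r x y := h1 x (Or.inr rfl)
        have hyx' : r y x := h2 x (Or.inr rfl)
        exact ((hasym y x hyx).mp hyx') hxy'
      · exact Or.inr (by rintro i (rfl | rfl); exacts [h1 i (Or.inl rfl), h2 i (Or.inl rfl)])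
    rcases hind _ hpint with hp | ⟨a, hp⟩ | hp
    · exact absurd hp ((Set.insert_nonempty _ _).ne_empty)
    · have h1 : u ∈ ({a} : Set V) := hp ▸ Or.inl rfl
      have h2 : v ∈ ({a} : Set V) := hp ▸ Or.inr rfl
      simp only [Set.mem_singleton_iff] at h1 h2
      exact huv (h1.trans h2.symm)
    · exact X_ne_pair hX u v hp.symm
  · -- XuSet u vs ExtSet
    intro u hu
    rw [Set.disjoint_left]
    rintro x ⟨hxX, hxu⟩ ⟨_, hindx⟩
    have hxu' : x ≠ u := fun he => hxX (he ▸ hu)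
    rcases hindx _ hxu with hp | ⟨a, hp⟩ | hp
    · exact absurd hp ((Set.insert_nonempty _ _).ne_empty)
    · have h1 : u ∈ ({a} : Set V) := hp ▸ Or.inl rfl
      have h2 : x ∈ ({a} : Set V) := hp ▸ Or.inr rfl
      simp only [Set.mem_singleton_iff] at h1 h2
      exact hxu' (h2.trans h1.symm)
    · -- {u, x} = X ∪ {x} forces X = {u}
      apply X_ne_single hX u
      apply Set.Subset.antisymm
      · intro y hy
        have : y ∈ ({u, x} : Set V) := hp ▸ Or.inl hy
        rcases this with rfl | rfl
        · rfl
        · exact absurd hy hxX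
      · rintro y rfl; exact hu
  · -- XuSet u vs BrSet
    intro u hu
    rw [Set.disjoint_left]
    rintro x ⟨hxX, hxu⟩ ⟨_, hbr⟩
    have hxu' : x ≠ u := fun he => hxX (he ▸ hu)
    obtain ⟨hne, hns, hnX⟩ := diff_big hX hu
    have key : ∀ z ∈ X \ ({u} : Set V), z ≠ x ∧ z ≠ u := by
      intro z hz
      exact ⟨fun he => hxX (he ▸ hz.1), fun he => hz.2 he⟩
    rcases hbr with hbr | hbr
    · -- x beats X; claim u and x beat X \ {u}
      have hint : IsIntervalOn r X (X \ {u}) := by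
        refine ⟨Set.diff_subset, ?_⟩
        intro y hy
        have hyu : y = u := by
          by_contra hyu
          exact hy.2 ⟨hy.1, hyu⟩
        subst hyu
        refine Or.inl ?_
        intro z hz
        obtain ⟨hzx, hzu⟩ := key z hz
        have := hxu.2 z ⟨Or.inl hz.1, by rintro (rfl | rfl) <;> [exact hzu rfl; exact hzx rfl]⟩
        rcases this with hc | hc
        · exfalso
          have : r z x := hc x (Or.inr rfl)
          exact ((hasym x z hzx.symm).mp (hbr z hz.1)) this
        · exact hc y (Or.inl rfl)
      rcases hind _ hint with h1 | h1 | h1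
      · exact hne h1
      · exact hns h1
      · exact hnX h1
    · have hint : IsIntervalOn r X (X \ {u}) := by
        refine ⟨Set.diff_subset, ?_⟩
        intro y hy
        have hyu : y = u := by
          by_contra hyu
          exact hy.2 ⟨hy.1, hyu⟩
        subst hyu
        refine Or.inr ?_
        intro z hz
        obtain ⟨hzx, hzu⟩ := key z hz
        have := hxu.2 z ⟨Or.inl hz.1, by rintro (rfl | rfl) <;> [exact hzu rfl; exact hzx rfl]⟩
        rcases this with hc | hc
        · exact hc y (Or.inl rfl)
        · exfalso
          have : r x z := hc x (Or.inr rfl)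
          exact ((hasym x z hzx.symm).mp this) (hbr z hz.1)
      rcases hind _ hint with h1 | h1 | h1
      · exact hne h1
      · exact hns h1
      · exact hnX h1
  · -- ExtSet vs BrSet
    rw [Set.disjoint_left]
    rintro x ⟨hxX, hindx⟩ ⟨_, hbr⟩
    have hint : IsIntervalOn r (X ∪ {x}) X := by
      refine ⟨Set.subset_union_left, ?_⟩
      intro y hy
      have hyx : y = x := by
        rcases hy.1 with h1 | h1
        · exact absurd h1 hy.2
        · exact h1
      subst hyx
      exact hbr
    rcases hindx _ hint with h1 | ⟨a, h1⟩ | h1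
    · exact X_ne_empty hX h1
    · exact X_ne_single hX a h1
    · exact hxX (h1 ▸ Or.inr rfl : x ∈ X)
end

section
/- Let T = (V,A) be a tournament, X ⊆ V with |X| ≥ 3 and T(X) indecomposable, and u ∈ X. For all x ∈ X(u) and all y ∈ V − (X ∪ X(u)), if T(X ∪ {x,y}) is decomposable then {u,x} is an interval of T(X ∪ {x,y}). -/
section Aux

variable {V : Type*} (r : V → V → Prop)

lemma aux_tot (h : IsTournament r) {a b : V} (hne : a ≠ b) (hn : ¬ r a b) : r b a :=
  (h.2 b a hne.symm).mpr hn

lemma aux_asym (h : IsTournament r) {a b : V} (hne : a ≠ b) (hr : r a b) : ¬ r b a :=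
  fun h' => ((h.2 a b hne).mp hr) h'

lemma aux_pair_iff (h : IsTournament r) {a b v : V} (hva : v ≠ a) (hvb : v ≠ b)
    (hu : (∀ i ∈ ({a, b} : Set V), r v i) ∨ (∀ i ∈ ({a, b} : Set V), r i v)) :
    (r v a ↔ r v b) := by
  rcases hu with h' | h'
  · exact iff_of_true (h' a (by simp)) (h' b (by simp))
  · exact iff_of_false (fun hv => aux_asym r h hva hv (h' a (by simp)))
      (fun hv => aux_asym r h hvb hv (h' b (by simp)))

lemma aux_pair_unif (h : IsTournament r) {a b v : V} (hva : v ≠ a) (hvb : v ≠ b)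
    (hiff : r v a ↔ r v b) :
    (∀ i ∈ ({a, b} : Set V), r v i) ∨ (∀ i ∈ ({a, b} : Set V), r i v) := by
  by_cases hv : r v a
  · left
    intro i hi
    rcases hi with rfl | hi
    · exact hv
    · rw [Set.mem_singleton_iff] at hi; subst hi; exact hiff.mp hv
  · right
    intro i hi
    rcases hi with rfl | hi
    · exact aux_tot r h hva hv
    · rw [Set.mem_singleton_iff] at hi; subst hi
      exact aux_tot r h hvb (fun h' => hv (hiff.mpr h'))

lemma aux_restrict {S T I : Set V} (hTS : T ⊆ S) (hI : IsIntervalOn r S I) :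
    IsIntervalOn r T (I ∩ T) := by
  refine ⟨Set.inter_subset_right, fun z hz => ?_⟩
  have hz' : z ∈ S \ I := ⟨hTS hz.1, fun hzI => hz.2 ⟨hzI, hz.1⟩⟩
  exact (hI.2 z hz').imp (fun h' i hi => h' i hi.1) (fun h' i hi => h' i hi.1)

lemma aux_classify (h : IsTournament r) (X : Set V) (hX : 3 ≤ X.ncard)
    (hind : IndecomposableOn r X) (u x : V) (hu : u ∈ X) (hxX : x ∉ X)
    (hxI : IsIntervalOn r (X ∪ {x}) {u, x}) (J : Set V)
    (hJ : IsIntervalOn r (X ∪ {x}) J) :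
    J = ∅ ∨ (∃ a, J = {a}) ∨ J = {u, x} ∨ J = X ∪ {x} := by
  have hux : u ≠ x := fun h' => hxX (h' ▸ hu)
  have hX3 : ∀ a b : V, ¬ X ⊆ {a, b} := by
    intro a b hsub
    have h1 : X.ncard ≤ ({a, b} : Set V).ncard := Set.ncard_le_ncard hsub (Set.toFinite _)
    have h2 : ({a, b} : Set V).ncard ≤ 2 := by
      have := Set.ncard_insert_le a ({b} : Set V)
      simp [Set.ncard_singleton] at this
      omega
    omega
  have hunif : ∀ v ∈ X, v ≠ u → (r v u ↔ r v x) := by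
    intro v hv hvu
    have hvx : v ≠ x := fun h' => hxX (h' ▸ hv)
    have := hxI.2 v ⟨Or.inl hv, by simp [hvu, hvx]⟩
    exact aux_pair_iff r h hvu hvx this
  by_cases hxJ : x ∈ J
  · have hK : IsIntervalOn r X (J \ {x}) := by
      refine ⟨fun z hz => ?_, fun v hv => ?_⟩
      · rcases hJ.1 hz.1 with hz' | hz'
        · exact hz'
        · exact absurd hz' hz.2
      · have hvx : v ≠ x := fun h' => hxX (h' ▸ hv.1)
        have hvJ : v ∉ J := fun h' => hv.2 ⟨h', hvx⟩
        exact (hJ.2 v ⟨Or.inl hv.1, hvJ⟩).imp (fun h' i hi => h' i hi.1)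
          (fun h' i hi => h' i hi.1)
    rcases hind _ hK with h0 | ⟨a, ha⟩ | hXK
    · right; left
      refine ⟨x, Set.eq_singleton_iff_unique_mem.mpr ⟨hxJ, fun z hz => ?_⟩⟩
      by_contra hzx
      exact absurd (show z ∈ J \ {x} from ⟨hz, hzx⟩) (by simp [h0])
    · have haJ : a ∈ J \ {x} := ha ▸ rfl
      have haX : a ∈ X := hK.1 haJ
      have hax : a ≠ x := haJ.2
      have hJeq : J = {a, x} := by
        ext z
        constructor
        · intro hz
          by_cases hzx : z = x
          · exact Or.inr hzx
          · left
            have : z ∈ J \ {x} := ⟨hz, hzx⟩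
            rw [ha] at this; exact this
        · rintro (rfl | rfl)
          · exact haJ.1
          · exact hxJ
      by_cases hau : a = u
      · subst hau; right; right; left; exact hJeq
      · exfalso
        have hpair : IsIntervalOn r X {u, a} := by
          have hsub' : ({u, a} : Set V) ⊆ X := by
            rintro z (rfl | hz)
            · exact hu
            · rw [Set.mem_singleton_iff] at hz; exact hz ▸ haX
          refine ⟨hsub', fun v hv => ?_⟩
          have hvu : v ≠ u := fun h' => hv.2 (by simp [h'])
          have hva : v ≠ a := fun h' => hv.2 (by simp [h'])
          have hvx : v ≠ x := fun h' => hxX (h' ▸ hv.1)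
          have h1 : r v u ↔ r v x := hunif v hv.1 hvu
          have h2 : r v a ↔ r v x := by
            have hvJ : v ∉ J := by rw [hJeq]; simp [hva, hvx]
            have := hJ.2 v ⟨Or.inl hv.1, hvJ⟩
            rw [hJeq] at this
            exact aux_pair_iff r h hva hvx this
          exact aux_pair_unif r h hvu hva (h1.trans h2.symm)
        rcases hind _ hpair with h0 | ⟨b, hb⟩ | hXp
        · exact absurd (show u ∈ ({u, a} : Set V) from by simp) (by simp [h0])
        · have h1 : u ∈ ({b} : Set V) := hb ▸ (by simp)
          have h2 : a ∈ ({b} : Set V) := hb ▸ (by simp)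
          rw [Set.mem_singleton_iff] at h1 h2
          exact hau (h2.trans h1.symm)
        · exact hX3 u a (hXp ▸ Set.Subset.rfl)
    · right; right; right
      ext z
      constructor
      · exact fun hz => hJ.1 hz
      · rintro (hz | rfl)
        · have : z ∈ J \ {x} := hXK ▸ hz
          exact this.1
        · exact hxJ
  · have hJX : J ⊆ X := fun z hz => (hJ.1 hz).resolve_right
      (fun h' => hxJ (by rw [Set.mem_singleton_iff] at h'; exact h' ▸ hz))
    have hJint : IsIntervalOn r X J :=
      ⟨hJX, fun v hv => hJ.2 v ⟨Or.inl hv.1, hv.2⟩⟩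
    rcases hind _ hJint with h0 | hs | hXJ
    · exact Or.inl h0
    · exact Or.inr (Or.inl hs)
    · exfalso
      have hxout : x ∈ (X ∪ {x}) \ J := ⟨Or.inr rfl, hxJ⟩
      have hintv : IsIntervalOn r X (X \ {u}) := by
        refine ⟨Set.diff_subset, fun v hv => ?_⟩
        have hvu : v = u := by
          by_contra h'
          exact hv.2 ⟨hv.1, h'⟩
        rw [hvu]
        rcases hJ.2 x hxout with hall | hall
        · left
          intro i hi
          have hiJ : i ∈ J := by rw [hXJ]; exact hi.1
          have hix : i ≠ x := fun h' => hxX (h' ▸ hi.1)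
          have h1 : ¬ r i x := aux_asym r h hix.symm (hall i hiJ)
          have h2 : ¬ r i u := fun h' => h1 ((hunif i hi.1 hi.2).mp h')
          exact aux_tot r h (fun h' => hi.2 h') h2
        · right
          intro i hi
          have hiJ : i ∈ J := by rw [hXJ]; exact hi.1
          exact (hunif i hi.1 hi.2).mpr (hall i hiJ)
      rcases hind _ hintv with h0 | ⟨a, ha⟩ | hXX
      · refine hX3 u u (fun z hz => ?_)
        have hz' : z ∉ (X \ {u} : Set V) := by simp [h0]
        have hzu : z = u := by
          by_contra h'
          exact hz' ⟨hz, h'⟩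
        simp [hzu]
      · refine hX3 u a (fun z hz => ?_)
        by_cases hzu : z = u
        · simp [hzu]
        · have : z ∈ X \ {u} := ⟨hz, hzu⟩
          rw [ha] at this
          simp [this]
      · have h' : u ∉ X \ {u} := fun hc => hc.2 rfl
        rw [hXX] at h'
        exact h' hu

end Aux

/-- For `u ∈ X`, `x ∈ X(u)` and `y ∈ V − (X ∪ X(u))`, if `T(X ∪ {x,y})`
is decomposable then `{u,x}` is an interval of `T(X ∪ {x,y})`. -/
theorem Xu_extension_interval {V : Type*} [Fintype V] (r : V → V → Prop) (X : Set V)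
    (h : IsTournament r) (hX : 3 ≤ X.ncard) (hind : IndecomposableOn r X)
    (u : V) (hu : u ∈ X) (x : V) (hx : x ∈ XuSet r X u)
    (y : V) (hy : y ∉ X ∪ XuSet r X u)
    (hdec : ¬ IndecomposableOn r (X ∪ {x, y})) :
    IsIntervalOn r (X ∪ {x, y}) {u, x} := by
  obtain ⟨hxX, hxIv⟩ := hx
  have hyX : y ∉ X := fun h' => hy (Or.inl h')
  have hyXu : y ∉ XuSet r X u := fun h' => hy (Or.inr h')
  have hxy : x ≠ y := fun h' => hyXu (h' ▸ ⟨hxX, hxIv⟩)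
  have hux : u ≠ x := fun h' => hxX (h' ▸ hu)
  have huy : u ≠ y := fun h' => hyX (h' ▸ hu)
  -- y relates uniformly to {u, x}
  have hyunif : (∀ i ∈ ({u, x} : Set V), r y i) ∨ (∀ i ∈ ({u, x} : Set V), r i y) := by
    by_contra hcon
    have hniff : ¬ (r y u ↔ r y x) := fun hiff =>
      hcon (aux_pair_unif r h huy.symm (Ne.symm hxy) hiff)
    have d : (r y u ∧ r x y) ∨ (r u y ∧ r y x) := by
      by_cases hyu : r y u
      · have hnyx : ¬ r y x := fun h' => hniff (iff_of_true hyu h')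
        exact Or.inl ⟨hyu, aux_tot r h (Ne.symm hxy) hnyx⟩
      · have hyx : r y x := by
          by_contra h'
          exact hniff (iff_of_false hyu h')
        exact Or.inr ⟨aux_tot r h huy.symm hyu, hyx⟩
    refine hdec (fun I hI => ?_)
    have hsub : X ∪ {x} ⊆ X ∪ {x, y} := Set.union_subset_union_right X (by simp)
    have hJ := aux_restrict r hsub hI
    have hIsub : ∀ z ∈ I, z ∈ I ∩ (X ∪ {x}) ∨ z = y := by
      intro z hz
      rcases hI.1 hz with hz' | hz' | hz'
      · exact Or.inl ⟨hz, Or.inl hz'⟩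
      · exact Or.inl ⟨hz, Or.inr hz'⟩
      · exact Or.inr hz'
    rcases aux_classify r h X hX hind u x hu hxX hxIv _ hJ with h0 | ⟨a, ha⟩ | huxJ | hallJ
    · -- I ⊆ {y}
      rcases (Set.subset_singleton_iff_eq.mp (fun z hz =>
          (hIsub z hz).resolve_left (fun h' => by
            rw [h0] at h'; exact absurd h' (Set.notMem_empty z)))) with h' | h'
      · exact Or.inl h'
      · exact Or.inr (Or.inl ⟨y, h'⟩)
    · -- I ∩ (X ∪ {x}) = {a}
      have haI : a ∈ I := (show a ∈ I ∩ (X ∪ {x}) from ha ▸ rfl).1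
      have haXx : a ∈ X ∪ {x} := (show a ∈ I ∩ (X ∪ {x}) from ha ▸ rfl).2
      have hIay : I ⊆ {a, y} := by
        intro z hz
        rcases hIsub z hz with h' | h'
        · rw [ha] at h'; exact Or.inl h'
        · exact Or.inr h'
      by_cases hyI : y ∈ I
      · have hay : a ≠ y := by
          rintro rfl
          rcases haXx with h' | h'
          · exact hyX h'
          · exact hxy h'.symm
        have hIeq : I = {a, y} := by
          refine Set.Subset.antisymm hIay ?_
          rintro z (rfl | hz)
          · exact haI
          · rw [Set.mem_singleton_iff] at hz; exact hz ▸ hyI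
        exfalso
        rcases haXx with haX | hax
        · -- a ∈ X
          by_cases hau : a = u
          · -- I = {u, y} : then y ∈ XuSet r X u
            rw [hau] at hIeq
            have hsub' : ({u, y} : Set V) ⊆ X ∪ {y} := by
              rintro z (rfl | hz)
              · exact Or.inl hu
              · exact Or.inr hz
            refine hyXu ⟨hyX, hsub', fun v hv => ?_⟩
            have hvu : v ≠ u := fun h' => hv.2 (by simp [h'])
            have hvy : v ≠ y := fun h' => hv.2 (by simp [h'])
            have hvX : v ∈ X := by
              rcases hv.1 with h' | h'
              · exact h'
              · exact absurd h' hvy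
            have hvI : v ∉ I := by rw [hIeq]; simp [hvu, hvy]
            have := hI.2 v ⟨Or.inl hvX, hvI⟩
            rw [hIeq] at this
            exact aux_pair_unif r h hvu hvy (aux_pair_iff r h hvu hvy this)
          · -- a ∈ X, a ≠ u : contradiction with d
            have hxa : x ≠ a := fun h' => hxX (h' ▸ haX)
            have hua : u ≠ a := fun h' => hau h'.symm
            have hxnI : x ∉ I := by rw [hIeq]; simp [hxa, hxy]
            have hunI : u ∉ I := by rw [hIeq]; simp [hua, huy]
            have hxiff : r x a ↔ r x y := by
              have := hI.2 x ⟨Or.inr (Or.inl rfl), hxnI⟩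
              rw [hIeq] at this
              exact aux_pair_iff r h hxa hxy this
            have huiff : r u a ↔ r u y := by
              have := hI.2 u ⟨Or.inl hu, hunI⟩
              rw [hIeq] at this
              exact aux_pair_iff r h hua huy this
            have hax' : a ≠ x := fun h' => hxa h'.symm
            have hau' : a ≠ u := hau
            have haiff : r a u ↔ r a x := by
              have := hxIv.2 a ⟨Or.inl haX, by simp [hau', hax']⟩
              exact aux_pair_iff r h hau' hax' this
            rcases d with ⟨hyu, hxy'⟩ | ⟨huy', hyx⟩
            · have h1 : r x a := hxiff.mpr hxy'
              have h2 : ¬ r u y := aux_asym r h huy.symm hyu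
              have h3 : ¬ r u a := fun h' => h2 (huiff.mp h')
              have h4 : r a u := aux_tot r h hua h3
              have h5 : r a x := haiff.mp h4
              exact aux_asym r h hxa h1 h5
            · have h1 : r u a := huiff.mpr huy'
              have h2 : ¬ r a u := aux_asym r h hua h1
              have h3 : ¬ r a x := fun h' => h2 (haiff.mpr h')
              have h4 : r x a := aux_tot r h (fun h' => hxa h'.symm) h3
              have h5 : r x y := hxiff.mp h4
              exact aux_asym r h hxy h5 hyx
        · -- a = x : I = {x, y}, then y ∈ XuSet r X u
          rw [Set.mem_singleton_iff] at hax
          rw [hax] at hIeq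
          have hsub' : ({u, y} : Set V) ⊆ X ∪ {y} := by
            rintro z (rfl | hz)
            · exact Or.inl hu
            · exact Or.inr hz
          refine hyXu ⟨hyX, hsub', fun v hv => ?_⟩
          have hvu : v ≠ u := fun h' => hv.2 (by simp [h'])
          have hvy : v ≠ y := fun h' => hv.2 (by simp [h'])
          have hvX : v ∈ X := by
            rcases hv.1 with h' | h'
            · exact h'
            · exact absurd h' hvy
          have hvx : v ≠ x := fun h' => hxX (h' ▸ hvX)
          have hvI : v ∉ I := by rw [hIeq]; simp [hvx, hvy]
          have h1 : r v x ↔ r v y := by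
            have := hI.2 v ⟨Or.inl hvX, hvI⟩
            rw [hIeq] at this
            exact aux_pair_iff r h hvx hvy this
          have h2 : r v u ↔ r v x := by
            have := hxIv.2 v ⟨Or.inl hvX, by simp [hvu, hvx]⟩
            exact aux_pair_iff r h hvu hvx this
          exact aux_pair_unif r h hvu hvy (h2.trans h1)
      · -- y ∉ I : I = {a}
        refine Or.inr (Or.inl ⟨a, Set.Subset.antisymm (fun z hz => ?_)
          (fun z hz => by rw [Set.mem_singleton_iff] at hz; exact hz ▸ haI)⟩)
        rcases hIay hz with h' | h'
        · exact h'
        · exact absurd (Set.mem_singleton_iff.mp h' ▸ hz) hyI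
    · -- I ∩ (X ∪ {x}) = {u, x}
      have huI : u ∈ I := (show u ∈ I ∩ (X ∪ {x}) from huxJ ▸ (by simp)).1
      have hxI' : x ∈ I := (show x ∈ I ∩ (X ∪ {x}) from huxJ ▸ (by simp)).1
      by_cases hyI : y ∈ I
      · -- I = {u, x, y} : then y ∈ XuSet r X u
        exfalso
        have hsub' : ({u, y} : Set V) ⊆ X ∪ {y} := by
          rintro z (rfl | hz)
          · exact Or.inl hu
          · exact Or.inr hz
        refine hyXu ⟨hyX, hsub', fun v hv => ?_⟩
        have hvu : v ≠ u := fun h' => hv.2 (by simp [h'])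
        have hvy : v ≠ y := fun h' => hv.2 (by simp [h'])
        have hvX : v ∈ X := by
          rcases hv.1 with h' | h'
          · exact h'
          · exact absurd h' hvy
        have hvx : v ≠ x := fun h' => hxX (h' ▸ hvX)
        have hvI : v ∉ I := by
          intro h'
          rcases hIsub v h' with h'' | h''
          · rw [huxJ] at h''
            rcases h'' with h'' | h''
            · exact hvu h''
            · exact hvx h''
          · exact hvy h''
        have hiff : r v u ↔ r v y := by
          rcases hI.2 v ⟨Or.inl hvX, hvI⟩ with h' | h'
          · exact iff_of_true (h' u huI) (h' y hyI)
          · exact iff_of_false (fun hc => aux_asym r h hvu hc (h' u huI))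
              (fun hc => aux_asym r h hvy hc (h' y hyI))
        exact aux_pair_unif r h hvu hvy hiff
      · -- I = {u, x} : y distinguishes, contradiction
        exfalso
        have hynI : y ∉ I := hyI
        rcases hI.2 y ⟨Or.inr (Or.inr rfl), hynI⟩ with h' | h'
        · have h1 : r y u := h' u huI
          have h2 : r y x := h' x hxI'
          rcases d with ⟨_, hxy'⟩ | ⟨huy', _⟩
          · exact aux_asym r h (Ne.symm hxy) h2 hxy'
          · exact aux_asym r h huy.symm h1 huy'
        · have h1 : r u y := h' u huI
          have h2 : r x y := h' x hxI'
          rcases d with ⟨hyu, _⟩ | ⟨_, hyx⟩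
          · exact aux_asym r h huy.symm hyu h1
          · exact aux_asym r h (Ne.symm hxy) hyx h2
    · -- I ∩ (X ∪ {x}) = X ∪ {x}
      have hXxI : X ∪ {x} ⊆ I := by
        intro z hz
        have h' : z ∈ I ∩ (X ∪ {x}) := by rw [hallJ]; exact hz
        exact h'.1
      by_cases hyI : y ∈ I
      · right; right
        refine Set.Subset.antisymm hI.1 (fun z hz => ?_)
        rcases hz with hz | hz | hz
        · exact hXxI (Or.inl hz)
        · exact hXxI (Or.inr hz)
        · exact hz ▸ hyI
      · exfalso
        have huI : u ∈ I := hXxI (Or.inl hu)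
        have hxI' : x ∈ I := hXxI (Or.inr rfl)
        rcases hI.2 y ⟨Or.inr (Or.inr rfl), hyI⟩ with h' | h'
        · have h1 : r y u := h' u huI
          have h2 : r y x := h' x hxI'
          rcases d with ⟨_, hxy'⟩ | ⟨huy', _⟩
          · exact aux_asym r h (Ne.symm hxy) h2 hxy'
          · exact aux_asym r h huy.symm h1 huy'
        · have h1 : r u y := h' u huI
          have h2 : r x y := h' x hxI'
          rcases d with ⟨hyu, _⟩ | ⟨_, hyx⟩
          · exact aux_asym r h huy.symm hyu h1
          · exact aux_asym r h (Ne.symm hxy) hyx h2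
  -- main conclusion
  refine ⟨fun z hz => ?_, fun z hz => ?_⟩
  · rcases hz with rfl | hz
    · exact Or.inl hu
    · rw [Set.mem_singleton_iff] at hz; exact hz ▸ Or.inr (Or.inl rfl)
  · obtain ⟨hz1, hz2⟩ := hz
    rcases hz1 with hzX | hzx | hzy
    · exact hxIv.2 z ⟨Or.inl hzX, hz2⟩
    · exact absurd (Or.inr hzx) hz2
    · exact hzy ▸ hyunif
end

section
/- Let T = (V,A) be a tournament and X ⊆ V with |X| ≥ 3 and T(X) indecomposable. For distinct x, y ∈ Ext(X), if T(X ∪ {x,y}) is decomposable, then {x,y} is an interval of T(X ∪ {x,y}). -/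
lemma interval_restrict' {V : Type*} (r : V → V → Prop) {S S' I : Set V}
    (hS' : S' ⊆ S) (hI : IsIntervalOn r S I) : IsIntervalOn r S' (I ∩ S') := by
  refine ⟨Set.inter_subset_right, fun z hz => ?_⟩
  have hzS : z ∈ S \ I := ⟨hS' hz.1, fun h => hz.2 ⟨h, hz.1⟩⟩
  rcases hI.2 z hzS with h | h
  · exact Or.inl fun i hi => h i hi.1
  · exact Or.inr fun i hi => h i hi.1

lemma not_X_interval' {V : Type*} (r : V → V → Prop) (X : Set V) (hX : 3 ≤ X.ncard)
    {y : V} (hy : y ∉ X) (hind : IndecomposableOn r (X ∪ {y})) :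
    ¬ IsIntervalOn r (X ∪ {y}) X := by
  intro h
  rcases hind X h with h1 | ⟨a, h1⟩ | h1
  · rw [h1, Set.ncard_empty] at hX; omega
  · rw [h1, Set.ncard_singleton] at hX; omega
  · exact hy (by rw [h1]; exact Set.mem_union_right X rfl)

/-- For distinct `x, y ∈ Ext(X)`, if `T(X ∪ {x,y})` is decomposable,
then `{x,y}` is an interval of `T(X ∪ {x,y})`. -/
theorem Ext_extension_interval {V : Type*} [Fintype V] (r : V → V → Prop) (X : Set V)
    (h : IsTournament r) (hX : 3 ≤ X.ncard) (hind : IndecomposableOn r X)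
    (x y : V) (hx : x ∈ ExtSet r X) (hy : y ∈ ExtSet r X) (hxy : x ≠ y)
    (hdec : ¬ IndecomposableOn r (X ∪ {x, y})) :
    IsIntervalOn r (X ∪ {x, y}) {x, y} := by
  obtain ⟨hxX, hxind⟩ := hx
  obtain ⟨hyX, hyind⟩ := hy
  rw [IndecomposableOn] at hdec
  push_neg at hdec
  obtain ⟨I, hI, hne, hns, hnf⟩ := hdec
  set S : Set V := X ∪ {x, y} with hS
  have hsx : X ∪ {x} ⊆ S := by
    apply Set.union_subset Set.subset_union_left
    intro z hz; rcases hz with rfl; exact Set.mem_union_right _ (Or.inl rfl)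
  have hsy : X ∪ {y} ⊆ S := by
    apply Set.union_subset Set.subset_union_left
    intro z hz; rcases hz with rfl; exact Set.mem_union_right _ (Or.inr rfl)
  have key : ∀ z w : V, w ∉ X → S = X ∪ {z, w} → w ≠ z →
      IndecomposableOn r (X ∪ {w}) →
      I ∩ (X ∪ {z}) ≠ X ∪ {z} := by
    intro z w hwX hSzw hwz hwind hfull
    have hXI : X ∪ {z} ⊆ I := by
      intro a ha
      have : a ∈ I ∩ (X ∪ {z}) := by rw [hfull]; exact ha
      exact this.1
    have hwS : w ∈ S := by rw [hSzw]; exact Set.mem_union_right _ (Or.inr rfl)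
    have hwI : w ∉ I := by
      intro hwI
      apply hnf
      apply Set.Subset.antisymm hI.1
      intro a ha
      have haS : a ∈ S := ha
      rw [hSzw] at haS
      rcases haS with ha1 | ha1
      · exact hXI (Or.inl ha1)
      · rcases ha1 with rfl | rfl
        · exact hXI (Or.inr rfl)
        · exact hwI
    have huni := hI.2 w ⟨hwS, hwI⟩
    apply not_X_interval' r X hX hwX hwind
    refine ⟨Set.subset_union_left, fun a ha => ?_⟩
    have haw : a = w := by
      rcases ha.1 with h1 | h1
      · exact absurd h1 ha.2
      · exact h1
    subst haw
    rcases huni with h1 | h1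
    · exact Or.inl fun i hi => h1 i (hXI (Or.inl hi))
    · exact Or.inr fun i hi => h1 i (hXI (Or.inl hi))
  -- both restrictions are subsingletons
  have hIx := interval_restrict' r hsx hI
  have hIy := interval_restrict' r hsy hI
  have hsub : ∀ (z w : V), w ∉ X → S = X ∪ {z, w} → w ≠ z →
      IndecomposableOn r (X ∪ {z}) → IndecomposableOn r (X ∪ {w}) →
      IsIntervalOn r (X ∪ {z}) (I ∩ (X ∪ {z})) →
      ∀ a b, a ∈ I → a ∈ X ∪ {z} → b ∈ I → b ∈ X ∪ {z} → a = b := by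
    intro z w hwX hSzw hwz hzind hwind hIz a b haI haz hbI hbz
    rcases hzind _ hIz with h1 | ⟨c, h1⟩ | h1
    · exact absurd (h1 ▸ (⟨haI, haz⟩ : a ∈ I ∩ (X ∪ {z}))) (Set.notMem_empty a)
    · have h2 : a ∈ ({c} : Set V) := h1 ▸ (⟨haI, haz⟩ : a ∈ I ∩ (X ∪ {z}))
      have h3 : b ∈ ({c} : Set V) := h1 ▸ (⟨hbI, hbz⟩ : b ∈ I ∩ (X ∪ {z}))
      rw [h2, h3]
    · exact absurd h1 (key z w hwX hSzw hwz hwind)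
  have hSxy : S = X ∪ {x, y} := rfl
  have hSyx : S = X ∪ {y, x} := by rw [hSxy, Set.pair_comm]
  have hsubx := hsub x y hyX hSxy (Ne.symm hxy) hxind hyind hIx
  have hsuby := hsub y x hxX hSyx hxy hyind hxind hIy
  -- I contains no element of X
  have hIX : ∀ a, a ∈ I → a ∉ X := by
    intro a haI haX
    apply hns a
    apply Set.Subset.antisymm
    · intro w hwI
      have hwS : w ∈ S := hI.1 hwI
      rcases hwS with h1 | h1
      · exact hsubx w a hwI (Or.inl h1) haI (Or.inl haX)
      · rcases h1 with rfl | rfl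
        · exact hsubx w a hwI (Or.inr rfl) haI (Or.inl haX)
        · exact hsuby w a hwI (Or.inr rfl) haI (Or.inl haX)
    · intro w hw; rcases hw with rfl; exact haI
  -- extract two distinct elements of I
  obtain ⟨u, huI⟩ := hne
  have hv : ∃ v ∈ I, v ≠ u := by
    by_contra hc
    push_neg at hc
    exact hns u (Set.Subset.antisymm (fun w hw => hc w hw)
      (fun w hw => by rcases hw with rfl; exact huI))
  obtain ⟨v, hvI, hvu⟩ := hv
  have hmem : ∀ a, a ∈ I → a = x ∨ a = y := by
    intro a haI
    have : a ∈ S := hI.1 haI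
    rcases this with h1 | h1
    · exact absurd h1 (hIX a haI)
    · rcases h1 with rfl | rfl
      · exact Or.inl rfl
      · exact Or.inr rfl
  have hIeq : I = {x, y} := by
    apply Set.Subset.antisymm
    · intro a haI
      rcases hmem a haI with rfl | rfl
      · exact Or.inl rfl
      · exact Or.inr rfl
    · rcases hmem u huI with rfl | rfl <;> rcases hmem v hvI with rfl | rfl
      · exact absurd rfl hvu
      · intro a ha; rcases ha with rfl | rfl
        · exact huI
        · exact hvI
      · intro a ha; rcases ha with rfl | rfl
        · exact hvI
        · exact huI
      · exact absurd rfl hvu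
  rw [← hIeq]
  exact hI
end

section
/- Let T = (V,A) be an indecomposable tournament and X ⊆ V with |X| ≥ 3, |V − X| ≥ 2, and T(X) indecomposable. Then there exist distinct x, y ∈ V − X such that T(X ∪ {x,y}) is indecomposable. -/
section ER
variable {V : Type*} {r : V → V → Prop} {X : Set V}

def UnifOn (r : V → V → Prop) (z : V) (I : Set V) : Prop :=
  (∀ i ∈ I, r z i) ∨ (∀ i ∈ I, r i z)

lemma tourn_asym (h : IsTournament r) {a b : V} (hab : a ≠ b) (hr : r a b) : ¬ r b a :=
  (h.2 a b hab).mp hr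

lemma tourn_total (h : IsTournament r) {a b : V} (hab : a ≠ b) (hr : ¬ r a b) : r b a := by
  by_contra h'
  exact hr ((h.2 a b hab).mpr h')

lemma unifOn_mono {z : V} {I J : Set V} (hz : UnifOn r z I) (hJI : J ⊆ I) : UnifOn r z J := by
  rcases hz with h' | h'
  · exact Or.inl fun i hi => h' i (hJI hi)
  · exact Or.inr fun i hi => h' i (hJI hi)

lemma unif_pair_iff (h : IsTournament r) {z a b : V} (hza : z ≠ a) (hzb : z ≠ b)
    (hu : UnifOn r z {a, b}) : r z a ↔ r z b := by
  rcases hu with h' | h'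
  · exact iff_of_true (h' a (by simp)) (h' b (by simp))
  · exact iff_of_false (fun hh => tourn_asym h hza hh (h' a (by simp)))
      (fun hh => tourn_asym h hzb hh (h' b (by simp)))

lemma unif_pair_of_iff (h : IsTournament r) {z a b : V} (hza : z ≠ a) (hzb : z ≠ b)
    (hiff : r z a ↔ r z b) : UnifOn r z {a, b} := by
  by_cases hr : r z a
  · left; intro i hi
    simp only [Set.mem_insert_iff, Set.mem_singleton_iff] at hi
    rcases hi with rfl | rfl
    · exact hr
    · exact hiff.mp hr
  · right; intro i hi
    simp only [Set.mem_insert_iff, Set.mem_singleton_iff] at hi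
    rcases hi with rfl | rfl
    · exact tourn_total h hza hr
    · exact tourn_total h hzb fun hh => hr (hiff.mpr hh)

lemma interval_inter {S Y I : Set V} (hI : IsIntervalOn r S I) (hYS : Y ⊆ S) :
    IsIntervalOn r Y (I ∩ Y) := by
  refine ⟨Set.inter_subset_right, fun z hz => ?_⟩
  have hz1 : z ∈ Y := hz.1
  have hz2 : z ∉ I := fun h' => hz.2 ⟨h', hz1⟩
  rcases hI.2 z ⟨hYS hz1, hz2⟩ with h' | h'
  · exact Or.inl fun i hi => h' i hi.1
  · exact Or.inr fun i hi => h' i hi.1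

lemma xuSet_iff (h : IsTournament r) {u p w : V} (hu : u ∈ X) (hp : p ∈ XuSet r X u)
    (hw : w ∈ X) (hwu : w ≠ u) : r w p ↔ r w u := by
  have hwp : w ≠ p := fun hh => hp.1 (hh ▸ hw)
  have hmem : w ∈ (X ∪ {p}) \ ({u, p} : Set V) := by
    refine ⟨Or.inl hw, ?_⟩
    simp only [Set.mem_insert_iff, Set.mem_singleton_iff, not_or]
    exact ⟨hwu, hwp⟩
  have hun : UnifOn r w {u, p} := hp.2.2 w hmem
  exact (unif_pair_iff h hwu hwp hun).symm

lemma exists_pair_of_nontrivial {I : Set V} (hne : I ≠ ∅) (hsing : ∀ a, I ≠ {a}) :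
    ∃ a ∈ I, ∃ b ∈ I, a ≠ b := by
  obtain ⟨a, ha⟩ := Set.nonempty_iff_ne_empty.mpr hne
  by_contra hcon
  push_neg at hcon
  exact hsing a (Set.eq_singleton_iff_unique_mem.mpr ⟨ha, fun b hb => hcon b hb a ha⟩)

lemma exists_nontrivial_interval {S : Set V} (hdec : ¬ IndecomposableOn r S) :
    ∃ I, IsIntervalOn r S I ∧ I ≠ ∅ ∧ (∀ a, I ≠ {a}) ∧ I ≠ S := by
  unfold IndecomposableOn at hdec
  push_neg at hdec
  obtain ⟨I, hI, hnt⟩ := hdec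
  exact ⟨I, hI, Set.nonempty_iff_ne_empty.mp hnt.1, hnt.2.1, hnt.2.2⟩


lemma three_elts {V' : Type*} (X' : Set V') (hfin : X'.Finite) (hX : 3 ≤ X'.ncard) :
    ∃ a ∈ X', ∃ b ∈ X', ∃ c ∈ X', a ≠ b ∧ a ≠ c ∧ b ≠ c := by
  have h1 : X'.Nonempty := by rw [← Set.ncard_pos hfin]; omega
  obtain ⟨a, ha⟩ := h1
  obtain ⟨b, hb, hba⟩ := Set.exists_ne_of_one_lt_ncard (s := X') (by omega) a
  have hd : (X' \ {a, b}).Nonempty := by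
    rw [← Set.ncard_pos hfin.diff]
    have h0 := Set.ncard_diff (s := ({a, b} : Set V')) (t := X')
      (Set.insert_subset ha (Set.singleton_subset_iff.mpr hb)) (Set.toFinite _)
    have h2 : ({a, b} : Set V').ncard ≤ 2 := (Set.ncard_insert_le _ _).trans (by simp)
    rw [h0]; omega
  obtain ⟨c, hc⟩ := hd
  have hc2 : c ∉ ({a, b} : Set V') := hc.2
  simp only [Set.mem_insert_iff, Set.mem_singleton_iff, not_or] at hc2
  exact ⟨a, ha, b, hb, c, hc.1, hba.symm, Ne.symm hc2.1, Ne.symm hc2.2⟩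

lemma two_ne_of_three (h3 : ∃ a ∈ X, ∃ b ∈ X, ∃ c ∈ X, a ≠ b ∧ a ≠ c ∧ b ≠ c) (u : V) :
    ∃ a ∈ X, ∃ b ∈ X, a ≠ b ∧ a ≠ u ∧ b ≠ u := by
  obtain ⟨a, ha, b, hb, c, hc, hab, hac, hbc⟩ := h3
  by_cases hau : a = u
  · subst hau
    exact ⟨b, hb, c, hc, hbc, Ne.symm hab, Ne.symm hac⟩
  by_cases hbu : b = u
  · subst hbu
    exact ⟨a, ha, c, hc, hac, hab, Ne.symm hbc⟩
  exact ⟨a, ha, b, hb, hab, hau, hbu⟩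

lemma third_ne (h3 : ∃ a ∈ X, ∃ b ∈ X, ∃ c ∈ X, a ≠ b ∧ a ≠ c ∧ b ≠ c) (u v : V) :
    ∃ w ∈ X, w ≠ u ∧ w ≠ v := by
  obtain ⟨a, ha, b, hb, c, hc, hab, hac, hbc⟩ := h3
  by_cases h1 : a ≠ u ∧ a ≠ v
  · exact ⟨a, ha, h1.1, h1.2⟩
  by_cases h2 : b ≠ u ∧ b ≠ v
  · exact ⟨b, hb, h2.1, h2.2⟩
  by_cases h4 : c ≠ u ∧ c ≠ v
  · exact ⟨c, hc, h4.1, h4.2⟩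
  exfalso
  push_neg at h1 h2 h4
  by_cases hau : a = u
  · by_cases hbu : b = u
    · exact hab (hau.trans hbu.symm)
    · have hbv := h2 hbu
      by_cases hcu : c = u
      · exact hac (hau.trans hcu.symm)
      · exact hbc (hbv.trans (h4 hcu).symm)
  · have hav := h1 hau
    by_cases hbu : b = u
    · by_cases hcu : c = u
      · exact hbc (hbu.trans hcu.symm)
      · exact hac (hav.trans (h4 hcu).symm)
    · exact hab (hav.trans (h2 hbu).symm)

lemma not_ext_br (h3 : ∃ a ∈ X, ∃ b ∈ X, ∃ c ∈ X, a ≠ b ∧ a ≠ c ∧ b ≠ c)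
    {x : V} (hE : x ∈ ExtSet r X) (hB : x ∈ BrSet r X) : False := by
  obtain ⟨a, ha, b, hb, _, _, hab, _, _⟩ := h3
  have hXI : IsIntervalOn r (X ∪ {x}) X := by
    refine ⟨Set.subset_union_left, fun z hz => ?_⟩
    have hzx : z = x := by
      rcases hz.1 with h' | h'
      · exact absurd h' hz.2
      · simpa using h'
    subst hzx
    exact hB.2
  rcases hE.2 X hXI with h' | ⟨a', h'⟩ | h'
  · rw [h'] at ha; exact ha
  · rw [h'] at ha hb
    simp only [Set.mem_singleton_iff] at ha hb
    exact hab (ha.trans hb.symm)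
  · have : x ∈ X := by rw [h']; exact Or.inr rfl
    exact hE.1 this

lemma not_ext_xu (h3 : ∃ a ∈ X, ∃ b ∈ X, ∃ c ∈ X, a ≠ b ∧ a ≠ c ∧ b ≠ c)
    {x u : V} (hu : u ∈ X) (hE : x ∈ ExtSet r X) (hXu : x ∈ XuSet r X u) : False := by
  rcases hE.2 {u, x} hXu.2 with h' | ⟨a, h'⟩ | h'
  · have : u ∈ ({u, x} : Set V) := by simp
    rw [h'] at this; exact this
  · have hu' : u = a := by
      have : u ∈ ({u, x} : Set V) := by simp
      rw [h'] at this; simpa using this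
    have hx' : x = a := by
      have : x ∈ ({u, x} : Set V) := by simp
      rw [h'] at this; simpa using this
    have : x ∈ X := by rw [hx'.trans hu'.symm]; exact hu
    exact hE.1 this
  · obtain ⟨b, hbX, hbu, _⟩ := third_ne h3 u u
    have : b ∈ ({u, x} : Set V) := by rw [h']; exact Or.inl hbX
    simp only [Set.mem_insert_iff, Set.mem_singleton_iff] at this
    rcases this with rfl | rfl
    · exact hbu rfl
    · exact hE.1 hbX

lemma not_br_xu (h : IsTournament r) (hind : IndecomposableOn r X)
    (h3 : ∃ a ∈ X, ∃ b ∈ X, ∃ c ∈ X, a ≠ b ∧ a ≠ c ∧ b ≠ c)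
    {x u : V} (hu : u ∈ X) (hB : x ∈ BrSet r X) (hXu : x ∈ XuSet r X u) : False := by
  obtain ⟨a, haX, b, hbX, hab, hau, hbu⟩ := two_ne_of_three h3 u
  have hint : IsIntervalOn r X (X \ {u}) := by
    refine ⟨Set.diff_subset, fun z hz => ?_⟩
    have hzu : z = u := by
      have h5 := hz.2
      simp only [Set.mem_diff, Set.mem_singleton_iff, not_and, not_not] at h5
      exact h5 hz.1
    rw [hzu]
    rcases hB.2 with hd | hd
    · left
      intro w hw
      have hwX : w ∈ X := hw.1
      have hwu : w ≠ u := by simpa using hw.2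
      have hwx : w ≠ x := fun hh => hB.1 (hh ▸ hwX)
      have hwm : w ∈ (X ∪ {x}) \ ({u, x} : Set V) := by
        refine ⟨Or.inl hwX, ?_⟩
        simp only [Set.mem_insert_iff, Set.mem_singleton_iff, not_or]
        exact ⟨hwu, hwx⟩
      rcases hXu.2.2 w hwm with h' | h'
      · exact absurd (hd w hwX) (tourn_asym h hwx (h' x (by simp)))
      · exact h' u (by simp)
    · right
      intro w hw
      have hwX : w ∈ X := hw.1
      have hwu : w ≠ u := by simpa using hw.2
      have hwx : w ≠ x := fun hh => hB.1 (hh ▸ hwX)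
      have hwm : w ∈ (X ∪ {x}) \ ({u, x} : Set V) := by
        refine ⟨Or.inl hwX, ?_⟩
        simp only [Set.mem_insert_iff, Set.mem_singleton_iff, not_or]
        exact ⟨hwu, hwx⟩
      rcases hXu.2.2 w hwm with h' | h'
      · exact h' u (by simp)
      · exact absurd (hd w hwX) (tourn_asym h hwx.symm (h' x (by simp)))
  rcases hind _ hint with h' | ⟨a', h'⟩ | h'
  · have : a ∈ X \ {u} := ⟨haX, by simpa using hau⟩
    rw [h'] at this; exact this
  · have e1 : a = a' := by
      have : a ∈ X \ {u} := ⟨haX, by simpa using hau⟩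
      rw [h'] at this; simpa using this
    have e2 : b = a' := by
      have : b ∈ X \ {u} := ⟨hbX, by simpa using hbu⟩
      rw [h'] at this; simpa using this
    exact hab (e1.trans e2.symm)
  · have : u ∈ X \ {u} := by rw [h']; exact hu
    simp at this

lemma not_xu_xu (h : IsTournament r) (hind : IndecomposableOn r X)
    (h3 : ∃ a ∈ X, ∃ b ∈ X, ∃ c ∈ X, a ≠ b ∧ a ≠ c ∧ b ≠ c)
    {x u v : V} (hu : u ∈ X) (hv : v ∈ X) (huv : u ≠ v)
    (h1 : x ∈ XuSet r X u) (h2 : x ∈ XuSet r X v) : False := by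
  have hint : IsIntervalOn r X {u, v} := by
    refine ⟨?_, fun z hz => ?_⟩
    · intro t ht
      simp only [Set.mem_insert_iff, Set.mem_singleton_iff] at ht
      rcases ht with rfl | rfl
      · exact hu
      · exact hv
    · have hzX : z ∈ X := hz.1
      have hz2 : z ≠ u ∧ z ≠ v := by
        have h5 := hz.2
        simp only [Set.mem_insert_iff, Set.mem_singleton_iff, not_or] at h5
        exact h5
      have i1 : r z u ↔ r z x := (xuSet_iff h hu h1 hzX hz2.1).symm
      have i2 : r z x ↔ r z v := xuSet_iff h hv h2 hzX hz2.2
      exact unif_pair_of_iff h hz2.1 hz2.2 (i1.trans i2)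
  rcases hind _ hint with h' | ⟨a, h'⟩ | h'
  · have : u ∈ ({u, v} : Set V) := by simp
    rw [h'] at this; exact this
  · have e1 : u = a := by
      have : u ∈ ({u, v} : Set V) := by simp
      rw [h'] at this; simpa using this
    have e2 : v = a := by
      have : v ∈ ({u, v} : Set V) := by simp
      rw [h'] at this; simpa using this
    exact huv (e1.trans e2.symm)
  · obtain ⟨w, hwX, hwu, hwv⟩ := third_ne h3 u v
    have : w ∈ ({u, v} : Set V) := by rw [h']; exact hwX
    simp only [Set.mem_insert_iff, Set.mem_singleton_iff] at this
    tauto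

lemma er_partition (hind : IndecomposableOn r X) {z : V} (hz : z ∉ X) :
    z ∈ ExtSet r X ∨ z ∈ BrSet r X ∨ ∃ u ∈ X, z ∈ XuSet r X u := by
  by_cases hE : IndecomposableOn r (X ∪ {z})
  · exact Or.inl ⟨hz, hE⟩
  obtain ⟨I, hI, hne, hsing, hfull⟩ := exists_nontrivial_interval hE
  rcases hind (I ∩ X) (interval_inter hI Set.subset_union_left) with h0 | ⟨a, ha⟩ | hXX
  · obtain ⟨a, haI, b, hbI, hab⟩ := exists_pair_of_nontrivial hne hsing
    have hsub : ∀ w ∈ I, w = z := by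
      intro w hw
      rcases hI.1 hw with h' | h'
      · exfalso
        have : w ∈ I ∩ X := ⟨hw, h'⟩
        rw [h0] at this; exact this
      · simpa using h'
    exact absurd ((hsub a haI).trans (hsub b hbI).symm) hab
  · have haIX : a ∈ I ∩ X := by rw [ha]; rfl
    by_cases hzI : z ∈ I
    · right; right
      refine ⟨a, haIX.2, hz, ?_⟩
      have hIeq : I = {a, z} := by
        apply Set.Subset.antisymm
        · intro w hw
          rcases hI.1 hw with h' | h'
          · have : w ∈ I ∩ X := ⟨hw, h'⟩
            rw [ha] at this
            exact Or.inl this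
          · exact Or.inr h'
        · intro w hw
          simp only [Set.mem_insert_iff, Set.mem_singleton_iff] at hw
          rcases hw with rfl | rfl
          · exact haIX.1
          · exact hzI
      rw [← hIeq]; exact hI
    · have : I = {a} := by
        apply Set.Subset.antisymm
        · intro w hw
          rcases hI.1 hw with h' | h'
          · have : w ∈ I ∩ X := ⟨hw, h'⟩
            rw [ha] at this; exact this
          · exact absurd (by simpa using h' : w = z) (fun hh => hzI (hh ▸ hw))
        · intro w hw
          simp only [Set.mem_singleton_iff] at hw
          subst hw; exact haIX.1
      exact absurd this (hsing a)
  · have hXI : X ⊆ I := fun w hw => by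
      have : w ∈ I ∩ X := by rw [hXX]; exact hw
      exact this.1
    by_cases hzI : z ∈ I
    · refine absurd (Set.Subset.antisymm hI.1 (fun w hw => ?_)) hfull
      rcases hw with h' | h'
      · exact hXI h'
      · simp only [Set.mem_singleton_iff] at h'
        subst h'; exact hzI
    · have hIeq : I = X := by
        apply Set.Subset.antisymm
        · intro w hw
          rcases hI.1 hw with h' | h'
          · exact h'
          · exact absurd (by simpa using h' : w = z) (fun hh => hzI (hh ▸ hw))
        · exact hXI
      right; left
      refine ⟨hz, ?_⟩
      have hm : z ∈ (X ∪ {z}) \ I := ⟨Or.inr rfl, hzI⟩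
      have := hI.2 z hm
      rw [hIeq] at this
      exact this

lemma pp_calc {a1 a2 a3 a4 a5 a6 a7 a8 : Prop}
    (f1 : a1 ↔ a2) (f2 : a3 ↔ a4) (n1 : a4 ↔ ¬a2) (n2 : a1 ↔ ¬a8)
    (n3 : a3 ↔ ¬a6) (n4 : a7 ↔ ¬a5) (hd : (a5 ↔ a6) ∨ (a7 ↔ a8)) : a5 ↔ a6 := by
  tauto

lemma master (hind : IndecomposableOn r X)
    {x y : V} (hx : x ∉ X) (hy : y ∉ X) (hxy : x ≠ y)
    (hdec : ¬ IndecomposableOn r (X ∪ {x, y})) :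
    (UnifOn r x X ∧ UnifOn r y X)
    ∨ UnifOn r y (X ∪ {x})
    ∨ UnifOn r x (X ∪ {y})
    ∨ (∃ a ∈ X, x ∈ XuSet r X a ∧ UnifOn r y {a, x})
    ∨ (∃ a ∈ X, y ∈ XuSet r X a ∧ UnifOn r x {a, y})
    ∨ (∃ a ∈ X, x ∈ XuSet r X a ∧ y ∈ XuSet r X a)
    ∨ (∀ w ∈ X, UnifOn r w {x, y}) := by
  obtain ⟨I, hI, hne, hsing, hfull⟩ := exists_nontrivial_interval hdec
  have hSx : X ∪ {x} ⊆ X ∪ ({x, y} : Set V) := by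
    apply Set.union_subset_union_right
    intro t ht
    simp only [Set.mem_singleton_iff] at ht
    subst ht; simp
  have hSy : X ∪ {y} ⊆ X ∪ ({x, y} : Set V) := by
    apply Set.union_subset_union_right
    intro t ht
    simp only [Set.mem_singleton_iff] at ht
    subst ht; simp
  have hmemI : ∀ w ∈ I, w ∈ X ∨ w = x ∨ w = y := by
    intro w hw
    rcases hI.1 hw with h' | h'
    · exact Or.inl h'
    · simp only [Set.mem_insert_iff, Set.mem_singleton_iff] at h'
      exact Or.inr h'
  have hxyS : x ∈ X ∪ ({x, y} : Set V) := Or.inr (by simp)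
  have hyS : y ∈ X ∪ ({x, y} : Set V) := Or.inr (by simp)
  rcases hind (I ∩ X) (interval_inter hI Set.subset_union_left) with h0 | ⟨a, ha⟩ | hXX
  · -- I ∩ X = ∅, so I = {x, y}
    have hnX : ∀ w ∈ I, w ∉ X := by
      intro w hw hwX
      have : w ∈ I ∩ X := ⟨hw, hwX⟩
      rw [h0] at this; exact this
    obtain ⟨a, haI, b, hbI, hab⟩ := exists_pair_of_nontrivial hne hsing
    have hxyI : x ∈ I ∧ y ∈ I := by
      have ha' : a = x ∨ a = y := (hmemI a haI).resolve_left (hnX a haI)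
      have hb' : b = x ∨ b = y := (hmemI b hbI).resolve_left (hnX b hbI)
      rcases ha' with rfl | rfl <;> rcases hb' with rfl | rfl
      · exact absurd rfl hab
      · exact ⟨haI, hbI⟩
      · exact ⟨hbI, haI⟩
      · exact absurd rfl hab
    have hIeq : I = {x, y} := by
      apply Set.Subset.antisymm
      · intro w hw
        rcases hmemI w hw with h' | h' | h'
        · exact absurd h' (hnX w hw)
        · exact Or.inl h'
        · exact Or.inr h'
      · intro w hw
        simp only [Set.mem_insert_iff, Set.mem_singleton_iff] at hw
        rcases hw with rfl | rfl
        · exact hxyI.1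
        · exact hxyI.2
    refine Or.inr (Or.inr (Or.inr (Or.inr (Or.inr (Or.inr fun w hwX => ?_)))))
    have hwI : w ∉ I := fun hh => hnX w hh hwX
    have := hI.2 w ⟨Or.inl hwX, hwI⟩
    rw [hIeq] at this
    exact this
  · -- I ∩ X = {a}
    have haIX : a ∈ I ∩ X := by rw [ha]; rfl
    have haI := haIX.1
    have haX := haIX.2
    have honly : ∀ w ∈ I, w ∈ X → w = a := by
      intro w hw hwX
      have : w ∈ I ∩ X := ⟨hw, hwX⟩
      rw [ha] at this; exact this
    by_cases hxI : x ∈ I <;> by_cases hyI : y ∈ I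
    · -- both in I : D6
      have e1 : I ∩ (X ∪ {x}) = {a, x} := by
        apply Set.Subset.antisymm
        · rintro w ⟨hw, hw2⟩
          rcases hw2 with h' | h'
          · exact Or.inl (honly w hw h')
          · exact Or.inr h'
        · intro w hw
          simp only [Set.mem_insert_iff, Set.mem_singleton_iff] at hw
          rcases hw with rfl | rfl
          · exact ⟨haI, Or.inl haX⟩
          · exact ⟨hxI, Or.inr rfl⟩
      have e2 : I ∩ (X ∪ {y}) = {a, y} := by
        apply Set.Subset.antisymm
        · rintro w ⟨hw, hw2⟩
          rcases hw2 with h' | h'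
          · exact Or.inl (honly w hw h')
          · exact Or.inr h'
        · intro w hw
          simp only [Set.mem_insert_iff, Set.mem_singleton_iff] at hw
          rcases hw with rfl | rfl
          · exact ⟨haI, Or.inl haX⟩
          · exact ⟨hyI, Or.inr rfl⟩
      have j1 : IsIntervalOn r (X ∪ {x}) {a, x} := by
        have := interval_inter hI hSx
        rwa [e1] at this
      have j2 : IsIntervalOn r (X ∪ {y}) {a, y} := by
        have := interval_inter hI hSy
        rwa [e2] at this
      exact Or.inr (Or.inr (Or.inr (Or.inr (Or.inr (Or.inl ⟨a, haX, ⟨hx, j1⟩, ⟨hy, j2⟩⟩)))))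
    · -- x only : D4
      have hIeq : I = {a, x} := by
        apply Set.Subset.antisymm
        · intro w hw
          rcases hmemI w hw with h' | h' | h'
          · exact Or.inl (honly w hw h')
          · exact Or.inr h'
          · exact absurd (h' ▸ hw) hyI
        · intro w hw
          simp only [Set.mem_insert_iff, Set.mem_singleton_iff] at hw
          rcases hw with rfl | rfl
          · exact haI
          · exact hxI
      have j1 : IsIntervalOn r (X ∪ {x}) {a, x} := by
        have := interval_inter hI hSx
        have e : I ∩ (X ∪ {x}) = {a, x} := by
          rw [hIeq]
          apply Set.inter_eq_self_of_subset_left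
          intro w hw
          simp only [Set.mem_insert_iff, Set.mem_singleton_iff] at hw
          rcases hw with rfl | rfl
          · exact Or.inl haX
          · exact Or.inr rfl
        rwa [e] at this
      have hu : UnifOn r y {a, x} := by
        have := hI.2 y ⟨hyS, hyI⟩
        rwa [hIeq] at this
      exact Or.inr (Or.inr (Or.inr (Or.inl ⟨a, haX, ⟨hx, j1⟩, hu⟩)))
    · -- y only : D5
      have hIeq : I = {a, y} := by
        apply Set.Subset.antisymm
        · intro w hw
          rcases hmemI w hw with h' | h' | h'
          · exact Or.inl (honly w hw h')
          · exact absurd (h' ▸ hw) hxI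
          · exact Or.inr h'
        · intro w hw
          simp only [Set.mem_insert_iff, Set.mem_singleton_iff] at hw
          rcases hw with rfl | rfl
          · exact haI
          · exact hyI
      have j1 : IsIntervalOn r (X ∪ {y}) {a, y} := by
        have := interval_inter hI hSy
        have e : I ∩ (X ∪ {y}) = {a, y} := by
          rw [hIeq]
          apply Set.inter_eq_self_of_subset_left
          intro w hw
          simp only [Set.mem_insert_iff, Set.mem_singleton_iff] at hw
          rcases hw with rfl | rfl
          · exact Or.inl haX
          · exact Or.inr rfl
        rwa [e] at this
      have hu : UnifOn r x {a, y} := by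
        have := hI.2 x ⟨hxyS, hxI⟩
        rwa [hIeq] at this
      exact Or.inr (Or.inr (Or.inr (Or.inr (Or.inl ⟨a, haX, ⟨hy, j1⟩, hu⟩))))
    · -- neither : I = {a}, contradiction
      exfalso
      refine hsing a (Set.Subset.antisymm (fun w hw => ?_) ?_)
      · rcases hmemI w hw with h' | h' | h'
        · exact honly w hw h'
        · exact absurd (h' ▸ hw) hxI
        · exact absurd (h' ▸ hw) hyI
      · intro w hw
        simp only [Set.mem_singleton_iff] at hw
        subst hw; exact haI
  · -- I ∩ X = X
    have hXI : X ⊆ I := by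
      intro w hw
      have : w ∈ I ∩ X := by rw [hXX]; exact hw
      exact this.1
    by_cases hxI : x ∈ I <;> by_cases hyI : y ∈ I
    · exfalso
      refine hfull (Set.Subset.antisymm hI.1 (fun w hw => ?_))
      rcases hw with h' | h'
      · exact hXI h'
      · simp only [Set.mem_insert_iff, Set.mem_singleton_iff] at h'
        rcases h' with rfl | rfl
        · exact hxI
        · exact hyI
    · -- I = X ∪ {x} : D2
      have hIeq : I = X ∪ {x} := by
        apply Set.Subset.antisymm
        · intro w hw
          rcases hmemI w hw with h' | h' | h'
          · exact Or.inl h'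
          · exact Or.inr (by simpa using h')
          · exact absurd (h' ▸ hw) hyI
        · exact Set.union_subset hXI (by simpa using hxI)
      have := hI.2 y ⟨hyS, hyI⟩
      rw [hIeq] at this
      exact Or.inr (Or.inl this)
    · -- I = X ∪ {y} : D3
      have hIeq : I = X ∪ {y} := by
        apply Set.Subset.antisymm
        · intro w hw
          rcases hmemI w hw with h' | h' | h'
          · exact Or.inl h'
          · exact absurd (h' ▸ hw) hxI
          · exact Or.inr (by simpa using h')
        · exact Set.union_subset hXI (by simpa using hyI)
      have := hI.2 x ⟨hxyS, hxI⟩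
      rw [hIeq] at this
      exact Or.inr (Or.inr (Or.inl this))
    · -- I = X : D1
      have hIeq : I = X := by
        apply Set.Subset.antisymm
        · intro w hw
          rcases hmemI w hw with h' | h' | h'
          · exact h'
          · exact absurd (h' ▸ hw) hxI
          · exact absurd (h' ▸ hw) hyI
        · exact hXI
      have u1 := hI.2 x ⟨hxyS, hxI⟩
      have u2 := hI.2 y ⟨hyS, hyI⟩
      rw [hIeq] at u1 u2
      exact Or.inl ⟨u1, u2⟩

variable (h3e : ∃ a ∈ X, ∃ b ∈ X, ∃ c ∈ X, a ≠ b ∧ a ≠ c ∧ b ≠ c)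

lemma pl_EE (h : IsTournament r) (hind : IndecomposableOn r X)
    (h3 : ∃ a ∈ X, ∃ b ∈ X, ∃ c ∈ X, a ≠ b ∧ a ≠ c ∧ b ≠ c)
    {x y : V} (hxE : x ∈ ExtSet r X) (hyE : y ∈ ExtSet r X) (hxy : x ≠ y)
    (hdec : ¬ IndecomposableOn r (X ∪ {x, y})) :
    ∀ w ∈ X, (r w x ↔ r w y) := by
  rcases master hind hxE.1 hyE.1 hxy hdec with
    D1 | D2 | D3 | ⟨a, haX, hxu, -⟩ | ⟨a, haX, hyu, -⟩ | ⟨a, haX, hxu, -⟩ | D7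
  · exact (not_ext_br h3 hxE ⟨hxE.1, D1.1⟩).elim
  · exact (not_ext_br h3 hyE ⟨hyE.1, unifOn_mono D2 Set.subset_union_left⟩).elim
  · exact (not_ext_br h3 hxE ⟨hxE.1, unifOn_mono D3 Set.subset_union_left⟩).elim
  · exact (not_ext_xu h3 haX hxE hxu).elim
  · exact (not_ext_xu h3 haX hyE hyu).elim
  · exact (not_ext_xu h3 haX hxE hxu).elim
  · intro w hw
    have hwx : w ≠ x := fun hh => hxE.1 (hh ▸ hw)
    have hwy : w ≠ y := fun hh => hyE.1 (hh ▸ hw)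
    exact unif_pair_iff h hwx hwy (D7 w hw)

lemma pl_EB (h : IsTournament r) (hind : IndecomposableOn r X)
    (h3 : ∃ a ∈ X, ∃ b ∈ X, ∃ c ∈ X, a ≠ b ∧ a ≠ c ∧ b ≠ c)
    {x y : V} (hxE : x ∈ ExtSet r X) (hyB : y ∈ BrSet r X) (hxy : x ≠ y)
    (hdec : ¬ IndecomposableOn r (X ∪ {x, y})) :
    ∀ w ∈ X, (r y x ↔ r y w) := by
  rcases master hind hxE.1 hyB.1 hxy hdec with
    D1 | D2 | D3 | ⟨a, haX, hxu, -⟩ | ⟨a, haX, hyu, -⟩ | ⟨a, haX, hxu, -⟩ | D7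
  · exact (not_ext_br h3 hxE ⟨hxE.1, D1.1⟩).elim
  · intro w hw
    have hwy : w ≠ y := fun hh => hyB.1 (hh ▸ hw)
    rcases D2 with h' | h'
    · exact iff_of_true (h' x (Or.inr rfl)) (h' w (Or.inl hw))
    · exact iff_of_false (fun hh => tourn_asym h hxy (h' x (Or.inr rfl)) hh)
        (fun hh => tourn_asym h hwy (h' w (Or.inl hw)) hh)
  · exact (not_ext_br h3 hxE ⟨hxE.1, unifOn_mono D3 Set.subset_union_left⟩).elim
  · exact (not_ext_xu h3 haX hxE hxu).elim
  · exact (not_br_xu h hind h3 haX hyB hyu).elim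
  · exact (not_ext_xu h3 haX hxE hxu).elim
  · exfalso
    rcases hyB.2 with hd | hd
    · refine not_ext_br h3 hxE ⟨hxE.1, Or.inl fun w hw => ?_⟩
      have hwy : w ≠ y := fun hh => hyB.1 (hh ▸ hw)
      rcases D7 w hw with h' | h'
      · exact absurd (hd w hw) (tourn_asym h hwy (h' y (by simp)))
      · exact h' x (by simp)
    · refine not_ext_br h3 hxE ⟨hxE.1, Or.inr fun w hw => ?_⟩
      have hwy : w ≠ y := fun hh => hyB.1 (hh ▸ hw)
      rcases D7 w hw with h' | h'
      · exact h' x (by simp)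
      · exact absurd (hd w hw) (tourn_asym h hwy.symm (h' y (by simp)))

lemma pl_EP (h : IsTournament r) (hind : IndecomposableOn r X)
    (h3 : ∃ a ∈ X, ∃ b ∈ X, ∃ c ∈ X, a ≠ b ∧ a ≠ c ∧ b ≠ c)
    {x y u : V} (hu : u ∈ X) (hxE : x ∈ ExtSet r X) (hyU : y ∈ XuSet r X u)
    (hxy : x ≠ y) (hdec : ¬ IndecomposableOn r (X ∪ {x, y})) :
    r x y ↔ r x u := by
  have hxu : x ≠ u := fun hh => hxE.1 (hh ▸ hu)
  rcases master hind hxE.1 hyU.1 hxy hdec with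
    D1 | D2 | D3 | ⟨a, haX, hxA, -⟩ | ⟨a, haX, hyA, hux⟩ | ⟨a, haX, hxA, -⟩ | D7
  · exact (not_ext_br h3 hxE ⟨hxE.1, D1.1⟩).elim
  · exact (not_br_xu h hind h3 hu ⟨hyU.1, unifOn_mono D2 Set.subset_union_left⟩ hyU).elim
  · exact (not_ext_br h3 hxE ⟨hxE.1, unifOn_mono D3 Set.subset_union_left⟩).elim
  · exact (not_ext_xu h3 haX hxE hxA).elim
  · have hau : a = u := by
      by_contra hne
      exact not_xu_xu h hind h3 haX hu hne hyA hyU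
    rw [hau] at hux
    exact (unif_pair_iff h hxu hxy hux).symm
  · exact (not_ext_xu h3 haX hxE hxA).elim
  · exfalso
    refine not_ext_xu h3 hu hxE ⟨hxE.1, ⟨?_, fun w hw => ?_⟩⟩
    · intro t ht
      simp only [Set.mem_insert_iff, Set.mem_singleton_iff] at ht
      rcases ht with rfl | rfl
      · exact Or.inl hu
      · exact Or.inr rfl
    · have hw2 : w ≠ u ∧ w ≠ x := by
        have h5 := hw.2
        simp only [Set.mem_insert_iff, Set.mem_singleton_iff, not_or] at h5
        exact h5
      have hwX : w ∈ X := by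
        rcases hw.1 with h' | h'
        · exact h'
        · exact absurd (by simpa using h') hw2.2
      have hwy : w ≠ y := fun hh => hyU.1 (hh ▸ hwX)
      have i1 : r w u ↔ r w y := (xuSet_iff h hu hyU hwX hw2.1).symm
      have i2 : r w y ↔ r w x := (unif_pair_iff h hw2.2 hwy (D7 w hwX)).symm
      exact unif_pair_of_iff h hw2.1 hw2.2 (i1.trans i2)

lemma pl_BP (h : IsTournament r) (hind : IndecomposableOn r X)
    (h3 : ∃ a ∈ X, ∃ b ∈ X, ∃ c ∈ X, a ≠ b ∧ a ≠ c ∧ b ≠ c)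
    {x y u : V} (hu : u ∈ X) (hxB : x ∈ BrSet r X) (hyU : y ∈ XuSet r X u)
    (hxy : x ≠ y) (hdec : ¬ IndecomposableOn r (X ∪ {x, y})) :
    r x y ↔ r x u := by
  have hxu : x ≠ u := fun hh => hxB.1 (hh ▸ hu)
  rcases master hind hxB.1 hyU.1 hxy hdec with
    D1 | D2 | D3 | ⟨a, haX, hxA, -⟩ | ⟨a, haX, hyA, hux⟩ | ⟨a, haX, hxA, -⟩ | D7
  · exact (not_br_xu h hind h3 hu ⟨hyU.1, D1.2⟩ hyU).elim
  · exact (not_br_xu h hind h3 hu ⟨hyU.1, unifOn_mono D2 Set.subset_union_left⟩ hyU).elim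
  · rcases D3 with h' | h'
    · exact iff_of_true (h' y (Or.inr rfl)) (h' u (Or.inl hu))
    · exact iff_of_false (fun hh => tourn_asym h hxy (hh) (h' y (Or.inr rfl)))
        (fun hh => tourn_asym h hxu hh (h' u (Or.inl hu)))
  · exact (not_br_xu h hind h3 haX hxB hxA).elim
  · have hau : a = u := by
      by_contra hne
      exact not_xu_xu h hind h3 haX hu hne hyA hyU
    rw [hau] at hux
    exact (unif_pair_iff h hxu hxy hux).symm
  · exact (not_br_xu h hind h3 haX hxB hxA).elim
  · exfalso
    rcases hxB.2 with hd | hd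
    · refine not_br_xu h hind h3 hu ⟨hyU.1, Or.inl fun w hw => ?_⟩ hyU
      have hwx : w ≠ x := fun hh => hxB.1 (hh ▸ hw)
      rcases D7 w hw with h' | h'
      · exact absurd (hd w hw) (tourn_asym h hwx (h' x (by simp)))
      · exact h' y (by simp)
    · refine not_br_xu h hind h3 hu ⟨hyU.1, Or.inr fun w hw => ?_⟩ hyU
      have hwx : w ≠ x := fun hh => hxB.1 (hh ▸ hw)
      rcases D7 w hw with h' | h'
      · exact h' y (by simp)
      · exact absurd (hd w hw) (tourn_asym h hwx.symm (h' x (by simp)))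

lemma pl_PP (h : IsTournament r) (hind : IndecomposableOn r X)
    (h3 : ∃ a ∈ X, ∃ b ∈ X, ∃ c ∈ X, a ≠ b ∧ a ≠ c ∧ b ≠ c)
    {x y u v : V} (hu : u ∈ X) (hv : v ∈ X) (huv : u ≠ v)
    (hxU : x ∈ XuSet r X u) (hyV : y ∈ XuSet r X v) (hxy : x ≠ y)
    (hdec : ¬ IndecomposableOn r (X ∪ {x, y})) :
    (r y x ↔ r y u) ∨ (r x y ↔ r x v) := by
  have hyu : y ≠ u := fun hh => hyV.1 (hh ▸ hu)
  have hxv : x ≠ v := fun hh => hxU.1 (hh ▸ hv)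
  rcases master hind hxU.1 hyV.1 hxy hdec with
    D1 | D2 | D3 | ⟨a, haX, hxA, hyu'⟩ | ⟨a, haX, hyA, hxv'⟩ | ⟨a, haX, hxA, hyA⟩ | D7
  · exact (not_br_xu h hind h3 hu ⟨hxU.1, D1.1⟩ hxU).elim
  · exact (not_br_xu h hind h3 hv ⟨hyV.1, unifOn_mono D2 Set.subset_union_left⟩ hyV).elim
  · exact (not_br_xu h hind h3 hu ⟨hxU.1, unifOn_mono D3 Set.subset_union_left⟩ hxU).elim
  · have hau : a = u := by
      by_contra hne
      exact not_xu_xu h hind h3 haX hu hne hxA hxU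
    rw [hau] at hyu'
    exact Or.inl ((unif_pair_iff h hyu hxy.symm hyu').symm)
  · have hav : a = v := by
      by_contra hne
      exact not_xu_xu h hind h3 haX hv hne hyA hyV
    rw [hav] at hxv'
    exact Or.inr ((unif_pair_iff h hxv hxy hxv').symm)
  · have hau : a = u := by
      by_contra hne
      exact not_xu_xu h hind h3 haX hu hne hxA hxU
    have hav : a = v := by
      by_contra hne
      exact not_xu_xu h hind h3 haX hv hne hyA hyV
    exact absurd (hau.symm.trans hav) huv
  · exfalso
    have hint : IsIntervalOn r X {u, v} := by
      refine ⟨?_, fun z hz => ?_⟩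
      · intro t ht
        simp only [Set.mem_insert_iff, Set.mem_singleton_iff] at ht
        rcases ht with rfl | rfl
        · exact hu
        · exact hv
      · have hzX : z ∈ X := hz.1
        have hz2 : z ≠ u ∧ z ≠ v := by
          have h5 := hz.2
          simp only [Set.mem_insert_iff, Set.mem_singleton_iff, not_or] at h5
          exact h5
        have hzx : z ≠ x := fun hh => hxU.1 (hh ▸ hzX)
        have hzy : z ≠ y := fun hh => hyV.1 (hh ▸ hzX)
        have i1 : r z u ↔ r z x := (xuSet_iff h hu hxU hzX hz2.1).symm
        have i2 : r z x ↔ r z y := unif_pair_iff h hzx hzy (D7 z hzX)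
        have i3 : r z y ↔ r z v := xuSet_iff h hv hyV hzX hz2.2
        exact unif_pair_of_iff h hz2.1 hz2.2 ((i1.trans i2).trans i3)
    rcases hind _ hint with h' | ⟨a, h'⟩ | h'
    · have : u ∈ ({u, v} : Set V) := by simp
      rw [h'] at this; exact this
    · have e1 : u = a := by
        have : u ∈ ({u, v} : Set V) := by simp
        rw [h'] at this; simpa using this
      have e2 : v = a := by
        have : v ∈ ({u, v} : Set V) := by simp
        rw [h'] at this; simpa using this
      exact huv (e1.trans e2.symm)
    · obtain ⟨w, hwX, hwu, hwv⟩ := third_ne h3 u v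
      have : w ∈ ({u, v} : Set V) := by rw [h']; exact hwX
      simp only [Set.mem_insert_iff, Set.mem_singleton_iff] at this
      tauto

end ER

/-- In an indecomposable tournament, any indecomposable induced
subtournament on `X` with `|X| ≥ 3` and at least 2 outside vertices extends
indecomposably by two vertices. -/
theorem two_vertex_extension {V : Type*} [Fintype V] (r : V → V → Prop) (X : Set V)
    (h : IsTournament r) (hT : IndecomposableOn r Set.univ)
    (hX : 3 ≤ X.ncard) (hout : 2 ≤ Xᶜ.ncard) (hind : IndecomposableOn r X) :
    ∃ x y : V, x ≠ y ∧ x ∉ X ∧ y ∉ X ∧ IndecomposableOn r (X ∪ {x, y}) := by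
  by_contra hcon
  push_neg at hcon
  have h3 : ∃ a ∈ X, ∃ b ∈ X, ∃ c ∈ X, a ≠ b ∧ a ≠ c ∧ b ≠ c :=
    three_elts X (Set.toFinite X) hX
  have hdec : ∀ {x y : V}, x ∉ X → y ∉ X → x ≠ y → ¬ IndecomposableOn r (X ∪ {x, y}) :=
    fun {x y} hx hy hxy => hcon x y hxy hx hy
  by_cases hP : ∃ u ∈ X, (XuSet r X u).Nonempty
  · -- Case 1 : some X(u) nonempty ; K = {u} ∪ X(u) is a nontrivial interval of T
    obtain ⟨u, hu, x0, hx0⟩ := hP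
    have hiff : ∀ z, z ∉ insert u (XuSet r X u) → ∀ p ∈ XuSet r X u, (r z p ↔ r z u) := by
      intro z hzK p hp
      have hzu : z ≠ u := fun hh => hzK (by rw [hh]; exact Set.mem_insert u _)
      have hzP : z ∉ XuSet r X u := fun hh => hzK (Set.mem_insert_of_mem _ hh)
      have hzp : z ≠ p := fun hh => hzP (hh ▸ hp)
      by_cases hzX : z ∈ X
      · exact xuSet_iff h hu hp hzX hzu
      · rcases er_partition hind hzX with hE | hB | ⟨v, hv, hzV⟩
        · exact pl_EP h hind h3 hu hE hp hzp (hdec hE.1 hp.1 hzp)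
        · exact pl_BP h hind h3 hu hB hp hzp (hdec hB.1 hp.1 hzp)
        · have hvu : v ≠ u := fun hh => hzP (hh ▸ hzV)
          have hpz : p ≠ z := hzp.symm
          have hpv : p ≠ v := fun hh => hp.1 (hh ▸ hv)
          have hd := pl_PP h hind h3 hu hv hvu.symm hp hzV hpz (hdec hp.1 hzV.1 hpz)
          have f1 : r v p ↔ r v u := xuSet_iff h hu hp hv hvu
          have f2 : r u z ↔ r u v := xuSet_iff h hv hzV hu hvu.symm
          have n1 : r u v ↔ ¬ r v u := h.2 u v hvu.symm
          have n2 : r v p ↔ ¬ r p v := h.2 v p hpv.symm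
          have n3 : r u z ↔ ¬ r z u := h.2 u z hzu.symm
          have n4 : r p z ↔ ¬ r z p := h.2 p z hpz
          exact pp_calc f1 f2 n1 n2 n3 n4 hd
    have hKint : IsIntervalOn r Set.univ (insert u (XuSet r X u)) := by
      refine ⟨fun i _ => trivial, fun z hz => ?_⟩
      have hzK : z ∉ insert u (XuSet r X u) := hz.2
      have hzu : z ≠ u := fun hh => hzK (by rw [hh]; exact Set.mem_insert u _)
      by_cases hru : r z u
      · left
        intro i hi
        rcases Set.mem_insert_iff.mp hi with rfl | hiP
        · exact hru
        · exact (hiff z hzK i hiP).mpr hru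
      · right
        intro i hi
        rcases Set.mem_insert_iff.mp hi with rfl | hiP
        · exact tourn_total h hzu hru
        · have hzi : z ≠ i := fun hh => hzK (hh ▸ Set.mem_insert_of_mem _ hiP)
          exact tourn_total h hzi fun hh => hru ((hiff z hzK i hiP).mp hh)
    rcases hT _ hKint with h' | ⟨a, h'⟩ | h'
    · have : u ∈ insert u (XuSet r X u) := Set.mem_insert u _
      rw [h'] at this; exact this
    · have e1 : u = a := by
        have : u ∈ insert u (XuSet r X u) := Set.mem_insert u _
        rw [h'] at this; simpa using this
      have e2 : x0 = a := by
        have : x0 ∈ insert u (XuSet r X u) := Set.mem_insert_of_mem _ hx0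
        rw [h'] at this; simpa using this
      refine hx0.1 ?_
      rw [e2.trans e1.symm]
      exact hu
    · obtain ⟨w, hwX, hwu, -⟩ := third_ne h3 u u
      have : w ∈ insert u (XuSet r X u) := by rw [h']; trivial
      rcases Set.mem_insert_iff.mp this with h'' | h''
      · exact hwu h''
      · exact h''.1 hwX
  · have hnotP : ∀ z : V, ¬ ∃ u ∈ X, z ∈ XuSet r X u := by
      rintro z ⟨u, hu, hz⟩
      exact hP ⟨u, hu, z, hz⟩
    by_cases hB : ∃ b, b ∈ BrSet r X
    · -- Case 2 : K = X ∪ Ext(X)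
      obtain ⟨b0, hb0⟩ := hB
      have hmemB : ∀ z, z ∉ X ∪ ExtSet r X → z ∈ BrSet r X := by
        intro z hzK
        have hzX : z ∉ X := fun hh => hzK (Or.inl hh)
        rcases er_partition hind hzX with hE | hB' | ⟨u, hu, hzU⟩
        · exact absurd (Or.inr hE : z ∈ X ∪ ExtSet r X) hzK
        · exact hB'
        · exact absurd ⟨u, hu, hzU⟩ (hnotP z)
      obtain ⟨a0, ha0X, b1, hb1X, -, -, hab1, -, -⟩ := id h3
      have hKint : IsIntervalOn r Set.univ (X ∪ ExtSet r X) := by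
        refine ⟨fun i _ => trivial, fun z hz => ?_⟩
        have hzB := hmemB z hz.2
        rcases hzB.2 with hd | hd
        · left
          intro i hi
          rcases hi with hiX | hiE
          · exact hd i hiX
          · have hiz : i ≠ z := fun hh => not_ext_br h3 (hh ▸ hiE) hzB
            have hiffz := pl_EB h hind h3 hiE hzB hiz (hdec hiE.1 hzB.1 hiz)
            exact (hiffz a0 ha0X).mpr (hd a0 ha0X)
        · right
          intro i hi
          rcases hi with hiX | hiE
          · exact hd i hiX
          · have hiz : i ≠ z := fun hh => not_ext_br h3 (hh ▸ hiE) hzB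
            have hiffz := pl_EB h hind h3 hiE hzB hiz (hdec hiE.1 hzB.1 hiz)
            have hza : z ≠ a0 := fun hh => hzB.1 (hh ▸ ha0X)
            have : ¬ r z i := fun hh =>
              tourn_asym h hza ((hiffz a0 ha0X).mp hh) (hd a0 ha0X)
            exact tourn_total h hiz.symm this
      rcases hT _ hKint with h' | ⟨a, h'⟩ | h'
      · have : a0 ∈ X ∪ ExtSet r X := Or.inl ha0X
        rw [h'] at this; exact this
      · have e1 : a0 = a := by
          have : a0 ∈ X ∪ ExtSet r X := Or.inl ha0X
          rw [h'] at this; simpa using this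
        have e2 : b1 = a := by
          have : b1 ∈ X ∪ ExtSet r X := Or.inl hb1X
          rw [h'] at this; simpa using this
        exact hab1 (e1.trans e2.symm)
      · have : b0 ∈ X ∪ ExtSet r X := by rw [h']; trivial
        rcases this with h'' | h''
        · exact hb0.1 h''
        · exact not_ext_br h3 h'' hb0
    · -- Case 3 : complement = Ext(X)
      have hmemE : ∀ z, z ∉ X → z ∈ ExtSet r X := by
        intro z hzX
        rcases er_partition hind hzX with hE | hB' | ⟨u, hu, hzU⟩
        · exact hE
        · exact absurd ⟨z, hB'⟩ hB
        · exact absurd ⟨u, hu, hzU⟩ (hnotP z)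
      have h2c : ∃ p ∈ Xᶜ, ∃ q ∈ Xᶜ, p ≠ q := by
        have h1 : Xᶜ.Nonempty := by rw [← Set.ncard_pos (Set.toFinite _)]; omega
        obtain ⟨p, hp⟩ := h1
        obtain ⟨q, hq, hqp⟩ := Set.exists_ne_of_one_lt_ncard (s := Xᶜ) (by omega) p
        exact ⟨p, hp, q, hq, hqp.symm⟩
      obtain ⟨p, hp, q, hq, hpq⟩ := h2c
      have hpE : p ∈ ExtSet r X := hmemE p hp
      have hqE : q ∈ ExtSet r X := hmemE q hq
      have hKint : IsIntervalOn r Set.univ (ExtSet r X) := by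
        refine ⟨fun i _ => trivial, fun z hz => ?_⟩
        have hzX : z ∈ X := by
          by_contra hzX
          exact hz.2 (hmemE z hzX)
        have hiffz : ∀ i ∈ ExtSet r X, (r z i ↔ r z p) := by
          intro i hi
          by_cases hip : i = p
          · rw [hip]
          · exact pl_EE h hind h3 hi hpE hip (hdec hi.1 hpE.1 hip) z hzX
        by_cases hzp : r z p
        · left
          intro i hi
          exact (hiffz i hi).mpr hzp
        · right
          intro i hi
          have hzi : z ≠ i := fun hh => hi.1 (hh ▸ hzX)
          exact tourn_total h hzi fun hh => hzp ((hiffz i hi).mp hh)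
      rcases hT _ hKint with h' | ⟨a, h'⟩ | h'
      · rw [h'] at hpE; exact hpE
      · have e1 : p = a := by rw [h'] at hpE; simpa using hpE
        have e2 : q = a := by rw [h'] at hqE; simpa using hqE
        exact hpq (e1.trans e2.symm)
      · obtain ⟨a0, ha0X, -⟩ := h3
        have : a0 ∈ ExtSet r X := by rw [h']; trivial
        exact this.1 ha0X
end

section
/- Let T = (V,A) be an indecomposable tournament with |V| even and |V| ≥ 6. Then for each x ∈ V there is y ∈ V − {x} such that T − y is indecomposable. -/
namespace EDV

variable {V : Type*} {r : V → V → Prop} {X : Set V}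

/-- `X` has an element avoiding any two prescribed vertices (true iff `|X| ≥ 3`). -/
def Big (X : Set V) : Prop := ∀ a b : V, ∃ w ∈ X, w ≠ a ∧ w ≠ b

def BrP (r : V → V → Prop) (X : Set V) (z : V) : Prop :=
  z ∉ X ∧ ((∀ w ∈ X, r z w) ∨ (∀ w ∈ X, r w z))

def XuP (r : V → V → Prop) (X : Set V) (u x : V) : Prop :=
  x ∉ X ∧ u ∈ X ∧ ∀ w ∈ X, w ≠ u → (r w u ↔ r w x)

def ExtP (r : V → V → Prop) (X : Set V) (x : V) : Prop :=
  x ∉ X ∧ IndecomposableOn r (X ∪ {x})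

lemma asym (h : IsTournament r) {a b : V} (hab : r a b) : ¬ r b a := by
  rcases eq_or_ne a b with rfl | hne
  · exact fun _ => h.1 a hab
  · exact (h.2 a b hne).mp hab

lemma total (h : IsTournament r) {a b : V} (hne : a ≠ b) (hnr : ¬ r a b) : r b a := by
  by_contra hn
  exact hnr ((h.2 a b hne).mpr hn)

lemma flip_iff (h : IsTournament r) {a b c d : V} (hab : a ≠ b) (hcd : c ≠ d)
    (hiff : r a b ↔ r c d) : r b a ↔ r d c := by
  rw [h.2 b a hab.symm, h.2 d c hcd.symm]
  exact not_congr hiff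

lemma unif_of_iff (h : IsTournament r) {S : Set V} {w c : V}
    (hw : ∀ i ∈ S, i ≠ w) (hiff : ∀ i ∈ S, (r w i ↔ r w c)) :
    (∀ i ∈ S, r w i) ∨ (∀ i ∈ S, r i w) := by
  by_cases hc : r w c
  · exact Or.inl fun i hi => (hiff i hi).mpr hc
  · refine Or.inr fun i hi => total h (hw i hi).symm ?_
    exact fun hri => hc ((hiff i hi).mp hri)

lemma iff_of_unif (h : IsTournament r) {S : Set V} {w a b : V}
    (hU : (∀ i ∈ S, r w i) ∨ (∀ i ∈ S, r i w))
    (ha : a ∈ S) (hb : b ∈ S) : r w a ↔ r w b := by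
  rcases hU with hU | hU
  · simp [hU a ha, hU b hb]
  · have h1 : ¬ r w a := fun hr => asym h hr (hU a ha)
    have h2 : ¬ r w b := fun hr => asym h hr (hU b hb)
    simp [h1, h2]

lemma exists_nontrivial {Y : Set V} (hdec : ¬ IndecomposableOn r Y) :
    ∃ I, IsIntervalOn r Y I ∧ I ≠ ∅ ∧ (∀ a, I ≠ {a}) ∧ I ≠ Y := by
  by_contra hall
  apply hdec
  intro I hI
  by_cases h0 : I = ∅
  · exact Or.inl h0
  by_cases h1 : ∃ a, I = {a}
  · exact Or.inr (Or.inl h1)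
  by_cases hY : I = Y
  · exact Or.inr (Or.inr hY)
  exact absurd ⟨I, hI, h0, fun a ha => h1 ⟨a, ha⟩, hY⟩ hall

lemma trace {Y I : Set V} (hI : IsIntervalOn r Y I) (hXY : X ⊆ Y) :
    IsIntervalOn r X (I ∩ X) := by
  refine ⟨Set.inter_subset_right, fun a ha => ?_⟩
  have haY : a ∈ Y \ I := ⟨hXY ha.1, fun hIa => ha.2 ⟨hIa, ha.1⟩⟩
  rcases hI.2 a haY with hd | hd
  · exact Or.inl fun i hi => hd i hi.1
  · exact Or.inr fun i hi => hd i hi.1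

lemma shape1 (hX : IndecomposableOn r X) {x : V} (hx : x ∉ X)
    {I : Set V} (hI : IsIntervalOn r (X ∪ {x}) I)
    (h0 : I ≠ ∅) (h1 : ∀ a, I ≠ {a}) (hY : I ≠ X ∪ {x}) :
    I = X ∨ ∃ u ∈ X, I = {u, x} := by
  have hmem : ∀ a ∈ I, a ∈ X ∨ a = x := by
    intro a ha
    rcases (Set.mem_union _ _ _).mp (hI.1 ha) with h' | h'
    · exact Or.inl h'
    · exact Or.inr h'
  rcases hX _ (trace hI Set.subset_union_left) with hJ | ⟨u, hJ⟩ | hJ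
  · exfalso
    have hIx : ∀ a ∈ I, a = x := by
      intro a ha
      rcases hmem a ha with h' | h'
      · have h2 : a ∈ I ∩ X := ⟨ha, h'⟩
        rw [hJ] at h2
        exact absurd h2 (Set.notMem_empty a)
      · exact h'
    rcases Set.eq_empty_or_nonempty I with he | ⟨a, ha⟩
    · exact h0 he
    · exact h1 x (Set.eq_singleton_iff_unique_mem.mpr ⟨(hIx a ha) ▸ ha, fun b hb => hIx b hb⟩)
  · have huIX : u ∈ I ∩ X := by rw [hJ]; rfl
    right
    refine ⟨u, huIX.2, ?_⟩
    have hsub : ∀ a ∈ I, a = u ∨ a = x := by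
      intro a ha
      rcases hmem a ha with h' | h'
      · have h2 : a ∈ I ∩ X := ⟨ha, h'⟩
        rw [hJ] at h2
        exact Or.inl h2
      · exact Or.inr h'
    by_cases hxI : x ∈ I
    · ext a
      simp only [Set.mem_insert_iff, Set.mem_singleton_iff]
      constructor
      · exact hsub a
      · rintro (rfl | rfl)
        · exact huIX.1
        · exact hxI
    · exfalso
      apply h1 u
      ext a
      simp only [Set.mem_singleton_iff]
      constructor
      · intro ha
        rcases hsub a ha with h' | h'
        · exact h'
        · exact absurd (h' ▸ ha) hxI
      · rintro rfl; exact huIX.1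
  · have hXI : X ⊆ I := by
      intro a ha
      have h2 : a ∈ I ∩ X := by rw [hJ]; exact ha
      exact h2.1
    by_cases hxI : x ∈ I
    · exfalso
      apply hY
      refine Set.Subset.antisymm hI.1 ?_
      intro a ha
      rcases (Set.mem_union _ _ _).mp ha with h' | h'
      · exact hXI h'
      · exact (show a = x from h').symm ▸ hxI
    · left
      refine Set.Subset.antisymm ?_ hXI
      intro a ha
      rcases hmem a ha with h' | h'
      · exact h'
      · exact absurd ((show a = x from h') ▸ ha) hxI

lemma shapeP (hX : IndecomposableOn r X) {x z : V} (hx : x ∉ X) (hz : z ∉ X)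
    {I : Set V} (hI : IsIntervalOn r (X ∪ {x, z}) I)
    (h0 : I ≠ ∅) (h1 : ∀ a, I ≠ {a}) (hY : I ≠ X ∪ {x, z}) :
    I = X ∨ I = X ∪ {x} ∨ I = X ∪ {z} ∨ I = {x, z} ∨
      ∃ u ∈ X, I = {u, x} ∨ I = {u, z} ∨ I = {u, x, z} := by
  have hmem : ∀ a ∈ I, a ∈ X ∨ a = x ∨ a = z := by
    intro a ha
    rcases (Set.mem_union _ _ _).mp (hI.1 ha) with h' | h'
    · exact Or.inl h'
    · exact Or.inr (by simpa using h')
  rcases hX _ (trace hI Set.subset_union_left) with hJ | ⟨u, hJ⟩ | hJ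
  · -- I ∩ X = ∅
    have hIxz : ∀ a ∈ I, a = x ∨ a = z := by
      intro a ha
      rcases hmem a ha with h' | h'
      · have h2 : a ∈ I ∩ X := ⟨ha, h'⟩
        rw [hJ] at h2
        exact absurd h2 (Set.notMem_empty a)
      · exact h'
    by_cases hxI : x ∈ I <;> by_cases hzI : z ∈ I
    · right; right; right; left
      ext a
      simp only [Set.mem_insert_iff, Set.mem_singleton_iff]
      exact ⟨hIxz a, by rintro (rfl | rfl) <;> assumption⟩
    · exfalso
      apply h1 x
      ext a
      simp only [Set.mem_singleton_iff]
      constructor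
      · intro ha
        rcases hIxz a ha with h' | h'
        · exact h'
        · exact absurd ((show a = z from h') ▸ ha) hzI
      · rintro rfl; exact hxI
    · exfalso
      apply h1 z
      ext a
      simp only [Set.mem_singleton_iff]
      constructor
      · intro ha
        rcases hIxz a ha with h' | h'
        · exact absurd ((show a = x from h') ▸ ha) hxI
        · exact h'
      · rintro rfl; exact hzI
    · exfalso
      apply h0
      ext a
      simp only [Set.mem_empty_iff_false, iff_false]
      intro ha
      rcases hIxz a ha with rfl | rfl
      · exact hxI ha
      · exact hzI ha
  · -- I ∩ X = {u}
    have huIX : u ∈ I ∩ X := by rw [hJ]; rfl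
    right; right; right; right
    refine ⟨u, huIX.2, ?_⟩
    have hsub : ∀ a ∈ I, a = u ∨ a = x ∨ a = z := by
      intro a ha
      rcases hmem a ha with h' | h'
      · have h2 : a ∈ I ∩ X := ⟨ha, h'⟩
        rw [hJ] at h2
        exact Or.inl h2
      · exact Or.inr h'
    by_cases hxI : x ∈ I <;> by_cases hzI : z ∈ I
    · right; right
      ext a
      simp only [Set.mem_insert_iff, Set.mem_singleton_iff]
      constructor
      · exact hsub a
      · rintro (rfl | rfl | rfl)
        · exact huIX.1
        · exact hxI
        · exact hzI
    · left
      ext a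
      simp only [Set.mem_insert_iff, Set.mem_singleton_iff]
      constructor
      · intro ha
        rcases hsub a ha with h' | h' | h'
        · exact Or.inl h'
        · exact Or.inr h'
        · exact absurd ((show a = z from h') ▸ ha) hzI
      · rintro (rfl | rfl)
        · exact huIX.1
        · exact hxI
    · right; left
      ext a
      simp only [Set.mem_insert_iff, Set.mem_singleton_iff]
      constructor
      · intro ha
        rcases hsub a ha with h' | h' | h'
        · exact Or.inl h'
        · exact absurd ((show a = x from h') ▸ ha) hxI
        · exact Or.inr h'
      · rintro (rfl | rfl)
        · exact huIX.1
        · exact hzI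
    · exfalso
      apply h1 u
      ext a
      simp only [Set.mem_singleton_iff]
      constructor
      · intro ha
        rcases hsub a ha with h' | h' | h'
        · exact h'
        · exact absurd ((show a = x from h') ▸ ha) hxI
        · exact absurd ((show a = z from h') ▸ ha) hzI
      · rintro rfl; exact huIX.1
  · -- I ∩ X = X
    have hXI : X ⊆ I := by
      intro a ha
      have h2 : a ∈ I ∩ X := by rw [hJ]; exact ha
      exact h2.1
    by_cases hxI : x ∈ I <;> by_cases hzI : z ∈ I
    · exfalso
      apply hY
      refine Set.Subset.antisymm hI.1 ?_
      intro a ha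
      rcases (Set.mem_union _ _ _).mp ha with h' | h'
      · exact hXI h'
      · rcases (by simpa using h' : a = x ∨ a = z) with rfl | rfl <;> assumption
    · right; left
      ext a
      simp only [Set.mem_union, Set.mem_singleton_iff]
      constructor
      · intro ha
        rcases hmem a ha with h' | h' | h'
        · exact Or.inl h'
        · exact Or.inr h'
        · exact absurd ((show a = z from h') ▸ ha) hzI
      · rintro (ha | rfl)
        · exact hXI ha
        · exact hxI
    · right; right; left
      ext a
      simp only [Set.mem_union, Set.mem_singleton_iff]
      constructor
      · intro ha
        rcases hmem a ha with h' | h' | h'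
        · exact Or.inl h'
        · exact absurd ((show a = x from h') ▸ ha) hxI
        · exact Or.inr h'
      · rintro (ha | rfl)
        · exact hXI ha
        · exact hzI
    · left
      refine Set.Subset.antisymm ?_ hXI
      intro a ha
      rcases hmem a ha with h' | h' | h'
      · exact h'
      · exact absurd ((show a = x from h') ▸ ha) hxI
      · exact absurd ((show a = z from h') ▸ ha) hzI

lemma source_contra (hX : IndecomposableOn r X) (hX3 : Big X) {u : V} (hu : u ∈ X)
    (hs : ∀ w ∈ X, w ≠ u → r u w) : False := by
  have hint : IsIntervalOn r X (X \ {u}) := by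
    refine ⟨Set.diff_subset, fun a ha => ?_⟩
    have hau : a = u := by
      by_contra hne
      exact ha.2 ⟨ha.1, by simp [hne]⟩
    subst hau
    exact Or.inl fun i hi => hs i hi.1 (by simpa using hi.2)
  rcases hX _ hint with h0 | ⟨a, h0⟩ | h0
  · obtain ⟨w, hw, hwu, -⟩ := hX3 u u
    have : w ∈ X \ {u} := ⟨hw, by simp [hwu]⟩
    rw [h0] at this
    exact Set.notMem_empty w this
  · obtain ⟨w, hw, hwu, hwa⟩ := hX3 u a
    have : w ∈ X \ {u} := ⟨hw, by simp [hwu]⟩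
    rw [h0] at this
    exact hwa (by simpa using this)
  · have : u ∈ X \ {u} := by rw [h0]; exact hu
    exact this.2 rfl

lemma sink_contra (hX : IndecomposableOn r X) (hX3 : Big X) {u : V} (hu : u ∈ X)
    (hs : ∀ w ∈ X, w ≠ u → r w u) : False := by
  have hint : IsIntervalOn r X (X \ {u}) := by
    refine ⟨Set.diff_subset, fun a ha => ?_⟩
    have hau : a = u := by
      by_contra hne
      exact ha.2 ⟨ha.1, by simp [hne]⟩
    subst hau
    exact Or.inr fun i hi => hs i hi.1 (by simpa using hi.2)
  rcases hX _ hint with h0 | ⟨a, h0⟩ | h0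
  · obtain ⟨w, hw, hwu, -⟩ := hX3 u u
    have : w ∈ X \ {u} := ⟨hw, by simp [hwu]⟩
    rw [h0] at this
    exact Set.notMem_empty w this
  · obtain ⟨w, hw, hwu, hwa⟩ := hX3 u a
    have : w ∈ X \ {u} := ⟨hw, by simp [hwu]⟩
    rw [h0] at this
    exact hwa (by simpa using this)
  · have : u ∈ X \ {u} := by rw [h0]; exact hu
    exact this.2 rfl

lemma pair_contra (h : IsTournament r) (hX : IndecomposableOn r X) (hX3 : Big X)
    {u v : V} (hu : u ∈ X) (hv : v ∈ X) (huv : u ≠ v)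
    (hiff : ∀ w ∈ X, w ≠ u → w ≠ v → (r w u ↔ r w v)) : False := by
  have hint : IsIntervalOn r X {u, v} := by
    refine ⟨?_, fun a ha => ?_⟩
    · intro i hi
      rcases Set.mem_insert_iff.mp hi with rfl | hi
      · exact hu
      · exact (show i = v from hi) ▸ hv
    · have hau : a ≠ u := fun e => ha.2 (by rw [e]; exact Set.mem_insert u _)
      have hav : a ≠ v := fun e => ha.2 (by rw [e]; exact Set.mem_insert_of_mem _ rfl)
      refine unif_of_iff h (c := v) (fun i hi => ?_) (fun i hi => ?_)
      · rcases Set.mem_insert_iff.mp hi with rfl | hi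
        · exact hau.symm
        · exact (show i = v from hi) ▸ hav.symm
      · rcases Set.mem_insert_iff.mp hi with rfl | hi
        · exact hiff a ha.1 hau hav
        · rw [show i = v from hi]
  rcases hX _ hint with h0 | ⟨a, h0⟩ | h0
  · have : u ∈ ({u, v} : Set V) := Set.mem_insert u _
    rw [h0] at this
    exact Set.notMem_empty u this
  · have h1 : u = a := by
      have hm : u ∈ ({u, v} : Set V) := Set.mem_insert u _
      rw [h0] at hm
      simpa using hm
    have h2 : v = a := by
      have hm : v ∈ ({u, v} : Set V) := Set.mem_insert_of_mem _ rfl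
      rw [h0] at hm
      simpa using hm
    exact huv (h1.trans h2.symm)
  · obtain ⟨w, hw, hwu, hwv⟩ := hX3 u v
    have : w ∈ ({u, v} : Set V) := by rw [h0]; exact hw
    rcases Set.mem_insert_iff.mp this with rfl | h'
    · exact hwu rfl
    · exact hwv h'

lemma E1 (h : IsTournament r) (hX : IndecomposableOn r X) (hX3 : Big X)
    {u z : V} (hz : BrP r X z) (huz : XuP r X u z) : False := by
  obtain ⟨hzX, hdir⟩ := hz
  obtain ⟨-, hu, hiff⟩ := huz
  rcases hdir with hd | hd
  · refine source_contra hX hX3 hu fun w hw hwu => ?_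
    have h1 : ¬ r w z := asym h (hd w hw)
    have h2 : ¬ r w u := fun k => h1 ((hiff w hw hwu).mp k)
    exact total h hwu h2
  · refine sink_contra hX hX3 hu fun w hw hwu => ?_
    exact (hiff w hw hwu).mpr (hd w hw)

lemma E2 (h : IsTournament r) (hX : IndecomposableOn r X) (hX3 : Big X)
    {u v x : V} (h1 : XuP r X u x) (h2 : XuP r X v x) (huv : u ≠ v) : False := by
  refine pair_contra h hX hX3 h1.2.1 h2.2.1 huv fun w hw hwu hwv => ?_
  exact (h1.2.2 w hw hwu).trans (h2.2.2 w hw hwv).symm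

lemma E3 (hX : IndecomposableOn r X) (hX3 : Big X)
    {x : V} (hbr : BrP r X x) (hext : ExtP r X x) : False := by
  have hint : IsIntervalOn r (X ∪ {x}) X := by
    refine ⟨Set.subset_union_left, fun a ha => ?_⟩
    have hax : a = x := by
      rcases (Set.mem_union _ _ _).mp ha.1 with h' | h'
      · exact absurd h' ha.2
      · exact h'
    subst hax
    exact hbr.2
  rcases hext.2 X hint with h0 | ⟨a, h0⟩ | h0
  · obtain ⟨w, hw, -, -⟩ := hX3 x x
    rw [h0] at hw
    exact Set.notMem_empty w hw
  · obtain ⟨w, hw, -, hwa⟩ := hX3 x a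
    rw [h0] at hw
    exact hwa (by simpa using hw)
  · have : x ∈ X := by rw [h0]; exact Set.mem_union_right _ rfl
    exact hext.1 this

lemma E4 (h : IsTournament r) (hX : IndecomposableOn r X) (hX3 : Big X)
    {u x : V} (hxu : XuP r X u x) (hext : ExtP r X x) : False := by
  obtain ⟨hxX, hu, hiff⟩ := hxu
  have hint : IsIntervalOn r (X ∪ {x}) {u, x} := by
    refine ⟨?_, fun a ha => ?_⟩
    · intro i hi
      rcases Set.mem_insert_iff.mp hi with rfl | hi
      · exact Or.inl hu
      · exact Or.inr hi
    · have haX : a ∈ X := by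
        rcases (Set.mem_union _ _ _).mp ha.1 with h' | h'
        · exact h'
        · exact absurd (by simp [show a = x from h'] : a ∈ ({u, x} : Set V)) ha.2
      have hau : a ≠ u := fun e => ha.2 (by rw [e]; exact Set.mem_insert u _)
      have hax : a ≠ x := fun e => hxX (e ▸ haX)
      refine unif_of_iff h (c := x) (fun i hi => ?_) (fun i hi => ?_)
      · rcases Set.mem_insert_iff.mp hi with rfl | hi
        · exact hau.symm
        · exact (show i = x from hi) ▸ hax.symm
      · rcases Set.mem_insert_iff.mp hi with rfl | hi
        · exact hiff a haX hau
        · rw [show i = x from hi]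
  rcases hext.2 _ hint with h0 | ⟨a, h0⟩ | h0
  · have : u ∈ ({u, x} : Set V) := Set.mem_insert u _
    rw [h0] at this
    exact Set.notMem_empty u this
  · have h1 : u = a := by
      have hm : u ∈ ({u, x} : Set V) := Set.mem_insert u _
      rw [h0] at hm
      simpa using hm
    have h2 : x = a := by
      have hm : x ∈ ({u, x} : Set V) := Set.mem_insert_of_mem _ rfl
      rw [h0] at hm
      simpa using hm
    exact hxX ((h1.trans h2.symm) ▸ hu)
  · obtain ⟨w, hw, hwu, hwx⟩ := hX3 u x
    have : w ∈ ({u, x} : Set V) := by rw [h0]; exact Set.mem_union_left _ hw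
    rcases Set.mem_insert_iff.mp this with rfl | h'
    · exact hwu rfl
    · exact hwx h'

lemma CL (h : IsTournament r) (hX : IndecomposableOn r X) (hX3 : Big X)
    {y : V} (hy : y ∉ X) :
    ExtP r X y ∨ (BrP r X y ∨ ∃ u ∈ X, XuP r X u y) := by
  by_cases hd : IndecomposableOn r (X ∪ {y})
  · exact Or.inl ⟨hy, hd⟩
  right
  obtain ⟨I, hI, h0, h1, hY⟩ := exists_nontrivial hd
  rcases shape1 hX hy hI h0 h1 hY with rfl | ⟨u, hu, rfl⟩
  · exact Or.inl ⟨hy, hI.2 y ⟨Set.mem_union_right _ rfl, hy⟩⟩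
  · refine Or.inr ⟨u, hu, hy, hu, fun w hw hwu => ?_⟩
    have hwy : w ≠ y := fun e => hy (e ▸ hw)
    have hU := hI.2 w ⟨Set.mem_union_left _ hw, by simp [hwu, hwy]⟩
    exact iff_of_unif h hU (Set.mem_insert u _) (Set.mem_insert_of_mem _ rfl)

end EDV
namespace EDV

variable {V : Type*} {r : V → V → Prop} {X : Set V}

lemma BrP_of_copy (h : IsTournament r) {x x0 : V} (hxX : x ∉ X) (hx0X : x0 ∉ X)
    (hcopy : ∀ w ∈ X, (r w x0 ↔ r w x))
    (hdir : (∀ w ∈ X, r x w) ∨ (∀ w ∈ X, r w x)) : BrP r X x0 := by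
  refine ⟨hx0X, ?_⟩
  rcases hdir with hd | hd
  · refine Or.inl fun w hw => ?_
    have h1 : ¬ r w x := asym h (hd w hw)
    have h2 : ¬ r w x0 := fun k => h1 ((hcopy w hw).mp k)
    exact total h (fun e => hx0X (e ▸ hw)) h2
  · exact Or.inr fun w hw => (hcopy w hw).mpr (hd w hw)

lemma P8 (h : IsTournament r) (hX : IndecomposableOn r X) (hX3 : Big X)
    {u x z : V} (hu : u ∈ X) (hz : BrP r X z) (hx : XuP r X u x)
    (hxz : x ≠ z) (hdec : ¬ IndecomposableOn r (X ∪ {x, z})) : r z x ↔ r z u := by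
  obtain ⟨hzX, hzdir⟩ := hz
  obtain ⟨hxX, -, hxiff⟩ := hx
  have hxY : x ∈ X ∪ {x, z} := Set.mem_union_right _ (Set.mem_insert x _)
  have hzY : z ∈ X ∪ {x, z} := Set.mem_union_right _ (Set.mem_insert_of_mem _ rfl)
  have huz : u ≠ z := fun e => hzX (e ▸ hu)
  have hzx : z ≠ x := hxz.symm
  obtain ⟨I, hI, h0, h1, hYne⟩ := exists_nontrivial hdec
  rcases shapeP hX hxX hzX hI h0 h1 hYne with rfl | rfl | rfl | rfl | ⟨w, hw, rfl | rfl | rfl⟩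
  · -- I = X
    have hU := hI.2 x ⟨hxY, hxX⟩
    exact ((E1 h hX hX3 ⟨hxX, hU⟩ ⟨hxX, hu, hxiff⟩).elim : _)
  · -- I = X ∪ {x}
    have hU := hI.2 z ⟨hzY, by simp [hzX, hzx]⟩
    exact iff_of_unif h hU (Set.mem_union_right _ rfl) (Set.mem_union_left _ hu)
  · -- I = X ∪ {z}
    have hU := hI.2 x ⟨hxY, by simp [hxX, hxz]⟩
    have hBr : BrP r X x :=
      ⟨hxX, hU.imp (fun H w' hw' => H w' (Set.mem_union_left _ hw'))
        (fun H w' hw' => H w' (Set.mem_union_left _ hw'))⟩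
    exact ((E1 h hX hX3 hBr ⟨hxX, hu, hxiff⟩).elim : _)
  · -- I = {x, z}
    exfalso
    rcases hzdir with hd | hd
    · refine E1 h hX hX3 ⟨hxX, Or.inl fun w hw => ?_⟩ ⟨hxX, hu, hxiff⟩
      have hwx : w ≠ x := fun e => hxX (e ▸ hw)
      have hwz : w ≠ z := fun e => hzX (e ▸ hw)
      have hU := hI.2 w ⟨Set.mem_union_left _ hw, by simp [hwx, hwz]⟩
      rcases hU with hU | hU
      · exact absurd (hU z (Set.mem_insert_of_mem _ rfl)) (asym h (hd w hw))
      · exact hU x (Set.mem_insert x _)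
    · refine E1 h hX hX3 ⟨hxX, Or.inr fun w hw => ?_⟩ ⟨hxX, hu, hxiff⟩
      have hwx : w ≠ x := fun e => hxX (e ▸ hw)
      have hwz : w ≠ z := fun e => hzX (e ▸ hw)
      have hU := hI.2 w ⟨Set.mem_union_left _ hw, by simp [hwx, hwz]⟩
      rcases hU with hU | hU
      · exact hU x (Set.mem_insert x _)
      · exact absurd (hU z (Set.mem_insert_of_mem _ rfl)) (asym h (hd w hw))
  · -- I = {w, x}
    have hWx : XuP r X w x := by
      refine ⟨hxX, hw, fun w' hw' hww' => ?_⟩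
      have hw'x : w' ≠ x := fun e => hxX (e ▸ hw')
      have hU := hI.2 w' ⟨Set.mem_union_left _ hw', by simp [hww', hw'x]⟩
      exact iff_of_unif h hU (Set.mem_insert w _) (Set.mem_insert_of_mem _ rfl)
    rcases eq_or_ne w u with rfl | hne
    · have hU := hI.2 z ⟨hzY, by simp [huz.symm, hzx]⟩
      exact iff_of_unif h hU (Set.mem_insert_of_mem _ rfl) (Set.mem_insert w _)
    · exact ((E2 h hX hX3 hWx ⟨hxX, hu, hxiff⟩ hne).elim : _)
  · -- I = {w, z}
    exfalso
    have hWz : XuP r X w z := by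
      refine ⟨hzX, hw, fun w' hw' hww' => ?_⟩
      have hw'z : w' ≠ z := fun e => hzX (e ▸ hw')
      have hU := hI.2 w' ⟨Set.mem_union_left _ hw', by simp [hww', hw'z]⟩
      exact iff_of_unif h hU (Set.mem_insert w _) (Set.mem_insert_of_mem _ rfl)
    exact E1 h hX hX3 ⟨hzX, hzdir⟩ hWz
  · -- I = {w, x, z}
    exfalso
    have hWz : XuP r X w z := by
      refine ⟨hzX, hw, fun w' hw' hww' => ?_⟩
      have hw'x : w' ≠ x := fun e => hxX (e ▸ hw')
      have hw'z : w' ≠ z := fun e => hzX (e ▸ hw')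
      have hU := hI.2 w' ⟨Set.mem_union_left _ hw', by simp [hww', hw'x, hw'z]⟩
      exact iff_of_unif h hU (Set.mem_insert w _)
        (Set.mem_insert_of_mem _ (Set.mem_insert_of_mem _ rfl))
    exact E1 h hX hX3 ⟨hzX, hzdir⟩ hWz

lemma P7 (h : IsTournament r) (hX : IndecomposableOn r X) (hX3 : Big X)
    {u v x z : V} (hu : u ∈ X) (hv : v ∈ X) (huv : u ≠ v)
    (hx : XuP r X u x) (hz : XuP r X v z) (hxz : x ≠ z)
    (hdec : ¬ IndecomposableOn r (X ∪ {x, z})) : r z x ↔ r v u := by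
  obtain ⟨hxX, -, hxiff⟩ := hx
  obtain ⟨hzX, -, hziff⟩ := hz
  have hxY : x ∈ X ∪ {x, z} := Set.mem_union_right _ (Set.mem_insert x _)
  have hzY : z ∈ X ∪ {x, z} := Set.mem_union_right _ (Set.mem_insert_of_mem _ rfl)
  have hux : u ≠ x := fun e => hxX (e ▸ hu)
  have huz : u ≠ z := fun e => hzX (e ▸ hu)
  have hvx : v ≠ x := fun e => hxX (e ▸ hv)
  have hvz : v ≠ z := fun e => hzX (e ▸ hv)
  have hzx : z ≠ x := hxz.symm
  obtain ⟨I, hI, h0, h1, hYne⟩ := exists_nontrivial hdec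
  rcases shapeP hX hxX hzX hI h0 h1 hYne with rfl | rfl | rfl | rfl | ⟨w, hw, rfl | rfl | rfl⟩
  · -- I = X
    have hU := hI.2 x ⟨hxY, hxX⟩
    exact ((E1 h hX hX3 ⟨hxX, hU⟩ ⟨hxX, hu, hxiff⟩).elim : _)
  · -- I = X ∪ {x}
    have hU := hI.2 z ⟨hzY, by simp [hzX, hzx]⟩
    have hBr : BrP r X z :=
      ⟨hzX, hU.imp (fun H w' hw' => H w' (Set.mem_union_left _ hw'))
        (fun H w' hw' => H w' (Set.mem_union_left _ hw'))⟩
    exact ((E1 h hX hX3 hBr ⟨hzX, hv, hziff⟩).elim : _)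
  · -- I = X ∪ {z}
    have hU := hI.2 x ⟨hxY, by simp [hxX, hxz]⟩
    have hBr : BrP r X x :=
      ⟨hxX, hU.imp (fun H w' hw' => H w' (Set.mem_union_left _ hw'))
        (fun H w' hw' => H w' (Set.mem_union_left _ hw'))⟩
    exact ((E1 h hX hX3 hBr ⟨hxX, hu, hxiff⟩).elim : _)
  · -- I = {x, z}
    exfalso
    apply pair_contra h hX hX3 hu hv huv
    intro w' hw' hw'u hw'v
    have hw'x : w' ≠ x := fun e => hxX (e ▸ hw')
    have hw'z : w' ≠ z := fun e => hzX (e ▸ hw')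
    have hU := hI.2 w' ⟨Set.mem_union_left _ hw', by simp [hw'x, hw'z]⟩
    have h1' : r w' x ↔ r w' z :=
      iff_of_unif h hU (Set.mem_insert x _) (Set.mem_insert_of_mem _ rfl)
    exact (hxiff w' hw' hw'u).trans (h1'.trans (hziff w' hw' hw'v).symm)
  · -- I = {w, x}
    have hWx : XuP r X w x := by
      refine ⟨hxX, hw, fun w' hw' hww' => ?_⟩
      have hw'x : w' ≠ x := fun e => hxX (e ▸ hw')
      have hU := hI.2 w' ⟨Set.mem_union_left _ hw', by simp [hww', hw'x]⟩
      exact iff_of_unif h hU (Set.mem_insert w _) (Set.mem_insert_of_mem _ rfl)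
    rcases eq_or_ne w u with rfl | hne
    · have hU := hI.2 z ⟨hzY, by simp [huz.symm, hzx]⟩
      have h1' : r z x ↔ r z w :=
        iff_of_unif h hU (Set.mem_insert_of_mem _ rfl) (Set.mem_insert w _)
      have h2' : r w v ↔ r w z := hziff w hw huv
      have h3' : r v w ↔ r z w := flip_iff h huv huz h2'
      exact h1'.trans h3'.symm
    · exact ((E2 h hX hX3 hWx ⟨hxX, hu, hxiff⟩ hne).elim : _)
  · -- I = {w, z}
    have hWz : XuP r X w z := by
      refine ⟨hzX, hw, fun w' hw' hww' => ?_⟩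
      have hw'z : w' ≠ z := fun e => hzX (e ▸ hw')
      have hU := hI.2 w' ⟨Set.mem_union_left _ hw', by simp [hww', hw'z]⟩
      exact iff_of_unif h hU (Set.mem_insert w _) (Set.mem_insert_of_mem _ rfl)
    rcases eq_or_ne w v with rfl | hne
    · have hU := hI.2 x ⟨hxY, by simp [hvx.symm, hxz]⟩
      have h1' : r x z ↔ r x w :=
        iff_of_unif h hU (Set.mem_insert_of_mem _ rfl) (Set.mem_insert w _)
      have h2' : r w u ↔ r w x := hxiff w hw huv.symm
      have h3' : r u w ↔ r x w := flip_iff h huv.symm hvx h2'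
      exact flip_iff h hxz huv (h1'.trans h3'.symm)
    · exact ((E2 h hX hX3 hWz ⟨hzX, hv, hziff⟩ hne).elim : _)
  · -- I = {w, x, z}
    exfalso
    have hWx : XuP r X w x := by
      refine ⟨hxX, hw, fun w' hw' hww' => ?_⟩
      have hw'x : w' ≠ x := fun e => hxX (e ▸ hw')
      have hw'z : w' ≠ z := fun e => hzX (e ▸ hw')
      have hU := hI.2 w' ⟨Set.mem_union_left _ hw', by simp [hww', hw'x, hw'z]⟩
      exact iff_of_unif h hU (Set.mem_insert w _)
        (Set.mem_insert_of_mem _ (Set.mem_insert x _))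
    have hWz : XuP r X w z := by
      refine ⟨hzX, hw, fun w' hw' hww' => ?_⟩
      have hw'x : w' ≠ x := fun e => hxX (e ▸ hw')
      have hw'z : w' ≠ z := fun e => hzX (e ▸ hw')
      have hU := hI.2 w' ⟨Set.mem_union_left _ hw', by simp [hww', hw'x, hw'z]⟩
      exact iff_of_unif h hU (Set.mem_insert w _)
        (Set.mem_insert_of_mem _ (Set.mem_insert_of_mem _ rfl))
    rcases eq_or_ne w u with rfl | hne
    · exact E2 h hX hX3 hWz ⟨hzX, hv, hziff⟩ huv
    · exact E2 h hX hX3 hWx ⟨hxX, hu, hxiff⟩ hne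

end EDV
namespace EDV

variable {V : Type*} {r : V → V → Prop} {X : Set V}

lemma PX (h : IsTournament r) (hX : IndecomposableOn r X) (hX3 : Big X)
    {x0 u x z : V} (hx0 : ExtP r X x0) (hu : u ∈ X)
    (hx : XuP r X u x) (hzX : z ∉ X) (hcopy : ∀ w ∈ X, (r w x0 ↔ r w z))
    (hxz : x ≠ z) (hdec : ¬ IndecomposableOn r (X ∪ {x, z})) :
    r z x ↔ r x0 u := by
  obtain ⟨hxX, -, hxiff⟩ := hx
  have hx0X : x0 ∉ X := hx0.1
  have hxY : x ∈ X ∪ {x, z} := Set.mem_union_right _ (Set.mem_insert x _)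
  have hzY : z ∈ X ∪ {x, z} := Set.mem_union_right _ (Set.mem_insert_of_mem _ rfl)
  have hux : u ≠ x := fun e => hxX (e ▸ hu)
  have huz : u ≠ z := fun e => hzX (e ▸ hu)
  have hux0 : u ≠ x0 := fun e => hx0X (e ▸ hu)
  have hzx : z ≠ x := hxz.symm
  obtain ⟨I, hI, h0, h1, hYne⟩ := exists_nontrivial hdec
  rcases shapeP hX hxX hzX hI h0 h1 hYne with rfl | rfl | rfl | rfl | ⟨w, hw, rfl | rfl | rfl⟩
  · -- I = X
    have hU := hI.2 x ⟨hxY, hxX⟩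
    exact ((E1 h hX hX3 ⟨hxX, hU⟩ ⟨hxX, hu, hxiff⟩).elim : _)
  · -- I = X ∪ {x}
    have hU := hI.2 z ⟨hzY, by simp [hzX, hzx]⟩
    have h1' : r z x ↔ r z u :=
      iff_of_unif h hU (Set.mem_union_right _ rfl) (Set.mem_union_left _ hu)
    have h2' : r u x0 ↔ r u z := hcopy u hu
    have h3' : r x0 u ↔ r z u := flip_iff h hux0 huz h2'
    exact h1'.trans h3'.symm
  · -- I = X ∪ {z}
    have hU := hI.2 x ⟨hxY, by simp [hxX, hxz]⟩
    have hBr : BrP r X x :=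
      ⟨hxX, hU.imp (fun H w' hw' => H w' (Set.mem_union_left _ hw'))
        (fun H w' hw' => H w' (Set.mem_union_left _ hw'))⟩
    exact ((E1 h hX hX3 hBr ⟨hxX, hu, hxiff⟩).elim : _)
  · -- I = {x, z}
    exfalso
    refine E4 h hX hX3 ⟨hx0X, hu, fun w' hw' hww' => ?_⟩ hx0
    have hw'x : w' ≠ x := fun e => hxX (e ▸ hw')
    have hw'z : w' ≠ z := fun e => hzX (e ▸ hw')
    have hU := hI.2 w' ⟨Set.mem_union_left _ hw', by simp [hw'x, hw'z]⟩
    have h1' : r w' x ↔ r w' z :=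
      iff_of_unif h hU (Set.mem_insert x _) (Set.mem_insert_of_mem _ rfl)
    exact (hxiff w' hw' hww').trans (h1'.trans (hcopy w' hw').symm)
  · -- I = {w, x}
    have hWx : XuP r X w x := by
      refine ⟨hxX, hw, fun w' hw' hww' => ?_⟩
      have hw'x : w' ≠ x := fun e => hxX (e ▸ hw')
      have hU := hI.2 w' ⟨Set.mem_union_left _ hw', by simp [hww', hw'x]⟩
      exact iff_of_unif h hU (Set.mem_insert w _) (Set.mem_insert_of_mem _ rfl)
    rcases eq_or_ne w u with rfl | hne
    · have hU := hI.2 z ⟨hzY, by simp [huz.symm, hzx]⟩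
      have h1' : r z x ↔ r z w :=
        iff_of_unif h hU (Set.mem_insert_of_mem _ rfl) (Set.mem_insert w _)
      have h2' : r w x0 ↔ r w z := hcopy w hw
      have h3' : r x0 w ↔ r z w := flip_iff h hux0 huz h2'
      exact h1'.trans h3'.symm
    · exact ((E2 h hX hX3 hWx ⟨hxX, hu, hxiff⟩ hne).elim : _)
  · -- I = {w, z}
    exfalso
    refine E4 h hX hX3 ⟨hx0X, hw, fun w' hw' hww' => ?_⟩ hx0
    have hw'z : w' ≠ z := fun e => hzX (e ▸ hw')
    have hU := hI.2 w' ⟨Set.mem_union_left _ hw', by simp [hww', hw'z]⟩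
    have h1' : r w' w ↔ r w' z :=
      iff_of_unif h hU (Set.mem_insert w _) (Set.mem_insert_of_mem _ rfl)
    exact h1'.trans (hcopy w' hw').symm
  · -- I = {w, x, z}
    exfalso
    refine E4 h hX hX3 ⟨hx0X, hw, fun w' hw' hww' => ?_⟩ hx0
    have hw'x : w' ≠ x := fun e => hxX (e ▸ hw')
    have hw'z : w' ≠ z := fun e => hzX (e ▸ hw')
    have hU := hI.2 w' ⟨Set.mem_union_left _ hw', by simp [hww', hw'x, hw'z]⟩
    have h1' : r w' w ↔ r w' z :=
      iff_of_unif h hU (Set.mem_insert w _)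
        (Set.mem_insert_of_mem _ (Set.mem_insert_of_mem _ rfl))
    exact h1'.trans (hcopy w' hw').symm

lemma PB (h : IsTournament r) (hX : IndecomposableOn r X) (hX3 : Big X)
    {x0 x z : V} (hx0 : ExtP r X x0) (hzX : z ∉ X) (hzx0 : z ≠ x0)
    (hzu : (∀ w ∈ X ∪ {x0}, r z w) ∨ (∀ w ∈ X ∪ {x0}, r w z))
    (hxX : x ∉ X) (hcopy : ∀ w ∈ X, (r w x0 ↔ r w x))
    (hxz : x ≠ z) (hdec : ¬ IndecomposableOn r (X ∪ {x, z})) :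
    r z x ↔ r z x0 := by
  have hx0X : x0 ∉ X := hx0.1
  have hxY : x ∈ X ∪ {x, z} := Set.mem_union_right _ (Set.mem_insert x _)
  have hzY : z ∈ X ∪ {x, z} := Set.mem_union_right _ (Set.mem_insert_of_mem _ rfl)
  have hzx : z ≠ x := hxz.symm
  have hx0B : x0 ∈ X ∪ {x0} := Set.mem_union_right _ rfl
  obtain ⟨I, hI, h0, h1, hYne⟩ := exists_nontrivial hdec
  rcases shapeP hX hxX hzX hI h0 h1 hYne with rfl | rfl | rfl | rfl | ⟨w, hw, rfl | rfl | rfl⟩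
  · -- I = X
    have hU := hI.2 x ⟨hxY, hxX⟩
    exact ((E3 hX hX3 (BrP_of_copy h hxX hx0X hcopy hU) hx0).elim : _)
  · -- I = X ∪ {x}
    obtain ⟨w0, hw0, hw0x, -⟩ := hX3 x x
    have hw0z : w0 ≠ z := fun e => hzX (e ▸ hw0)
    have hU := hI.2 z ⟨hzY, by simp [hzX, hzx]⟩
    rcases hzu with hd | hd <;> rcases hU with hu' | hu'
    · exact iff_of_true (hu' x (Set.mem_union_right _ rfl)) (hd x0 hx0B)
    · exact absurd (hd w0 (Set.mem_union_left _ hw0))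
        (asym h (hu' w0 (Set.mem_union_left _ hw0)))
    · exact absurd (hu' w0 (Set.mem_union_left _ hw0))
        (asym h (hd w0 (Set.mem_union_left _ hw0)))
    · exact iff_of_false (asym h (hu' x (Set.mem_union_right _ rfl)))
        (asym h (hd x0 hx0B))
  · -- I = X ∪ {z}
    have hU := hI.2 x ⟨hxY, by simp [hxX, hxz]⟩
    have hdir : (∀ w ∈ X, r x w) ∨ (∀ w ∈ X, r w x) :=
      hU.imp (fun H w' hw' => H w' (Set.mem_union_left _ hw'))
        (fun H w' hw' => H w' (Set.mem_union_left _ hw'))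
    exact ((E3 hX hX3 (BrP_of_copy h hxX hx0X hcopy hdir) hx0).elim : _)
  · -- I = {x, z}
    exfalso
    have key : ∀ w ∈ X, (r w x ↔ r w z) := by
      intro w hw
      have hwx : w ≠ x := fun e => hxX (e ▸ hw)
      have hwz : w ≠ z := fun e => hzX (e ▸ hw)
      have hU := hI.2 w ⟨Set.mem_union_left _ hw, by simp [hwx, hwz]⟩
      exact iff_of_unif h hU (Set.mem_insert x _) (Set.mem_insert_of_mem _ rfl)
    refine E3 hX hX3 ⟨hx0X, ?_⟩ hx0
    rcases hzu with hd | hd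
    · refine Or.inl fun w hw => ?_
      have h1' : ¬ r w z := asym h (hd w (Set.mem_union_left _ hw))
      have h2' : ¬ r w x := fun k => h1' ((key w hw).mp k)
      have h3' : ¬ r w x0 := fun k => h2' ((hcopy w hw).mp k)
      exact total h (fun e => hx0X (e ▸ hw)) h3'
    · exact Or.inr fun w hw =>
        (hcopy w hw).mpr ((key w hw).mpr (hd w (Set.mem_union_left _ hw)))
  · -- I = {w, x}
    have hwz : w ≠ z := fun e => hzX (e ▸ hw)
    have hU := hI.2 z ⟨hzY, by simp [hwz.symm, hzx]⟩
    have h1' : r z x ↔ r z w :=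
      iff_of_unif h hU (Set.mem_insert_of_mem _ rfl) (Set.mem_insert w _)
    have h2' : r z w ↔ r z x0 := by
      rcases hzu with hd | hd
      · exact iff_of_true (hd w (Set.mem_union_left _ hw)) (hd x0 hx0B)
      · exact iff_of_false (asym h (hd w (Set.mem_union_left _ hw)))
          (asym h (hd x0 hx0B))
    exact h1'.trans h2'
  · -- I = {w, z}
    exfalso
    have hWz : XuP r X w z := by
      refine ⟨hzX, hw, fun w' hw' hww' => ?_⟩
      have hw'z : w' ≠ z := fun e => hzX (e ▸ hw')
      have hU := hI.2 w' ⟨Set.mem_union_left _ hw', by simp [hww', hw'z]⟩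
      exact iff_of_unif h hU (Set.mem_insert w _) (Set.mem_insert_of_mem _ rfl)
    have hBr : BrP r X z :=
      ⟨hzX, hzu.imp (fun H w' hw' => H w' (Set.mem_union_left _ hw'))
        (fun H w' hw' => H w' (Set.mem_union_left _ hw'))⟩
    exact E1 h hX hX3 hBr hWz
  · -- I = {w, x, z}
    exfalso
    have hWz : XuP r X w z := by
      refine ⟨hzX, hw, fun w' hw' hww' => ?_⟩
      have hw'x : w' ≠ x := fun e => hxX (e ▸ hw')
      have hw'z : w' ≠ z := fun e => hzX (e ▸ hw')
      have hU := hI.2 w' ⟨Set.mem_union_left _ hw', by simp [hww', hw'x, hw'z]⟩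
      exact iff_of_unif h hU (Set.mem_insert w _)
        (Set.mem_insert_of_mem _ (Set.mem_insert_of_mem _ rfl))
    have hBr : BrP r X z :=
      ⟨hzX, hzu.imp (fun H w' hw' => H w' (Set.mem_union_left _ hw'))
        (fun H w' hw' => H w' (Set.mem_union_left _ hw'))⟩
    exact E1 h hX hX3 hBr hWz

end EDV
namespace EDV

variable {V : Type*} {r : V → V → Prop} {X : Set V}

lemma engine (h : IsTournament r) (hT : IndecomposableOn r Set.univ)
    {B : Set V} (hB : IndecomposableOn r B) (hB3 : Big B) (hc : ∃ y, y ∉ B)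
    (hcl : ∀ y, y ∉ B → BrP r B y ∨ ∃ u ∈ B, XuP r B u y)
    (D1 : ∀ z x u, u ∈ B → BrP r B z → XuP r B u x → (r z x ↔ r z u))
    (D2 : ∀ z x u v, u ∈ B → v ∈ B → u ≠ v → XuP r B u x → XuP r B v z →
      (r z x ↔ r v u)) :
    False := by
  obtain ⟨y1, hy1⟩ := hc
  by_cases hall : ∀ y, y ∉ B → BrP r B y
  · have hint : IsIntervalOn r Set.univ B :=
      ⟨Set.subset_univ _, fun w hw => (hall w hw.2).2⟩
    rcases hT B hint with h0 | ⟨a0, h0⟩ | h0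
    · obtain ⟨w, hw, -, -⟩ := hB3 y1 y1
      rw [h0] at hw
      exact Set.notMem_empty w hw
    · obtain ⟨w, hw, hwa, -⟩ := hB3 a0 a0
      rw [h0] at hw
      exact hwa (by simpa using hw)
    · rw [h0] at hy1
      exact hy1 (Set.mem_univ y1)
  · push_neg at hall
    obtain ⟨y0, hy0B, hy0n⟩ := hall
    obtain ⟨u, hu, hxu⟩ := (hcl y0 hy0B).resolve_left hy0n
    set Q : Set V := insert u {t | XuP r B u t} with hQdef
    have huQ : u ∈ Q := Set.mem_insert u _
    have hy0Q : y0 ∈ Q := Set.mem_insert_of_mem _ hxu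
    have hQiff : ∀ w, w ∉ Q → ∀ i ∈ Q, (r w i ↔ r w u) := by
      intro w hwQ i hiQ
      rcases Set.mem_insert_iff.mp hiQ with rfl | hiQ'
      · exact Iff.rfl
      · have hi : XuP r B u i := hiQ'
        by_cases hwB : w ∈ B
        · have hwu : w ≠ u := fun e => hwQ (by rw [e]; exact huQ)
          exact (hi.2.2 w hwB hwu).symm
        · rcases hcl w hwB with hbr | ⟨v, hv, hwv⟩
          · exact D1 w i u hu hbr hi
          · by_cases hvu : v = u
            · have hwv' : XuP r B u w := hvu ▸ hwv
              exact ((hwQ (Set.mem_insert_of_mem u hwv' : w ∈ Q)).elim : _)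
            · have h1 : r w i ↔ r v u := D2 w i u v hu hv (Ne.symm hvu) hi hwv
              have h2 : r u v ↔ r u w := hwv.2.2 u hu (fun e => hvu e.symm)
              have h3 : r v u ↔ r w u :=
                flip_iff h (fun e => hvu e.symm) (fun e => hwB (e ▸ hu)) h2
              exact h1.trans h3
    have hint : IsIntervalOn r Set.univ Q := by
      refine ⟨Set.subset_univ _, fun w hw => ?_⟩
      exact unif_of_iff h (fun i hi e => hw.2 (e ▸ hi)) (hQiff w hw.2)
    rcases hT Q hint with h0 | ⟨a0, h0⟩ | h0
    · rw [h0] at huQ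
      exact Set.notMem_empty u huQ
    · have h1 : u = a0 := by rw [h0] at huQ; simpa using huQ
      have h2 : y0 = a0 := by rw [h0] at hy0Q; simpa using hy0Q
      exact hy0B ((h2.trans h1.symm) ▸ hu)
    · obtain ⟨w, hw, hwu, -⟩ := hB3 u u
      have hwQ : w ∈ Q := by rw [h0]; trivial
      rcases Set.mem_insert_iff.mp hwQ with h' | h'
      · exact hwu h'
      · exact (h' : XuP r B u w).1 hw

lemma ER (h : IsTournament r) (hT : IndecomposableOn r Set.univ)
    (hX : IndecomposableOn r X) (hX3 : Big X)
    {a b : V} (ha : a ∉ X) (hb : b ∉ X) (hab : a ≠ b) :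
    ∃ p q : V, p ∉ X ∧ q ∉ X ∧ p ≠ q ∧ IndecomposableOn r (X ∪ {p, q}) := by
  by_contra hbad
  push_neg at hbad
  by_cases hE : ∃ x0, ExtP r X x0
  · obtain ⟨x0, hx0⟩ := hE
    have hx0X : x0 ∉ X := hx0.1
    have hBind : IndecomposableOn r (X ∪ {x0}) := hx0.2
    have hB3 : Big (X ∪ {x0}) := fun s t =>
      (hX3 s t).imp fun w hw => ⟨Set.mem_union_left _ hw.1, hw.2⟩
    have hXB : X ⊆ X ∪ {x0} := Set.subset_union_left
    have hnotB : ∀ {y : V}, y ∉ X ∪ {x0} → (y ∉ X ∧ y ≠ x0) := by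
      intro y hy
      constructor
      · exact fun k => hy (Set.mem_union_left _ k)
      · exact fun k => hy (Set.mem_union_right _ (by rw [k]; rfl))
    have hpair : ∀ y, y ∉ X ∪ {x0} → ¬ IndecomposableOn r ((X ∪ {x0}) ∪ {y}) := by
      intro y hy hind
      obtain ⟨hyX, hyx0⟩ := hnotB hy
      have heq : (X ∪ {x0}) ∪ {y} = X ∪ {x0, y} := by
        rw [Set.union_assoc, Set.singleton_union]
      rw [heq] at hind
      exact hbad x0 y hx0X hyX (Ne.symm hyx0) hind
    have hclB : ∀ y, y ∉ X ∪ {x0} →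
        BrP r (X ∪ {x0}) y ∨ ∃ u ∈ X ∪ {x0}, XuP r (X ∪ {x0}) u y := by
      intro y hy
      rcases CL h hBind hB3 hy with hext | hres
      · exact absurd hext.2 (hpair y hy)
      · exact hres
    refine engine h hT hBind hB3 ?_ hclB ?_ ?_
    · rcases eq_or_ne a x0 with rfl | hne
      · refine ⟨b, fun hbB => ?_⟩
        rcases (Set.mem_union _ _ _).mp hbB with h' | h'
        · exact hb h'
        · exact hab ((show b = a from h')).symm
      · refine ⟨a, fun haB => ?_⟩
        rcases (Set.mem_union _ _ _).mp haB with h' | h'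
        · exact ha h'
        · exact hne h'
    · -- D1
      intro z xx u huB hz hx
      rcases eq_or_ne z xx with rfl | hzx
      · exact ((E1 h hBind hB3 hz hx).elim : _)
      obtain ⟨hzX, hzx0⟩ := hnotB hz.1
      obtain ⟨hxX, hxx0⟩ := hnotB hx.1
      have hdec := hbad xx z hxX hzX (Ne.symm hzx)
      rcases (Set.mem_union _ _ _).mp huB with huX | hux0
      · have hzBr : BrP r X z :=
          ⟨hzX, hz.2.imp (fun H w hw => H w (hXB hw)) (fun H w hw => H w (hXB hw))⟩
        have hxXu : XuP r X u xx :=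
          ⟨hxX, huX, fun w hw hwu => hx.2.2 w (hXB hw) hwu⟩
        exact P8 h hX hX3 huX hzBr hxXu (Ne.symm hzx) hdec
      · have hueq : u = x0 := hux0
        rw [hueq]
        have hcopy : ∀ w ∈ X, (r w x0 ↔ r w xx) := by
          intro w hw
          have h' := hx.2.2 w (hXB hw) (fun e => hx0X ((e.trans hueq) ▸ hw))
          rwa [hueq] at h'
        have hzu' : (∀ w ∈ X ∪ {x0}, r z w) ∨ (∀ w ∈ X ∪ {x0}, r w z) := hz.2
        exact PB h hX hX3 hx0 hzX hzx0 hzu' hxX hcopy (Ne.symm hzx) hdec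
    · -- D2
      intro z xx u v huB hvB huv hx hz
      rcases eq_or_ne xx z with rfl | hxz
      · exact ((E2 h hBind hB3 hx hz huv).elim : _)
      obtain ⟨hzX, hzx0⟩ := hnotB hz.1
      obtain ⟨hxX, hxx0⟩ := hnotB hx.1
      have hdec := hbad xx z hxX hzX hxz
      rcases (Set.mem_union _ _ _).mp huB with huX | hux0 <;>
        rcases (Set.mem_union _ _ _).mp hvB with hvX | hvx0
      · have hx' : XuP r X u xx :=
          ⟨hxX, huX, fun w hw hwu => hx.2.2 w (hXB hw) hwu⟩
        have hz' : XuP r X v z :=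
          ⟨hzX, hvX, fun w hw hwv => hz.2.2 w (hXB hw) hwv⟩
        exact P7 h hX hX3 huX hvX huv hx' hz' hxz hdec
      · have hveq : v = x0 := hvx0
        rw [hveq]
        have hx' : XuP r X u xx :=
          ⟨hxX, huX, fun w hw hwu => hx.2.2 w (hXB hw) hwu⟩
        have hcopyz : ∀ w ∈ X, (r w x0 ↔ r w z) := by
          intro w hw
          have h' := hz.2.2 w (hXB hw) (fun e => hx0X ((e.trans hveq) ▸ hw))
          rwa [hveq] at h'
        exact PX h hX hX3 hx0 huX hx' hzX hcopyz hxz hdec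
      · have hueq : u = x0 := hux0
        rw [hueq]
        have hz' : XuP r X v z :=
          ⟨hzX, hvX, fun w hw hwv => hz.2.2 w (hXB hw) hwv⟩
        have hcopyx : ∀ w ∈ X, (r w x0 ↔ r w xx) := by
          intro w hw
          have h' := hx.2.2 w (hXB hw) (fun e => hx0X ((e.trans hueq) ▸ hw))
          rwa [hueq] at h'
        have hdec' := hbad z xx hzX hxX (Ne.symm hxz)
        have hres : r xx z ↔ r x0 v :=
          PX h hX hX3 hx0 hvX hz' hxX hcopyx (Ne.symm hxz) hdec'
        exact flip_iff h hxz (fun e => hx0X (e.symm ▸ hvX)) hres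
      · have h1 : u = x0 := hux0
        have h2 : v = x0 := hvx0
        exact absurd (h1.trans h2.symm) huv
  · have hcl : ∀ y, y ∉ X → BrP r X y ∨ ∃ u ∈ X, XuP r X u y := by
      intro y hy
      rcases CL h hX hX3 hy with hext | hres
      · exact absurd ⟨y, hext⟩ hE
      · exact hres
    refine engine h hT hX hX3 ⟨a, ha⟩ hcl ?_ ?_
    · intro z xx u huX hz hx
      rcases eq_or_ne z xx with rfl | hzx
      · exact ((E1 h hX hX3 hz hx).elim : _)
      exact P8 h hX hX3 huX hz hx (Ne.symm hzx) (hbad xx z hx.1 hz.1 (Ne.symm hzx))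
    · intro z xx u v huX hvX huv hx hz
      rcases eq_or_ne xx z with rfl | hxz
      · exact ((E2 h hX hX3 hx hz huv).elim : _)
      exact P7 h hX hX3 huX hvX huv hx hz hxz (hbad xx z hx.1 hz.1 hxz)

end EDV
namespace EDV

variable {V : Type*} {r : V → V → Prop}

lemma chain [Fintype V] (h : IsTournament r) (hT : IndecomposableOn r Set.univ) :
    ∀ k : ℕ, ∀ X : Set V, IndecomposableOn r X → Big X → Xᶜ.ncard = 2 * k + 1 →
      ∃ y, y ∉ X ∧ IndecomposableOn r ({y}ᶜ : Set V) := by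
  intro k
  induction k with
  | zero =>
    intro X hX _ hc
    obtain ⟨y, hy⟩ := Set.ncard_eq_one.mp (by simpa using hc)
    refine ⟨y, ?_, ?_⟩
    · have : y ∈ Xᶜ := by rw [hy]; rfl
      exact this
    · have hXy : X = ({y}ᶜ : Set V) := by rw [← hy, compl_compl]
      rwa [← hXy]
  | succ k ih =>
    intro X hX hX3 hc
    have h2 : 1 < Xᶜ.ncard := by omega
    obtain ⟨p0, hp0, q0, hq0, hpq0⟩ := (Set.one_lt_ncard (Set.toFinite _)).mp h2
    obtain ⟨p, q, hp, hq, hpq, hind⟩ := ER h hT hX hX3 hp0 hq0 hpq0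
    have hsub : ({p, q} : Set V) ⊆ Xᶜ := by
      intro i hi
      rcases Set.mem_insert_iff.mp hi with rfl | hi'
      · exact hp
      · exact (show i = q from hi') ▸ hq
    have hcc : (X ∪ {p, q})ᶜ = Xᶜ \ ({p, q} : Set V) := by
      rw [Set.compl_union, Set.diff_eq]
    have hnu : (X ∪ {p, q})ᶜ.ncard = 2 * k + 1 := by
      rw [hcc, Set.ncard_diff hsub, Set.ncard_pair hpq, hc]
      omega
    have hX3' : Big (X ∪ {p, q}) := fun s t =>
      (hX3 s t).imp fun w hw => ⟨Set.mem_union_left _ hw.1, hw.2⟩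
    obtain ⟨y, hy, hyind⟩ := ih (X ∪ {p, q}) hind hX3' hnu
    exact ⟨y, fun hyX => hy (Set.mem_union_left _ hyX), hyind⟩

lemma big_of_three {x b c : V} (hxb : x ≠ b) (hbc : b ≠ c) (hcx : c ≠ x) :
    Big ({x, b, c} : Set V) := by
  intro p q
  by_cases h1 : x ≠ p ∧ x ≠ q
  · exact ⟨x, by simp, h1.1, h1.2⟩
  by_cases h2 : b ≠ p ∧ b ≠ q
  · exact ⟨b, by simp, h2.1, h2.2⟩
  by_cases h3 : c ≠ p ∧ c ≠ q
  · exact ⟨c, by simp, h3.1, h3.2⟩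
  exfalso
  rw [not_and_or, not_not, not_not] at h1 h2 h3
  rcases h1 with rfl | rfl <;> rcases h2 with rfl | rfl <;>
    rcases h3 with rfl | rfl <;> simp_all

lemma cycle_indec (h : IsTournament r) {x b c : V}
    (hxb : r x b) (hbc : r b c) (hcx : r c x) :
    IndecomposableOn r {x, b, c} := by
  have hxb' : x ≠ b := by rintro rfl; exact h.1 x hxb
  have hbc' : b ≠ c := by rintro rfl; exact h.1 b hbc
  have hcx' : c ≠ x := by rintro rfl; exact h.1 c hcx
  intro I hI
  have hmem : ∀ a ∈ I, a = x ∨ a = b ∨ a = c := by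
    intro a ha
    have := hI.1 ha
    simpa using this
  by_cases hxI : x ∈ I <;> by_cases hbI : b ∈ I <;> by_cases hcI : c ∈ I
  · right; right
    refine Set.Subset.antisymm hI.1 ?_
    intro a ha
    rcases (by simpa using ha : a = x ∨ a = b ∨ a = c) with rfl | rfl | rfl <;> assumption
  · exfalso
    have hU := hI.2 c ⟨by simp, hcI⟩
    have h1 := iff_of_unif h hU hxI hbI
    exact asym h hbc (h1.mp hcx)
  · exfalso
    have hU := hI.2 b ⟨by simp, hbI⟩
    have h1 := iff_of_unif h hU hcI hxI
    exact asym h hxb (h1.mp hbc)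
  · right; left
    refine ⟨x, Set.eq_singleton_iff_unique_mem.mpr ⟨hxI, fun a ha => ?_⟩⟩
    rcases hmem a ha with rfl | rfl | rfl
    · rfl
    · exact absurd ha hbI
    · exact absurd ha hcI
  · exfalso
    have hU := hI.2 x ⟨by simp, hxI⟩
    have h1 := iff_of_unif h hU hbI hcI
    exact asym h hcx (h1.mp hxb)
  · right; left
    refine ⟨b, Set.eq_singleton_iff_unique_mem.mpr ⟨hbI, fun a ha => ?_⟩⟩
    rcases hmem a ha with rfl | rfl | rfl
    · exact absurd ha hxI
    · rfl
    · exact absurd ha hcI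
  · right; left
    refine ⟨c, Set.eq_singleton_iff_unique_mem.mpr ⟨hcI, fun a ha => ?_⟩⟩
    rcases hmem a ha with rfl | rfl | rfl
    · exact absurd ha hxI
    · exact absurd ha hbI
    · rfl
  · left
    ext a
    simp only [Set.mem_empty_iff_false, iff_false]
    intro ha
    rcases hmem a ha with rfl | rfl | rfl
    · exact hxI ha
    · exact hbI ha
    · exact hcI ha

lemma card_contra [Fintype V] (hcard : 6 ≤ Fintype.card V) {x : V}
    (h0 : ({x}ᶜ : Set V) = ∅ ∨ (∃ a, ({x}ᶜ : Set V) = {a}) ∨ ({x}ᶜ : Set V) = Set.univ) :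
    False := by
  have hc := Set.ncard_add_ncard_compl ({x} : Set V)
  rw [Nat.card_eq_fintype_card, Set.ncard_singleton] at hc
  rcases h0 with h0 | ⟨a, h0⟩ | h0
  · rw [h0, Set.ncard_empty] at hc
    omega
  · rw [h0, Set.ncard_singleton] at hc
    omega
  · have : x ∈ ({x}ᶜ : Set V) := by rw [h0]; trivial
    exact this rfl

lemma global_sink_contra [Fintype V] (h : IsTournament r)
    (hT : IndecomposableOn r Set.univ) (hcard : 6 ≤ Fintype.card V) {x : V}
    (hs : ∀ w : V, w ≠ x → r w x) : False := by
  have hint : IsIntervalOn r Set.univ ({x}ᶜ : Set V) := by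
    refine ⟨Set.subset_univ _, fun a ha => ?_⟩
    have hax : a = x := by simpa using ha.2
    subst hax
    exact Or.inr fun i hi => hs i (by simpa using hi)
  exact card_contra hcard (hT _ hint)

lemma global_source_contra [Fintype V] (h : IsTournament r)
    (hT : IndecomposableOn r Set.univ) (hcard : 6 ≤ Fintype.card V) {x : V}
    (hs : ∀ w : V, w ≠ x → r x w) : False := by
  have hint : IsIntervalOn r Set.univ ({x}ᶜ : Set V) := by
    refine ⟨Set.subset_univ _, fun a ha => ?_⟩
    have hax : a = x := by simpa using ha.2
    subst hax
    exact Or.inl fun i hi => hs i (by simpa using hi)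
  exact card_contra hcard (hT _ hint)

lemma exists_cycle [Fintype V] (h : IsTournament r)
    (hT : IndecomposableOn r Set.univ) (hcard : 6 ≤ Fintype.card V) (x : V) :
    ∃ b c : V, r x b ∧ r b c ∧ r c x := by
  by_contra hcyc
  push_neg at hcyc
  have hint : IsIntervalOn r Set.univ (insert x {w | r x w}) := by
    refine ⟨Set.subset_univ _, fun a ha => ?_⟩
    have haQ : a ∉ insert x {w | r x w} := ha.2
    have hax : a ≠ x := fun e => haQ (by rw [e]; exact Set.mem_insert x _)
    have hrxa : ¬ r x a := fun hr => haQ (Set.mem_insert_of_mem _ hr)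
    have hrax : r a x := total h hax.symm hrxa
    refine Or.inl fun i hi => ?_
    rcases Set.mem_insert_iff.mp hi with rfl | hi'
    · exact hrax
    · have hxi : r x i := hi'
      have hia : i ≠ a := fun e => hrxa (e ▸ hxi)
      exact total h hia (fun hria => hcyc i a hxi hria hrax)
  rcases hT _ hint with h0 | ⟨a0, h0⟩ | h0
  · have : x ∈ insert x {w | r x w} := Set.mem_insert x _
    rw [h0] at this
    exact Set.notMem_empty x this
  · have hxa : x = a0 := by
      have hm : x ∈ insert x {w | r x w} := Set.mem_insert x _
      rw [h0] at hm
      simpa using hm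
    refine global_sink_contra h hT hcard (x := x) fun w hw => ?_
    have hnxw : ¬ r x w := by
      intro hr
      have hm : w ∈ insert x {w | r x w} := Set.mem_insert_of_mem _ hr
      rw [h0] at hm
      exact hw (by simpa using hm.trans hxa.symm)
    exact total h (Ne.symm hw) hnxw
  · refine global_source_contra h hT hcard (x := x) fun w hw => ?_
    have hm : w ∈ insert x {w | r x w} := by rw [h0]; trivial
    rcases Set.mem_insert_iff.mp hm with h' | h'
    · exact absurd h' hw
    · exact h'

end EDV
/-- If `T` is indecomposable with `|V|` even and `|V| ≥ 6`, then for each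
vertex `x` there is `y ≠ x` with `T − y` indecomposable. -/
theorem even_delete_vertex {V : Type*} [Fintype V] (r : V → V → Prop)
    (h : IsTournament r) (heven : Even (Fintype.card V)) (hcard : 6 ≤ Fintype.card V)
    (hT : IndecomposableOn r Set.univ) :
    ∀ x : V, ∃ y : V, y ≠ x ∧ IndecomposableOn r {y}ᶜ := by
  intro x
  obtain ⟨b, c, hxb, hbc, hcx⟩ := EDV.exists_cycle h hT hcard x
  have hxb' : x ≠ b := by rintro rfl; exact h.1 x hxb
  have hbc' : b ≠ c := by rintro rfl; exact h.1 b hbc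
  have hcx' : c ≠ x := by rintro rfl; exact h.1 c hcx
  have hXind := EDV.cycle_indec h hxb hbc hcx
  have hX3 : EDV.Big ({x, b, c} : Set V) := EDV.big_of_three hxb' hbc' hcx'
  have hn3 : ({x, b, c} : Set V).ncard = 3 := by
    rw [Set.ncard_insert_of_notMem (by simp [hxb', hcx'.symm]) (Set.toFinite _),
      Set.ncard_pair hbc']
  have hcompl : ({x, b, c}ᶜ : Set V).ncard + 3 = Fintype.card V := by
    have hsum := Set.ncard_add_ncard_compl ({x, b, c} : Set V)
    rw [hn3, Nat.card_eq_fintype_card] at hsum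
    omega
  have hmod : Fintype.card V % 2 = 0 := Nat.even_iff.mp heven
  obtain ⟨y, hyX, hind⟩ := EDV.chain h hT (Fintype.card V / 2 - 2) ({x, b, c} : Set V)
    hXind hX3 (by omega)
  exact ⟨y, fun e => hyX (by rw [e]; exact Set.mem_insert x _), hind⟩
end
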